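/- arXiv:2404.19724 — 8 statements merged into one kernel-verified Lean document; each statement's English description precedes it below -/
import Mathlib

section
/- Unrolling Lemma: Let M be a finitely-branching MDP with absorbing terminal state ⊥, let σ be a state, and suppose Pr_term(σ) ≥ p. Then for every ε > 0 there exists k ∈ ℕ such that for every scheduler 𝔰, ℙ_{𝔰,σ}(the run visits ⊥ within the first k steps) ≥ p − ε. -/
open scoped ENNReal Classical

/-- A finitely-branching MDP on a state space `S`: each state has a nonempty finite
set of available actions, each a finitely-supported PMF on `S`. -/
structure MDP (S : Type) where
  act : S → Finset (PMF S)
  act_nonempty : ∀ s, (act s).Nonempty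
  act_finSupp : ∀ s, ∀ μ ∈ act s, (μ : PMF S).support.Finite

/-- A scheduler maps every history `(s₀, …, sₙ)` (given as the list of earlier
states `s₀, …, sₙ₋₁` together with the current state `sₙ`) to an available action. -/
structure Scheduler {S : Type} (M : MDP S) where
  choose : List S → S → PMF S
  choose_mem : ∀ hist s, choose hist s ∈ M.act s

namespace MDP

variable {S : Type}

/-- Reachability: `s'` is reachable from `σ` via a finite path each of whose steps
lies in the support of some available action. -/
inductive Reach (M : MDP S) (σ : S) : S → Prop
  | refl : Reach M σ σ
  | step {s s' : S} (μ : PMF S) : Reach M σ s → μ ∈ M.act s → s' ∈ μ.support → Reach M σ s'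

/-- Probability that the run (currently at `s`, with past history `hist`) visits the
set `T` within the next `k` steps, under scheduler `𝔰`. -/
noncomputable def hitProbAux (M : MDP S) (𝔰 : Scheduler M) (T : Set S) :
    ℕ → List S → S → ℝ≥0∞
  | 0, _, s => if s ∈ T then 1 else 0
  | k + 1, hist, s =>
      if s ∈ T then 1
      else ∑' s', (𝔰.choose hist s) s' * hitProbAux M 𝔰 T k (hist ++ [s]) s'

/-- Probability that the run started at `σ` visits `T` within the first `k` steps. -/
noncomputable def hitProbWithin (M : MDP S) (𝔰 : Scheduler M) (σ : S) (T : Set S)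
    (k : ℕ) : ℝ≥0∞ :=
  hitProbAux M 𝔰 T k [] σ

/-- Probability that the run started at `σ` ever visits `T`, under scheduler `𝔰`. -/
noncomputable def hitProb (M : MDP S) (𝔰 : Scheduler M) (σ : S) (T : Set S) : ℝ≥0∞ :=
  ⨆ k, hitProbWithin M 𝔰 σ T k

/-- The terminal state `term` is absorbing: the only action there is the Dirac PMF. -/
def Absorbing (M : MDP S) (term : S) : Prop :=
  M.act term = {PMF.pure term}

/-- Termination probability: infimum over schedulers of the probability of visiting
the terminal state. -/
noncomputable def PrTerm (M : MDP S) (term σ : S) : ℝ≥0∞ :=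
  ⨅ 𝔰 : Scheduler M, hitProb M 𝔰 σ {term}

/-- Almost-sure termination from `σ`. -/
def AST (M : MDP S) (term σ : S) : Prop := PrTerm M term σ = 1

/-- Mass a PMF assigns to a set. -/
noncomputable def mass (μ : PMF S) (A : Set S) : ℝ≥0∞ := ∑' a : A, μ a

/-- Expected value of a real-valued function under a (finitely supported) PMF. -/
noncomputable def expect (μ : PMF S) (V : S → ℝ) : ℝ := ∑' s, (μ s).toReal * V s

/-- `V` is a supermartingale function on the states reachable from `σ`. -/
def SupermartingaleOn (M : MDP S) (σ : S) (V : S → ℝ) : Prop :=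
  ∀ s, M.Reach σ s → ∀ μ ∈ M.act s, expect μ V ≤ V s

/-- `(Ψ, p)` is a stochastic invariant for initial state `σ`: under every scheduler the
probability that the run ever leaves `Ψ` is at most `p`. -/
def StochasticInvariant (M : MDP S) (σ : S) (Ψ : Set S) (p : ℝ) : Prop :=
  ⨆ 𝔰 : Scheduler M, hitProb M 𝔰 σ Ψᶜ ≤ ENNReal.ofReal p

/-- Two schedulers agree to depth `k` below history `(hist, s)`. -/
def Agree (M : MDP S) (𝔰 𝔱 : Scheduler M) : ℕ → List S → S → Prop
  | 0, _, _ => True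
  | k + 1, hist, s =>
      𝔰.choose hist s = 𝔱.choose hist s ∧
        ∀ s' ∈ (𝔰.choose hist s).support, Agree M 𝔰 𝔱 k (hist ++ [s]) s'

lemma hitProbAux_congr (M : MDP S) (𝔰 𝔱 : Scheduler M) (T : Set S) :
    ∀ k hist s, Agree M 𝔰 𝔱 k hist s →
      hitProbAux M 𝔰 T k hist s = hitProbAux M 𝔱 T k hist s := by
  intro k
  induction k with
  | zero => intro hist s _; rfl
  | succ k ih =>
    intro hist s h
    obtain ⟨h1, h2⟩ := h
    simp only [hitProbAux]
    split
    · rfl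
    · rw [← h1]
      refine tsum_congr fun s' => ?_
      by_cases hs' : s' ∈ (𝔰.choose hist s).support
      · rw [ih _ _ (h2 s' hs')]
      · simp only [PMF.mem_support_iff, not_not] at hs'
        simp [hs']

lemma hitProbAux_mono_succ (M : MDP S) (𝔰 : Scheduler M) (T : Set S) :
    ∀ k hist s, hitProbAux M 𝔰 T k hist s ≤ hitProbAux M 𝔰 T (k + 1) hist s := by
  intro k
  induction k with
  | zero =>
    intro hist s
    simp only [hitProbAux]
    split
    · exact le_rfl
    · exact zero_le
  | succ k ih =>
    intro hist s
    rw [show k + 1 + 1 = (k + 1) + 1 from rfl, hitProbAux, hitProbAux]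
    split
    · exact le_rfl
    · exact ENNReal.tsum_le_tsum fun s' => mul_le_mul_right (ih _ _) _

lemma hitProbAux_mono (M : MDP S) (𝔰 : Scheduler M) (T : Set S) {k l : ℕ}
    (hkl : k ≤ l) (hist : List S) (s : S) :
    hitProbAux M 𝔰 T k hist s ≤ hitProbAux M 𝔰 T l hist s := by
  induction hkl with
  | refl => exact le_rfl
  | step _ ih => exact ih.trans (hitProbAux_mono_succ M 𝔰 T _ _ _)

end MDP

/-- **Unrolling Lemma.** If the termination probability from `σ` is at least `p`, then for
every `ε > 0` there is a horizon `k` such that under every scheduler the run visits the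
terminal state within the first `k` steps with probability at least `p - ε`. -/
theorem unrolling_lemma {S : Type} [Countable S] (M : MDP S) (term σ : S)
    (hterm : M.Absorbing term) (p : ℝ)
    (hp : ENNReal.ofReal p ≤ M.PrTerm term σ) :
    ∀ ε : ℝ, 0 < ε → ∃ k : ℕ, ∀ 𝔰 : Scheduler M,
      ENNReal.ofReal (p - ε) ≤ M.hitProbWithin 𝔰 σ {term} k := by
  intro ε hε
  by_cases hpε : p - ε ≤ 0
  · exact ⟨0, fun 𝔰 => by simp [ENNReal.ofReal_eq_zero.2 hpε]⟩
  push_neg at hpε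
  by_contra hcon
  push_neg at hcon
  choose 𝔰seq h𝔰 using hcon
  obtain ⟨U, hU⟩ := Ultrafilter.exists_le (Filter.atTop : Filter ℕ)
  -- limit scheduler along the ultrafilter
  have hlim : ∀ (hist : List S) (s : S), ∃ μ ∈ M.act s,
      {n | (𝔰seq n).choose hist s = μ} ∈ U := by
    intro hist s
    by_contra h
    push_neg at h
    have h2 : (⋂ μ ∈ M.act s, {n | (𝔰seq n).choose hist s = μ}ᶜ) ∈ U :=
      (Filter.biInter_mem (M.act s).finite_toSet).2 fun μ hμ =>
        Ultrafilter.compl_mem_iff_notMem.2 (h μ hμ)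
    have hempty : (⋂ μ ∈ M.act s, {n | (𝔰seq n).choose hist s = μ}ᶜ) = ∅ := by
      ext n
      simp only [Set.mem_iInter, Set.mem_compl_iff, Set.mem_setOf_eq,
        Set.mem_empty_iff_false, iff_false, not_forall]
      exact ⟨_, (𝔰seq n).choose_mem hist s, fun h => h rfl⟩
    rw [hempty] at h2
    exact Filter.empty_notMem (U : Filter ℕ) h2
  let 𝔰 : Scheduler M :=
    { choose := fun hist s => (hlim hist s).choose
      choose_mem := fun hist s => (hlim hist s).choose_spec.1 }
  have hcoord : ∀ hist s, {n | (𝔰seq n).choose hist s = 𝔰.choose hist s} ∈ U :=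
    fun hist s => (hlim hist s).choose_spec.2
  have hagree : ∀ k hist s, {n | MDP.Agree M 𝔰 (𝔰seq n) k hist s} ∈ U := by
    intro k
    induction k with
    | zero =>
      intro hist s
      have : {n | MDP.Agree M 𝔰 (𝔰seq n) 0 hist s} = Set.univ := by
        ext n; simp [MDP.Agree]
      rw [this]; exact Filter.univ_mem
    | succ k ih =>
      intro hist s
      have hsupp : ((𝔰.choose hist s).support).Finite :=
        M.act_finSupp s _ (𝔰.choose_mem hist s)
      have h2 : (⋂ s' ∈ (𝔰.choose hist s).support,
          {n | MDP.Agree M 𝔰 (𝔰seq n) k (hist ++ [s]) s'}) ∈ U :=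
        (Filter.biInter_mem hsupp).2 fun s' _ => ih _ _
      filter_upwards [hcoord hist s, h2] with n hn1 hn2
      exact ⟨hn1.symm, fun s' hs' => Set.mem_iInter₂.1 hn2 s' hs'⟩
  have hmain : ∀ k, M.hitProbWithin 𝔰 σ {term} k < ENNReal.ofReal (p - ε) := by
    intro k
    have hk : {n | k ≤ n} ∈ U := hU (Filter.mem_atTop k)
    obtain ⟨n, hn1, hn2⟩ := Filter.nonempty_of_mem (Filter.inter_mem hk (hagree k [] σ))
    calc M.hitProbWithin 𝔰 σ {term} k
        = MDP.hitProbAux M (𝔰seq n) {term} k [] σ :=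
          MDP.hitProbAux_congr M 𝔰 (𝔰seq n) {term} k [] σ hn2
      _ ≤ MDP.hitProbAux M (𝔰seq n) {term} n [] σ :=
          MDP.hitProbAux_mono M (𝔰seq n) {term} hn1 [] σ
      _ < ENNReal.ofReal (p - ε) := h𝔰 n
  have h2 : M.PrTerm term σ ≤ ENNReal.ofReal (p - ε) :=
    (iInf_le _ 𝔰).trans (iSup_le fun k => (hmain k).le)
  have h3 : ENNReal.ofReal (p - ε) < ENNReal.ofReal p := by
    rw [ENNReal.ofReal_lt_ofReal_iff (by linarith)]
    linarith
  exact absurd (hp.trans h2) (not_le.2 h3)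
end

section
/- Let M be a finitely-branching MDP with absorbing terminal state ⊥ and let σ be a state with Pr_term(σ) > 0. Then there exists N ∈ ℕ such that for every scheduler 𝔰 there is a finite path σ = s₀, s₁, …, sₘ = ⊥ with m ≤ N that is consistent with 𝔰, i.e., for every i < m the state sᵢ₊₁ lies in the support of the action 𝔰(s₀,…,sᵢ). -/
open scoped ENNReal Classical

section Aux

variable {S : Type}

/-- Auxiliary: existence of a consistent path of length at most `N` from `s` to `term`,
given the history `hist` so far. -/
def HasPath (M : MDP S) (term : S) (𝔰 : Scheduler M) (hist : List S) (s : S) (N : ℕ) : Prop :=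
  ∃ m : ℕ, m ≤ N ∧ ∃ path : ℕ → S, path 0 = s ∧ path m = term ∧
    ∀ i < m, path (i + 1) ∈
      (𝔰.choose (hist ++ List.ofFn (fun j : Fin i => path j)) (path i)).support

lemma hitProbAux_eq_zero (M : MDP S) (term : S) (𝔰 : Scheduler M) :
    ∀ (k : ℕ) (hist : List S) (s : S), ¬ HasPath M term 𝔰 hist s k →
      MDP.hitProbAux M 𝔰 {term} k hist s = 0 := by
  intro k
  induction k with
  | zero =>
    intro hist s hnp
    have hs : s ≠ term := fun he =>
      hnp ⟨0, le_refl _, fun _ => s, rfl, he, fun i hi => absurd hi (by omega)⟩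
    simp [MDP.hitProbAux, hs]
  | succ k ih =>
    intro hist s hnp
    have hs : s ≠ term := fun he =>
      hnp ⟨0, by omega, fun _ => s, rfl, he, fun i hi => absurd hi (by omega)⟩
    simp only [MDP.hitProbAux, Set.mem_singleton_iff, hs, if_false]
    refine ENNReal.tsum_eq_zero.mpr fun s' => ?_
    by_cases hμ : 𝔰.choose hist s s' = 0
    · simp [hμ]
    · have hnp' : ¬ HasPath M term 𝔰 (hist ++ [s]) s' k := by
        rintro ⟨m, hmk, path, h0, hT, hcons⟩
        refine hnp ⟨m + 1, by omega, fun i => if i = 0 then s else path (i - 1), rfl,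
          by simp [hT], ?_⟩
        intro i hi
        cases i with
        | zero =>
          simpa [h0, PMF.mem_support_iff] using hμ
        | succ j =>
          have hcj := hcons j (by omega)
          have hofn : (List.ofFn fun t : Fin (j + 1) =>
              if (t : ℕ) = 0 then s else path ((t : ℕ) - 1)) =
              s :: List.ofFn (fun t : Fin j => path t) := by
            rw [List.ofFn_succ]
            simp
          simp only [hofn]
          simpa [List.append_assoc] using hcj
      rw [ih _ _ hnp']
      simp

end Aux

theorem bounded_shortest_terminating_path' {S : Type} [Countable S] (M : MDP S) (term σ : S)
    (hterm : M.Absorbing term) (hpos : 0 < M.PrTerm term σ) :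
    ∃ N : ℕ, ∀ 𝔰 : Scheduler M, HasPath M term 𝔰 [] σ N := by
  by_contra h
  push_neg at h
  -- the space of choice functions
  letI Fib : List S × S → Type := fun p => {μ : PMF S // μ ∈ M.act p.2}
  letI : ∀ p, TopologicalSpace (Fib p) := fun _ => ⊥
  haveI : ∀ p, DiscreteTopology (Fib p) := fun _ => ⟨rfl⟩
  haveI : ∀ p, Finite (Fib p) := fun p => inferInstance
  haveI : ∀ p, Nonempty (Fib p) := fun p => by
    obtain ⟨μ, hμ⟩ := M.act_nonempty p.2
    exact ⟨⟨μ, hμ⟩⟩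
  let toSched : (∀ p, Fib p) → Scheduler M := fun c =>
    ⟨fun hist s => (c (hist, s)).1, fun hist s => (c (hist, s)).2⟩
  let B : ℕ → Set (∀ p, Fib p) := fun N => {c | ¬ HasPath M term (toSched c) [] σ N}
  have hBne : ∀ N, (B N).Nonempty := by
    intro N
    obtain ⟨𝔰, h𝔰⟩ := h N
    exact ⟨fun p => ⟨𝔰.choose p.1 p.2, 𝔰.choose_mem p.1 p.2⟩, h𝔰⟩
  have hBmono : ∀ N, B (N + 1) ⊆ B N := by
    intro N c hc hp
    obtain ⟨m, hm, rest⟩ := hp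
    exact hc ⟨m, by omega, rest⟩
  have hBcl : ∀ N, IsClosed (B N) := by
    intro N
    rw [← isOpen_compl_iff]
    rw [isOpen_iff_forall_mem_open]
    intro c hc
    have hc' : HasPath M term (toSched c) [] σ N := not_not.mp hc
    obtain ⟨m, hm, path, h0, hT, hcons⟩ := hc'
    refine ⟨⋂ i ∈ Finset.range m,
      {c' | c' (List.ofFn (fun j : Fin i => path j), path i) =
            c (List.ofFn (fun j : Fin i => path j), path i)}, ?_, ?_, ?_⟩
    · intro c' hc'
      simp only [Set.mem_iInter, Set.mem_setOf_eq] at hc'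
      refine not_not.mpr ⟨m, hm, path, h0, hT, fun i hi => ?_⟩
      have := hcons i hi
      simp only [toSched, List.nil_append] at this ⊢
      rw [hc' i (Finset.mem_range.mpr hi)]
      exact this
    · refine isOpen_biInter_finset fun i _ => ?_
      have : {c' : ∀ p, Fib p | c' (List.ofFn (fun j : Fin i => path j), path i) =
            c (List.ofFn (fun j : Fin i => path j), path i)} =
          (fun c' : ∀ p, Fib p => c' (List.ofFn (fun j : Fin i => path j), path i)) ⁻¹'
            {c (List.ofFn (fun j : Fin i => path j), path i)} := rfl
      rw [this]
      exact (continuous_apply _).isOpen_preimage _ (isOpen_discrete _)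
    · simp
  have hInter := IsCompact.nonempty_iInter_of_sequence_nonempty_isCompact_isClosed B
    hBmono hBne ((hBcl 0).isCompact) hBcl
  obtain ⟨c, hcmem⟩ := hInter
  simp only [Set.mem_iInter] at hcmem
  -- the scheduler toSched c has hit probability 0
  have hzero : MDP.hitProb M (toSched c) σ {term} = 0 := by
    have : ∀ k, MDP.hitProbWithin M (toSched c) σ {term} k = 0 := fun k =>
      hitProbAux_eq_zero M term (toSched c) k [] σ (hcmem k)
    simp [MDP.hitProb, this]
  have hle : M.PrTerm term σ ≤ 0 := hzero ▸ iInf_le _ (toSched c)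
  exact absurd (le_antisymm hle zero_le) (ne_of_gt hpos)


/-- If the termination probability from `σ` is positive, then there is a uniform bound `N`
such that every scheduler admits a consistent finite path from `σ` to the terminal state
of length at most `N`. -/
theorem bounded_shortest_terminating_path {S : Type} [Countable S] (M : MDP S) (term σ : S)
    (hterm : M.Absorbing term) (hpos : 0 < M.PrTerm term σ) :
    ∃ N : ℕ, ∀ 𝔰 : Scheduler M, ∃ m : ℕ, m ≤ N ∧ ∃ path : ℕ → S,
      path 0 = σ ∧ path m = term ∧
      ∀ i < m, path (i + 1) ∈
        (𝔰.choose (List.ofFn (fun j : Fin i => path j)) (path i)).support := by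
  obtain ⟨N, hN⟩ := bounded_shortest_terminating_path' M term σ hterm hpos
  refine ⟨N, fun 𝔰 => ?_⟩
  obtain ⟨m, hm, path, h0, hT, hcons⟩ := hN 𝔰
  exact ⟨m, hm, path, h0, hT, fun i hi => by simpa using hcons i hi⟩
end

section
/- Soundness of the variant rule for AST: Let M be a finitely-branching MDP with absorbing terminal state ⊥ and initial state σ. Suppose there exist H ∈ ℕ, ε > 0 and a function U : S → ℕ such that U(⊥) = 0; 1 ≤ U(s) ≤ H for every s ∈ Reach(σ) with s ≠ ⊥; and for every s ∈ Reach(σ) with s ≠ ⊥ and every action μ ∈ Act(s), μ({s' : U(s') < U(s)}) ≥ ε. Then M is almost surely terminating from σ. -/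
open scoped ENNReal Classical

namespace VariantAux

variable {S : Type} (M : MDP S) (𝔰 : Scheduler M)

lemma hit_le_one (T : Set S) : ∀ (k : ℕ) hist s, M.hitProbAux 𝔰 T k hist s ≤ 1 := by
  intro k
  induction k with
  | zero => intro hist s; simp only [MDP.hitProbAux]; split <;> simp
  | succ k ih =>
    intro hist s
    simp only [MDP.hitProbAux]
    split
    · exact le_rfl
    · calc ∑' s', (𝔰.choose hist s) s' * M.hitProbAux 𝔰 T k (hist ++ [s]) s'
          ≤ ∑' s', (𝔰.choose hist s) s' * 1 :=
            ENNReal.tsum_le_tsum fun s' => mul_le_mul_right (ih _ _) _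
        _ = 1 := by simp [(𝔰.choose hist s).tsum_coe]

lemma hit_of_mem (T : Set S) (k : ℕ) (hist : List S) {s : S} (hs : s ∈ T) :
    M.hitProbAux 𝔰 T k hist s = 1 := by
  cases k <;> simp [MDP.hitProbAux, hs]

lemma variant_bound (term σ : S) (U : S → ℕ) (e : ℝ≥0∞) (he1 : e ≤ 1)
    (hU0 : U term = 0)
    (hU1 : ∀ s, M.Reach σ s → s ≠ term → 1 ≤ U s)
    (hprog : ∀ s, M.Reach σ s → s ≠ term → ∀ μ ∈ M.act s,
      e ≤ MDP.mass μ {s' | U s' < U s}) :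
    ∀ (k : ℕ) (s : S), M.Reach σ s → U s ≤ k → ∀ hist,
      e ^ (U s) ≤ M.hitProbAux 𝔰 {term} k hist s := by
  intro k
  induction k with
  | zero =>
    intro s hs hk hist
    by_cases hst : s = term
    · subst hst; simp [MDP.hitProbAux, hU0]
    · exact absurd hk (by have := hU1 s hs hst; omega)
  | succ k ih =>
    intro s hs hk hist
    by_cases hst : s = term
    · subst hst
      rw [hit_of_mem M 𝔰 _ _ _ (Set.mem_singleton _)]
      exact pow_le_one' he1 _
    · have hU1s := hU1 s hs hst
      have hnm : s ∉ ({term} : Set S) := by simpa using hst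
      simp only [MDP.hitProbAux, if_neg hnm]
      have hμ : 𝔰.choose hist s ∈ M.act s := 𝔰.choose_mem hist s
      calc e ^ U s = e * e ^ (U s - 1) := by
            rw [← pow_succ']; congr 1; omega
        _ ≤ MDP.mass (𝔰.choose hist s) {s' | U s' < U s} * e ^ (U s - 1) :=
            mul_le_mul_left (hprog s hs hst _ hμ) _
        _ = ∑' a : {s' | U s' < U s}, (𝔰.choose hist s) a * e ^ (U s - 1) :=
            (ENNReal.tsum_mul_right).symm
        _ ≤ ∑' a : {s' | U s' < U s},
              (𝔰.choose hist s) a * M.hitProbAux 𝔰 {term} k (hist ++ [s]) a := by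
            refine ENNReal.tsum_le_tsum fun a => ?_
            by_cases h0 : (𝔰.choose hist s) a = 0
            · simp [h0]
            · have hra : M.Reach σ a :=
                MDP.Reach.step _ hs hμ ((PMF.mem_support_iff _ _).mpr h0)
              have hUa : (U a : ℕ) < U s := a.2
              refine mul_le_mul_right (le_trans ?_ (ih a hra (by omega) (hist ++ [s]))) _
              exact pow_le_pow_right_of_le_one' he1 (by omega)
        _ ≤ ∑' s', (𝔰.choose hist s) s' * M.hitProbAux 𝔰 {term} k (hist ++ [s]) s' :=
            ENNReal.summable.tsum_le_tsum_of_inj (Subtype.val) Subtype.val_injective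
              (fun _ _ => zero_le) (fun _ => le_rfl) ENNReal.summable

lemma one_sub_tsum (μ : PMF S) (h : S → ℝ≥0∞) (hle : ∀ s, h s ≤ 1) :
    ∑' s, μ s * (1 - h s) = 1 - ∑' s, μ s * h s := by
  have hfin : ∑' s, μ s * h s ≠ ∞ := by
    have hle1 : ∑' s, μ s * h s ≤ 1 := by
      calc ∑' s, μ s * h s ≤ ∑' s, μ s * 1 :=
            ENNReal.tsum_le_tsum fun s => mul_le_mul_right (hle s) _
        _ = 1 := by simp [μ.tsum_coe]
    exact ne_top_of_le_ne_top ENNReal.one_ne_top hle1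
  refine ENNReal.eq_sub_of_add_eq hfin ?_
  rw [← ENNReal.tsum_add]
  calc ∑' s, (μ s * (1 - h s) + μ s * h s) = ∑' s, μ s * 1 := by
        congr 1; funext s; rw [← mul_add, tsub_add_cancel_of_le (hle s)]
    _ = 1 := by simp [μ.tsum_coe]

lemma compose (term σ : S) (m : ℕ) (c : ℝ≥0∞)
    (hm : ∀ hist (s : S), M.Reach σ s →
      1 ≤ M.hitProbAux 𝔰 {term} m hist s + c) :
    ∀ (j : ℕ) hist (s : S), M.Reach σ s →
      1 ≤ M.hitProbAux 𝔰 {term} (j + m) hist s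
          + (1 - M.hitProbAux 𝔰 {term} j hist s) * c := by
  intro j
  induction j with
  | zero =>
    intro hist s hs
    by_cases hst : s ∈ ({term} : Set S)
    · rw [hit_of_mem M 𝔰 _ _ _ hst]; exact le_add_right le_rfl
    · have h0 : M.hitProbAux 𝔰 {term} 0 hist s = 0 := by
        simp [MDP.hitProbAux, hst]
      rw [zero_add, h0, tsub_zero, one_mul]
      exact hm hist s hs
  | succ j ih =>
    intro hist s hs
    by_cases hst : s ∈ ({term} : Set S)
    · rw [hit_of_mem M 𝔰 _ _ _ hst]; exact le_add_right le_rfl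
    · have hμ : 𝔰.choose hist s ∈ M.act s := 𝔰.choose_mem hist s
      have e1 : M.hitProbAux 𝔰 {term} (j + 1 + m) hist s
          = ∑' s', (𝔰.choose hist s) s' * M.hitProbAux 𝔰 {term} (j + m) (hist ++ [s]) s' := by
        rw [show j + 1 + m = (j + m) + 1 by omega]
        simp only [MDP.hitProbAux, if_neg hst]
      have e2 : 1 - M.hitProbAux 𝔰 {term} (j + 1) hist s
          = ∑' s', (𝔰.choose hist s) s' * (1 - M.hitProbAux 𝔰 {term} j (hist ++ [s]) s') := by
        rw [one_sub_tsum _ _ (fun s' => hit_le_one M 𝔰 _ _ _ _)]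
        simp only [MDP.hitProbAux, if_neg hst]
      rw [e1, e2, ← ENNReal.tsum_mul_right, ← ENNReal.tsum_add]
      calc (1 : ℝ≥0∞) = ∑' s', (𝔰.choose hist s) s' * 1 := by simp [(𝔰.choose hist s).tsum_coe]
        _ ≤ ∑' s', ((𝔰.choose hist s) s' * M.hitProbAux 𝔰 {term} (j + m) (hist ++ [s]) s'
              + (𝔰.choose hist s) s' * (1 - M.hitProbAux 𝔰 {term} j (hist ++ [s]) s') * c) := by
            refine ENNReal.tsum_le_tsum fun s' => ?_
            by_cases h0 : (𝔰.choose hist s) s' = 0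
            · simp [h0]
            · have hr : M.Reach σ s' :=
                MDP.Reach.step _ hs hμ ((PMF.mem_support_iff _ _).mpr h0)
              rw [mul_assoc, ← mul_add]
              exact mul_le_mul_right (ih (hist ++ [s]) s' hr) _

end VariantAux
/-- **Soundness of the variant rule for AST** (McIver–Morgan). If there are a bound `H`,
an `ε > 0`, and a variant `U : S → ℕ` with `U(term) = 0`, `1 ≤ U(s) ≤ H` on reachable
non-terminal states, and such that every action at a reachable non-terminal state decreases
`U` with probability at least `ε`, then `M` is almost surely terminating from `σ`. -/
theorem variant_rule_sound {S : Type} [Countable S] (M : MDP S) (term σ : S)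
    (hterm : M.Absorbing term)
    (H : ℕ) (ε : ℝ) (hε : 0 < ε) (U : S → ℕ)
    (hU0 : U term = 0)
    (hUbd : ∀ s, M.Reach σ s → s ≠ term → 1 ≤ U s ∧ U s ≤ H)
    (hprog : ∀ s, M.Reach σ s → s ≠ term → ∀ μ ∈ M.act s,
      ENNReal.ofReal ε ≤ MDP.mass μ {s' | U s' < U s}) :
    M.AST term σ := by
  classical
  have hSched : Nonempty (Scheduler M) :=
    ⟨⟨fun _ s => (M.act_nonempty s).choose, fun _ s => (M.act_nonempty s).choose_spec⟩⟩
  set e : ℝ≥0∞ := ENNReal.ofReal (min ε 1) with he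
  have he1 : e ≤ 1 := by
    rw [he]; exact ENNReal.ofReal_le_one.mpr (min_le_right _ _)
  have he0 : 0 < e := by
    rw [he]; exact ENNReal.ofReal_pos.mpr (lt_min hε one_pos)
  have hprog' : ∀ s, M.Reach σ s → s ≠ term → ∀ μ ∈ M.act s,
      e ≤ MDP.mass μ {s' | U s' < U s} := by
    intro s hs hst μ hμ
    exact le_trans (ENNReal.ofReal_le_ofReal (min_le_left _ _)) (hprog s hs hst μ hμ)
  set δ : ℝ≥0∞ := e ^ H with hδ
  have hδ0 : δ ≠ 0 := by positivity
  have hδ1 : δ ≤ 1 := pow_le_one' he1 _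
  -- each scheduler hits `term` with probability at least `δ` within `H` steps
  have hitH : ∀ (𝔰 : Scheduler M) hist (s : S), M.Reach σ s →
      δ ≤ M.hitProbAux 𝔰 {term} H hist s := by
    intro 𝔰 hist s hs
    by_cases hst : s = term
    · subst hst
      rw [VariantAux.hit_of_mem M 𝔰 _ _ _ (Set.mem_singleton _)]
      exact hδ1
    · obtain ⟨h1, h2⟩ := hUbd s hs hst
      refine le_trans ?_
        (VariantAux.variant_bound M 𝔰 term σ U e he1 hU0
          (fun s hs hst => (hUbd s hs hst).1) hprog' H s hs h2 hist)
      exact pow_le_pow_right_of_le_one' he1 h2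
  -- main quantitative bound
  have main : ∀ (𝔰 : Scheduler M) (n : ℕ) hist (s : S), M.Reach σ s →
      1 ≤ M.hitProbAux 𝔰 {term} (n * H) hist s + (1 - δ) ^ n := by
    intro 𝔰 n
    induction n with
    | zero => intro hist s hs; simp
    | succ n ih =>
      intro hist s hs
      have hcomp := VariantAux.compose M 𝔰 term σ (n * H) ((1 - δ) ^ n) ih H hist s hs
      refine hcomp.trans (add_le_add ?_ ?_)
      · rw [show H + n * H = (n + 1) * H by ring]
      · rw [pow_succ']
        exact mul_le_mul_left (tsub_le_tsub_left (hitH 𝔰 hist s hs) 1) _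
  -- each scheduler's hitting probability is 1
  have key : ∀ 𝔰 : Scheduler M, M.hitProb 𝔰 σ {term} = 1 := by
    intro 𝔰
    refine le_antisymm (iSup_le fun k => VariantAux.hit_le_one M 𝔰 _ _ _ _) ?_
    have hb : ∀ n : ℕ, 1 - M.hitProb 𝔰 σ {term} ≤ (1 - δ) ^ n := by
      intro n
      refine tsub_le_iff_right.mpr ?_
      rw [add_comm]
      refine (main 𝔰 n [] σ MDP.Reach.refl).trans (add_le_add_left ?_ _)
      exact le_iSup (fun k => M.hitProbWithin 𝔰 σ {term} k) (n * H)
    have htend : Filter.Tendsto (fun n : ℕ => (1 - δ) ^ n) Filter.atTop (nhds 0) :=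
      ENNReal.tendsto_pow_atTop_nhds_zero_of_lt_one
        (ENNReal.sub_lt_self ENNReal.one_ne_top one_ne_zero hδ0)
    have h0 : 1 - M.hitProb 𝔰 σ {term} ≤ 0 := ge_of_tendsto' htend hb
    exact tsub_eq_zero_iff_le.mp (le_antisymm h0 (zero_le))
  simp only [MDP.AST, MDP.PrTerm, key, iInf_const]
end

section
/- Completeness of the variant rule for finite-state programs: Let M be a finitely-branching MDP with absorbing terminal state ⊥ whose state space S is finite, and suppose M is almost surely terminating from the initial state σ. Then there exist H ∈ ℕ, ε > 0 and a function U : S → ℕ such that U(⊥) = 0; 1 ≤ U(s) ≤ H for every s ∈ Reach(σ) with s ≠ ⊥; and for every s ∈ Reach(σ) with s ≠ ⊥ and every action μ ∈ Act(s), μ({s' : U(s') < U(s)}) ≥ ε. -/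
open scoped ENNReal Classical

section VariantAux
variable {S : Type}

def layer (M : MDP S) (term : S) : ℕ → Set S
  | 0 => {term}
  | n + 1 => layer M term n ∪ {s | ∀ μ ∈ M.act s, ∃ s' ∈ (μ : PMF S).support, s' ∈ layer M term n}

lemma layer_mono (M : MDP S) (term : S) (n : ℕ) : layer M term n ⊆ layer M term (n+1) :=
  Set.subset_union_left

lemma term_mem_layer (M : MDP S) (term : S) (n : ℕ) : term ∈ layer M term n := by
  induction n with
  | zero => exact rfl
  | succ n ih => exact layer_mono M term n ih

/-- path extraction -/
lemma reach_path (M : MDP S) (σ s : S) (h : M.Reach σ s) :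
    ∃ (m : ℕ) (p : ℕ → S) (ν : ℕ → PMF S), p 0 = σ ∧ p m = s ∧
      ∀ i < m, ν i ∈ M.act (p i) ∧ p (i+1) ∈ (ν i).support := by
  induction h with
  | refl => exact ⟨0, fun _ => σ, fun _ => PMF.pure σ, rfl, rfl, by omega⟩
  | @step t t' μ hr hμ hs ih =>
      obtain ⟨m, p, ν, h0, hm, hstep⟩ := ih
      refine ⟨m+1, fun i => if i = m+1 then t' else p i, fun i => if i = m then μ else ν i,
        by simp [h0], by simp, ?_⟩
      intro i hi
      rcases Nat.lt_succ_iff_lt_or_eq.mp hi with hi' | rfl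
      · have h1 : i ≠ m + 1 := by omega
        have h2 : i + 1 ≠ m + 1 := by omega
        have h3 : i ≠ m := by omega
        simpa [h1, h2, h3] using hstep i hi'
      · simp [hm ▸ hμ, hs]

lemma reach_mem_layer [Fintype S] (M : MDP S) (term σ : S) (hterm : M.Absorbing term)
    (hAST : M.AST term σ) (N : ℕ) (hfix : layer M term N = layer M term (N+1)) :
    ∀ s, M.Reach σ s → s ∈ layer M term N := by
  intro s₀ hreach
  by_contra hs₀
  -- default actions
  obtain ⟨defAct, hdefAct⟩ := Classical.axiomOfChoice M.act_nonempty
  -- bad actions on states outside layer N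
  have hbadex : ∀ s, s ∉ layer M term N →
      ∃ μ, μ ∈ M.act s ∧ ∀ s' ∈ (μ : PMF S).support, s' ∉ layer M term N := by
    intro s hs
    have h1 : s ∉ layer M term (N+1) := hfix ▸ hs
    have h2 : s ∉ {s | ∀ μ ∈ M.act s, ∃ s' ∈ (μ : PMF S).support, s' ∈ layer M term N} := by
      intro h; exact h1 (Set.mem_union_right _ h)
    simp only [Set.mem_setOf_eq] at h2
    push_neg at h2
    obtain ⟨μ, hμ, h⟩ := h2
    exact ⟨μ, hμ, h⟩
  choose bad hbadmem hbadsupp using hbadex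
  -- path from σ to s₀
  obtain ⟨m, p, ν, hp0, hpm, hstep⟩ := reach_path M σ s₀ hreach
  -- p j ≠ term along the path
  have hterm_prop : ∀ d j, j + d = m → p j = term → False := by
    intro d
    induction d with
    | zero =>
        intro j hj hpj
        have : p j = s₀ := by rw [show j = m by omega, hpm]
        exact hs₀ (this ▸ hpj ▸ term_mem_layer M term N)
    | succ d ih =>
        intro j hj hpj
        have hjm : j < m := by omega
        have h1 := (hstep j hjm).1
        rw [hpj, hterm, Finset.mem_singleton] at h1
        have h2 := (hstep j hjm).2
        rw [h1, PMF.support_pure] at h2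
        exact ih (j+1) (by omega) h2
  -- the adversarial scheduler
  let C : List S → S → PMF S := fun hist t =>
    if h : t ∉ layer M term N then bad t h
    else if hist.length < m ∧ t = p hist.length then ν hist.length else defAct t
  have hC : ∀ hist t, C hist t ∈ M.act t := by
    intro hist t
    simp only [C]
    split
    · exact hbadmem t _
    · split
      · next h2 => rw [h2.2]; exact (hstep _ h2.1).1
      · exact hdefAct t
  let sch : Scheduler M := ⟨C, hC⟩
  -- states outside layer N have hit probability 0
  have hzero : ∀ k hist t, t ∉ layer M term N →
      MDP.hitProbAux M sch {term} k hist t = 0 := by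
    intro k
    induction k with
    | zero =>
        intro hist t ht
        have : t ≠ term := fun h => ht (h ▸ term_mem_layer M term N)
        simp [MDP.hitProbAux, this]
    | succ k ih =>
        intro hist t ht
        have htne : t ≠ term := fun h => ht (h ▸ term_mem_layer M term N)
        rw [MDP.hitProbAux, if_neg (by simpa using htne)]
        have hch : sch.choose hist t = bad t ht := dif_pos ht
        rw [ENNReal.tsum_eq_zero]
        intro s'
        by_cases h0 : (sch.choose hist t) s' = 0
        · rw [h0, zero_mul]
        · have hs' : s' ∈ (sch.choose hist t).support := h0
          rw [hch] at hs'
          rw [ih _ s' (hbadsupp t ht s' hs'), mul_zero]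
  -- hit probabilities are at most 1
  have hle1 : ∀ k hist t, MDP.hitProbAux M sch {term} k hist t ≤ 1 := by
    intro k
    induction k with
    | zero => intro hist t; rw [MDP.hitProbAux]; split <;> simp
    | succ k ih =>
        intro hist t
        rw [MDP.hitProbAux]
        split
        · exact le_refl _
        · calc ∑' s', (sch.choose hist t) s' * MDP.hitProbAux M sch {term} k (hist ++ [t]) s'
              ≤ ∑' s', (sch.choose hist t) s' :=
                ENNReal.tsum_le_tsum fun s' => mul_le_of_le_one_right' (ih _ _)
            _ = 1 := PMF.tsum_coe _
  -- the product of path probabilities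
  let r : ℕ → ℝ≥0∞ := fun j => ∏ i ∈ Finset.Ico j m, (ν i) (p (i+1))
  have hr_le : ∀ j, r j ≤ 1 :=
    fun j => Finset.prod_le_one (fun _ _ => zero_le) (fun i _ => PMF.coe_le_one _ _)
  have hr_ne_top : ∀ j, r j ≠ ⊤ := fun j => ne_top_of_le_ne_top ENNReal.one_ne_top (hr_le j)
  have hr0 : r 0 ≠ 0 := by
    rw [Finset.prod_ne_zero_iff]
    intro i hi
    exact (hstep i (Finset.mem_Ico.mp hi).2).2
  -- main estimate
  have hmain : ∀ d j, j + d = m → ∀ k (hist : List S), hist.length = j →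
      MDP.hitProbAux M sch {term} k hist (p j) + r j ≤ 1 := by
    intro d
    induction d with
    | zero =>
        intro j hj k hist hlen
        have hj' : j = m := by omega
        subst hj'
        rw [hzero k hist (p j) (hpm ▸ hs₀)]
        simp [r]
    | succ d ih =>
        intro j hj k hist hlen
        have hjm : j < m := by omega
        by_cases hF : p j ∉ layer M term N
        · rw [hzero k hist _ hF, zero_add]; exact hr_le j
        · push_neg at hF
          have hne : p j ≠ term := fun h => hterm_prop (d+1) j hj h
          have hneT : p j ∉ ({term} : Set S) := by simpa using hne
          match k with
          | 0 =>
              rw [MDP.hitProbAux, if_neg hneT, zero_add]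
              exact hr_le j
          | k+1 =>
              rw [MDP.hitProbAux, if_neg hneT]
              have hch : sch.choose hist (p j) = ν j := by
                show C hist (p j) = ν j
                simp only [C]
                rw [dif_neg (not_not.mpr hF), if_pos ⟨hlen ▸ hjm, by rw [hlen]⟩, hlen]
              rw [hch]
              set g : S → ℝ≥0∞ := fun s' => MDP.hitProbAux M sch {term} k (hist ++ [p j]) s'
                with hg
              have hgle : g (p (j+1)) + r (j+1) ≤ 1 :=
                ih (j+1) (by omega) k (hist ++ [p j]) (by simp [hlen])
              set a : ℝ≥0∞ := (ν j) (p (j+1)) with ha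
              have hrsplit : r j = a * r (j+1) := by
                simp only [r]
                rw [Finset.prod_eq_prod_Ico_succ_bot hjm]
              have hsplit : (∑' s', (ν j) s' * g s')
                  = a * g (p (j+1)) + ∑' s', if s' = p (j+1) then 0 else (ν j) s' * g s' :=
                ENNReal.tsum_eq_add_tsum_ite _
              have hone : a + (∑' s', if s' = p (j+1) then 0 else (ν j) s') = 1 := by
                rw [← ENNReal.tsum_eq_add_tsum_ite (p (j+1))]
                exact PMF.tsum_coe _
              have hrest : (∑' s', if s' = p (j+1) then 0 else (ν j) s' * g s')
                  ≤ ∑' s', if s' = p (j+1) then 0 else (ν j) s' := by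
                refine ENNReal.tsum_le_tsum fun s' => ?_
                split
                · exact le_refl _
                · exact mul_le_of_le_one_right' (hle1 _ _ _)
              calc (∑' s', (ν j) s' * g s') + r j
                  = a * (g (p (j+1)) + r (j+1))
                    + ∑' s', if s' = p (j+1) then 0 else (ν j) s' * g s' := by
                    rw [hsplit, hrsplit]; ring
                _ ≤ a * 1 + ∑' s', if s' = p (j+1) then 0 else (ν j) s' :=
                    add_le_add (mul_le_mul_right hgle a) hrest
                _ = 1 := by rw [mul_one, hone]
  -- conclude
  have hb : ∀ k, MDP.hitProbWithin M sch σ {term} k + r 0 ≤ 1 := by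
    intro k
    have := hmain m 0 (by omega) k [] rfl
    rwa [hp0] at this
  have hsup : (1:ℝ≥0∞) ≤ ⨆ k, MDP.hitProbWithin M sch σ {term} k := by
    have h1 : MDP.PrTerm M term σ = 1 := hAST
    calc (1:ℝ≥0∞) = MDP.PrTerm M term σ := h1.symm
      _ ≤ MDP.hitProb M sch σ {term} := iInf_le _ sch
      _ = ⨆ k, MDP.hitProbWithin M sch σ {term} k := rfl
  have hlt : (1:ℝ≥0∞) - r 0 < ⨆ k, MDP.hitProbWithin M sch σ {term} k :=
    lt_of_lt_of_le (ENNReal.sub_lt_self ENNReal.one_ne_top one_ne_zero hr0) hsup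
  obtain ⟨k, hk⟩ := lt_iSup_iff.mp hlt
  have : (1:ℝ≥0∞) < MDP.hitProbWithin M sch σ {term} k + r 0 := by
    calc (1:ℝ≥0∞) = (1 - r 0) + r 0 := (tsub_add_cancel_of_le (hr_le 0)).symm
      _ < _ := ENNReal.add_lt_add_right (hr_ne_top 0) hk
  exact this.not_ge (hb k)


lemma layer_fix [Fintype S] (M : MDP S) (term : S) :
    ∃ N, layer M term N = layer M term (N+1) := by
  by_contra h
  push_neg at h
  have hs : StrictMono fun n => (layer M term n).ncard := by
    apply strictMono_nat_of_lt_succ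
    intro n
    exact Set.ncard_lt_ncard (HasSubset.Subset.ssubset_of_ne (layer_mono M term n) (h n))
      (Set.toFinite _)
  have h1 : Fintype.card S + 1 ≤ (layer M term (Fintype.card S + 1)).ncard :=
    hs.le_apply
  have h2 : (layer M term (Fintype.card S + 1)).ncard ≤ Fintype.card S := by
    have := Set.ncard_le_ncard (Set.subset_univ (layer M term (Fintype.card S + 1)))
      Set.finite_univ
    simpa [Set.ncard_univ, Nat.card_eq_fintype_card] using this
  omega


end VariantAux

lemma exists_eps {S : Type} [Fintype S] (M : MDP S) (σ : S) :
    ∃ ε : ℝ, 0 < ε ∧ ∀ s, ∀ μ ∈ M.act s, ∀ s', μ s' ≠ 0 → ENNReal.ofReal ε ≤ μ s' := by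
  classical
  set V : Finset ℝ := (Finset.univ.biUnion M.act).biUnion
    (fun μ => (Finset.univ.filter fun s' => μ s' ≠ 0).image fun s' => (μ s').toReal) with hV
  have hVn : V.Nonempty := by
    obtain ⟨μ, hμ⟩ := M.act_nonempty σ
    obtain ⟨s', hs'⟩ := μ.support_nonempty
    refine ⟨(μ s').toReal, ?_⟩
    rw [hV]
    refine Finset.mem_biUnion.mpr ⟨μ, Finset.mem_biUnion.mpr ⟨σ, Finset.mem_univ _, hμ⟩, ?_⟩
    exact Finset.mem_image.mpr ⟨s', Finset.mem_filter.mpr ⟨Finset.mem_univ _, hs'⟩, rfl⟩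
  have hVpos : ∀ v ∈ V, 0 < v := by
    intro v hv
    rw [hV] at hv
    obtain ⟨μ, _, hv⟩ := Finset.mem_biUnion.mp hv
    obtain ⟨s', hs', rfl⟩ := Finset.mem_image.mp hv
    exact ENNReal.toReal_pos (Finset.mem_filter.mp hs').2 (PMF.apply_ne_top μ s')
  refine ⟨V.min' hVn, hVpos _ (V.min'_mem hVn), ?_⟩
  intro s μ hμ s' h0
  have hmem : (μ s').toReal ∈ V := by
    rw [hV]
    refine Finset.mem_biUnion.mpr ⟨μ, Finset.mem_biUnion.mpr ⟨s, Finset.mem_univ _, hμ⟩, ?_⟩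
    exact Finset.mem_image.mpr ⟨s', Finset.mem_filter.mpr ⟨Finset.mem_univ _, h0⟩, rfl⟩
  calc ENNReal.ofReal (V.min' hVn) ≤ ENNReal.ofReal (μ s').toReal :=
        ENNReal.ofReal_le_ofReal (V.min'_le _ hmem)
    _ = μ s' := ENNReal.ofReal_toReal (PMF.apply_ne_top μ s')

/-- **Completeness of the variant rule for finite-state programs.** If the state space is
finite and `M` is almost surely terminating from `σ`, then there are a bound `H`, an
`ε > 0` and a variant `U : S → ℕ` with `U(term) = 0`, `1 ≤ U(s) ≤ H` on reachable
non-terminal states, such that every action at a reachable non-terminal state decreases `U`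
with probability at least `ε`. -/
theorem variant_rule_complete_finite {S : Type} [Fintype S] (M : MDP S) (term σ : S)
    (hterm : M.Absorbing term) (hAST : M.AST term σ) :
    ∃ (H : ℕ) (ε : ℝ) (U : S → ℕ), 0 < ε ∧
      U term = 0 ∧
      (∀ s, M.Reach σ s → s ≠ term → 1 ≤ U s ∧ U s ≤ H) ∧
      (∀ s, M.Reach σ s → s ≠ term → ∀ μ ∈ M.act s,
        ENNReal.ofReal ε ≤ MDP.mass μ {s' | U s' < U s}) := by
  classical
  obtain ⟨N, hfix⟩ := layer_fix M term
  have hreachN : ∀ s, M.Reach σ s → s ∈ layer M term N :=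
    reach_mem_layer M term σ hterm hAST N hfix
  obtain ⟨ε, hεpos, hεle⟩ := exists_eps M σ
  have hUmem : ∀ s, M.Reach σ s → s ∈ layer M term (sInf {n | s ∈ layer M term n}) := by
    intro s h
    exact Nat.sInf_mem (⟨N, hreachN s h⟩ : Set.Nonempty {n | s ∈ layer M term n})
  have hUleN : ∀ s, M.Reach σ s → sInf {n | s ∈ layer M term n} ≤ N := by
    intro s h
    exact Nat.sInf_le (hreachN s h)
  have hU1 : ∀ s, M.Reach σ s → s ≠ term → 1 ≤ sInf {n | s ∈ layer M term n} := by
    intro s h hne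
    rcases Nat.eq_zero_or_pos (sInf {n | s ∈ layer M term n}) with h0 | h1
    · exfalso
      have := hUmem s h
      rw [h0] at this
      exact hne this
    · exact h1
  refine ⟨N, ε, fun s => sInf {n | s ∈ layer M term n}, hεpos, ?_,
    fun s h hne => ⟨hU1 s h hne, hUleN s h⟩, ?_⟩
  · exact Nat.sInf_eq_zero.mpr (Or.inl (term_mem_layer M term 0))
  · intro s h hne μ hμ
    have h1 := hU1 s h hne
    have hmem := hUmem s h
    set u := sInf {n | s ∈ layer M term n} with hu
    have hUeq : u = (u - 1) + 1 := by omega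
    have hnotlow : s ∉ layer M term (u - 1) := by
      intro hlow
      have : u ≤ u - 1 := Nat.sInf_le hlow
      omega
    rw [hUeq] at hmem
    rcases hmem with hmem | hmem
    · exact absurd hmem hnotlow
    · obtain ⟨s', hs'supp, hs'low⟩ := hmem μ hμ
      have hUs' : sInf {n | s' ∈ layer M term n} < u := by
        have : sInf {n | s' ∈ layer M term n} ≤ u - 1 := Nat.sInf_le hs'low
        omega
      calc ENNReal.ofReal ε ≤ μ s' := hεle s μ hμ s' hs'supp
        _ ≤ MDP.mass μ {t | sInf {n | t ∈ layer M term n} < u} :=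
          ENNReal.le_tsum (⟨s', hUs'⟩ : {t | sInf {n | t ∈ layer M term n} < u})
end

section
/- Soundness of the martingale rule for AST: Let M be a finitely-branching MDP with absorbing terminal state ⊥ and initial state σ. Suppose there exist V : S → ℝ and U : S → ℕ such that (i) V(⊥) = 0 and V(s) > 0 for every s ∈ Reach(σ) with s ≠ ⊥; (ii) V is a supermartingale function on Reach(σ); (iii) U(⊥) = 0 and U(s) ≥ 1 for every s ∈ Reach(σ) with s ≠ ⊥; (iv) for every r ∈ ℝ the set {U(s) : s ∈ Reach(σ), V(s) ≤ r} is bounded; and (v) for every r ∈ ℝ there exists ε_r > 0 such that for every s ∈ Reach(σ) with s ≠ ⊥ and V(s) ≤ r and every action μ ∈ Act(s), μ({s' : U(s') < U(s)}) ≥ ε_r. Then M is almost surely terminating from σ. -/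
open scoped ENNReal Classical

namespace MDPProof
open MDP ENNReal

variable {S : Type} (M : MDP S) (𝔰 : Scheduler M)

/-- Complement: probability of NOT hitting `T` within `k` steps. -/
noncomputable def missAux (T : Set S) : ℕ → List S → S → ℝ≥0∞
  | 0, _, s => if s ∈ T then 0 else 1
  | k + 1, hist, s =>
      if s ∈ T then 0
      else ∑' s', (𝔰.choose hist s) s' * missAux T k (hist ++ [s]) s'

lemma hit_of_mem {T : Set S} (k : ℕ) (hist : List S) {s : S} (hs : s ∈ T) :
    hitProbAux M 𝔰 T k hist s = 1 := by
  cases k <;> simp [hitProbAux, hs]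

lemma miss_of_mem {T : Set S} (k : ℕ) (hist : List S) {s : S} (hs : s ∈ T) :
    missAux M 𝔰 T k hist s = 0 := by
  cases k <;> simp [missAux, hs]

lemma hit_add_miss (T : Set S) (k : ℕ) :
    ∀ hist s, hitProbAux M 𝔰 T k hist s + missAux M 𝔰 T k hist s = 1 := by
  induction k with
  | zero => intro hist s; by_cases hs : s ∈ T <;> simp [hitProbAux, missAux, hs]
  | succ k ih =>
    intro hist s
    by_cases hs : s ∈ T
    · simp [hitProbAux, missAux, hs]
    · simp only [hitProbAux, missAux, if_neg hs]
      rw [← ENNReal.tsum_add]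
      have : ∀ s', (𝔰.choose hist s) s' * hitProbAux M 𝔰 T k (hist ++ [s]) s'
          + (𝔰.choose hist s) s' * missAux M 𝔰 T k (hist ++ [s]) s'
          = (𝔰.choose hist s) s' := by
        intro s'
        rw [← mul_add, ih (hist ++ [s]) s', mul_one]
      rw [tsum_congr this, PMF.tsum_coe]

lemma hit_le_one (T : Set S) (k : ℕ) (hist : List S) (s : S) :
    hitProbAux M 𝔰 T k hist s ≤ 1 := by
  rw [← hit_add_miss M 𝔰 T k hist s]; exact le_self_add

lemma miss_le_one (T : Set S) (k : ℕ) (hist : List S) (s : S) :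
    missAux M 𝔰 T k hist s ≤ 1 := by
  rw [← hit_add_miss M 𝔰 T k hist s]; exact le_add_self

lemma hit_mono (T : Set S) (k : ℕ) :
    ∀ hist s, hitProbAux M 𝔰 T k hist s ≤ hitProbAux M 𝔰 T (k+1) hist s := by
  induction k with
  | zero =>
    intro hist s
    by_cases hs : s ∈ T <;> simp [hitProbAux, hs]
  | succ k ih =>
    intro hist s
    by_cases hs : s ∈ T
    · simp [hitProbAux, hs]
    · simp only [hitProbAux, if_neg hs]
      exact ENNReal.tsum_le_tsum fun s' =>
        mul_le_mul_right (ih (hist ++ [s]) s') _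

lemma hit_mono_le (T : Set S) {k m : ℕ} (hkm : k ≤ m) (hist : List S) (s : S) :
    hitProbAux M 𝔰 T k hist s ≤ hitProbAux M 𝔰 T m hist s := by
  induction hkm with
  | refl => exact le_rfl
  | step h ih => exact le_trans ih (hit_mono M 𝔰 T _ _ _)

lemma hit_union_le (A B : Set S) (k : ℕ) :
    ∀ hist s, hitProbAux M 𝔰 (A ∪ B) k hist s ≤
      hitProbAux M 𝔰 A k hist s + hitProbAux M 𝔰 B k hist s := by
  induction k with
  | zero =>
    intro hist s
    by_cases hA : s ∈ A
    · simp [hitProbAux, hA]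
    · by_cases hB : s ∈ B <;> simp [hitProbAux, hA, hB]
  | succ k ih =>
    intro hist s
    by_cases hA : s ∈ A
    · rw [hit_of_mem M 𝔰 _ _ (Set.mem_union_left B hA), hit_of_mem M 𝔰 _ _ hA]
      exact le_self_add
    · by_cases hB : s ∈ B
      · rw [hit_of_mem M 𝔰 _ _ (Set.mem_union_right A hB), hit_of_mem M 𝔰 _ _ hB]
        exact le_add_self
      · have hAB : s ∉ A ∪ B := by simp [hA, hB]
        simp only [hitProbAux, if_neg hA, if_neg hB, if_neg hAB]
        rw [← ENNReal.tsum_add]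
        exact ENNReal.tsum_le_tsum fun s' => by
          rw [← mul_add]; exact mul_le_mul_right (ih (hist ++ [s]) s') _

lemma mass_le_one (μ : PMF S) (A : Set S) : mass μ A ≤ 1 := by
  rw [mass, tsum_subtype]
  calc ∑' s, A.indicator (⇑μ) s ≤ ∑' s, μ s :=
        ENNReal.tsum_le_tsum fun s => Set.indicator_le_self A _ s
  _ = 1 := PMF.tsum_coe μ

end MDPProof

namespace MDPProof
open MDP ENNReal

variable {S : Type} (M : MDP S) (𝔰 : Scheduler M)

lemma tsum_mul_mono {μ : PMF S} {f g : S → ℝ≥0∞}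
    (h : ∀ s', μ s' ≠ 0 → f s' ≤ g s') :
    ∑' s', μ s' * f s' ≤ ∑' s', μ s' * g s' :=
  ENNReal.tsum_le_tsum fun s' => by
    by_cases hs : μ s' = 0
    · simp [hs]
    · exact mul_le_mul_right (h s' hs) _

/-- Ville's inequality for the supermartingale `V`. -/
lemma ville (σ : S) (V : S → ℝ) (hVnn : ∀ s, M.Reach σ s → 0 ≤ V s)
    (hVsm : M.SupermartingaleOn σ V) (r : ℝ) (hr : 0 < r) (k : ℕ) :
    ∀ hist s, M.Reach σ s →
      hitProbAux M 𝔰 {x | r < V x} k hist s ≤ ENNReal.ofReal (V s / r) := by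
  induction k with
  | zero =>
    intro hist s hs
    by_cases h : r < V s
    · rw [hit_of_mem M 𝔰 _ _ h]
      rw [ENNReal.one_le_ofReal]
      exact (one_le_div hr).mpr h.le
    · simp [hitProbAux, h]
  | succ k ih =>
    intro hist s hs
    by_cases h : r < V s
    · rw [hit_of_mem M 𝔰 _ _ h, ENNReal.one_le_ofReal]
      exact (one_le_div hr).mpr h.le
    · have hμ : 𝔰.choose hist s ∈ M.act s := 𝔰.choose_mem hist s
      set μ := 𝔰.choose hist s with hμdef
      simp only [hitProbAux, Set.mem_setOf_eq, if_neg h]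
      have step1 : ∑' s', μ s' * hitProbAux M 𝔰 {x | r < V x} k (hist ++ [s]) s'
          ≤ ∑' s', μ s' * ENNReal.ofReal (V s' / r) := by
        apply tsum_mul_mono
        intro s' hs'
        exact ih (hist ++ [s]) s' (Reach.step μ hs hμ hs')
      refine step1.trans ?_
      have F := M.act_finSupp s μ hμ
      have hreach : ∀ s' ∈ F.toFinset, M.Reach σ s' := by
        intro s' hs'
        exact Reach.step μ hs hμ ((Set.Finite.mem_toFinset F).mp hs')
      have hsum : ∑' s', μ s' * ENNReal.ofReal (V s' / r)
          = ∑ s' ∈ F.toFinset, ENNReal.ofReal ((μ s').toReal * (V s' / r)) := by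
        rw [tsum_eq_sum (s := F.toFinset)]
        · apply Finset.sum_congr rfl
          intro s' _
          rw [ENNReal.ofReal_mul ENNReal.toReal_nonneg, ENNReal.ofReal_toReal (PMF.apply_ne_top μ s')]
        · intro s' hs'
          have : μ s' = 0 := by
            by_contra hne
            exact hs' ((Set.Finite.mem_toFinset F).mpr hne)
          simp [this]
      rw [hsum, ← ENNReal.ofReal_sum_of_nonneg]
      · apply ENNReal.ofReal_le_ofReal
        have hexp : ∑ s' ∈ F.toFinset, (μ s').toReal * V s' = expect μ V := by
          rw [expect, tsum_eq_sum (s := F.toFinset)]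
          intro s' hs'
          have : μ s' = 0 := by
            by_contra hne
            exact hs' ((Set.Finite.mem_toFinset F).mpr hne)
          simp [this]
        calc ∑ s' ∈ F.toFinset, (μ s').toReal * (V s' / r)
            = (∑ s' ∈ F.toFinset, (μ s').toReal * V s') / r := by
              rw [Finset.sum_div]; apply Finset.sum_congr rfl; intros; rw [mul_div_assoc]
          _ = expect μ V / r := by rw [hexp]
          _ ≤ V s / r := by
              gcongr
              exact hVsm s hs μ hμ
      · intro s' hs'
        exact mul_nonneg ENNReal.toReal_nonneg (div_nonneg (hVnn s' (hreach s' hs')) hr.le)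

/-- Progress: within `U s` steps, the probability of hitting `{term} ∪ {V > r}`
is at least `ε ^ U s`. -/
lemma progress (σ term : S) (V : S → ℝ) (U : S → ℕ) (r ε : ℝ)
    (hε1 : ENNReal.ofReal ε ≤ 1)
    (hU1 : ∀ s, M.Reach σ s → s ≠ term → 1 ≤ U s)
    (hprog : ∀ s, M.Reach σ s → s ≠ term → V s ≤ r →
      ∀ μ ∈ M.act s, ENNReal.ofReal ε ≤ mass μ {s' | U s' < U s}) :
    ∀ n s, M.Reach σ s → U s ≤ n → ∀ hist,
      ENNReal.ofReal ε ^ n ≤ hitProbAux M 𝔰 ({term} ∪ {x | r < V x}) n hist s := by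
  intro n
  induction n with
  | zero =>
    intro s hs hU hist
    have hst : s = term := by
      by_contra hne
      exact absurd (hU1 s hs hne) (by omega)
    rw [hit_of_mem M 𝔰 _ _ (Set.mem_union_left _ (by simp [hst]))]
    simp
  | succ n ih =>
    intro s hs hU hist
    by_cases hT : s ∈ ({term} ∪ {x | r < V x} : Set S)
    · rw [hit_of_mem M 𝔰 _ _ hT]
      exact pow_le_one' hε1 (n+1)
    · have hne : s ≠ term := by simp only [Set.mem_union, Set.mem_singleton_iff] at hT; tauto
      have hVr : V s ≤ r := by
        simp only [Set.mem_union, Set.mem_singleton_iff, Set.mem_setOf_eq] at hT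
        push_neg at hT
        exact hT.2
      have hμ : 𝔰.choose hist s ∈ M.act s := 𝔰.choose_mem hist s
      set μ := 𝔰.choose hist s with hμdef
      have hmass := hprog s hs hne hVr μ hμ
      simp only [hitProbAux, if_neg hT]
      set A : Set S := {s' | U s' < U s} with hA
      calc ENNReal.ofReal ε ^ (n + 1)
          = ENNReal.ofReal ε * ENNReal.ofReal ε ^ n := by ring
        _ ≤ mass μ A * ENNReal.ofReal ε ^ n := mul_le_mul_left hmass _
        _ = ∑' s' : A, μ s' * ENNReal.ofReal ε ^ n := by
            rw [mass, ENNReal.tsum_mul_right]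
        _ ≤ ∑' s' : A, μ s' * hitProbAux M 𝔰 ({term} ∪ {x | r < V x}) n (hist ++ [s]) s' := by
            apply ENNReal.tsum_le_tsum
            rintro ⟨s', hs'A⟩
            by_cases hz : μ s' = 0
            · simp [hz]
            · apply mul_le_mul_right
              have hreach : M.Reach σ s' := Reach.step μ hs hμ hz
              have hUs' : U s' ≤ n := by
                have : U s' < U s := hs'A
                omega
              exact ih s' hreach hUs' (hist ++ [s])
        _ ≤ ∑' s', μ s' * hitProbAux M 𝔰 ({term} ∪ {x | r < V x}) n (hist ++ [s]) s' := by
            rw [tsum_subtype A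
              (fun s' => μ s' * hitProbAux M 𝔰 ({term} ∪ {x | r < V x}) n (hist ++ [s]) s')]
            exact ENNReal.tsum_le_tsum fun s' => Set.indicator_le_self _ _ s'

end MDPProof

namespace MDPProof
open MDP ENNReal

variable {S : Type} (M : MDP S) (𝔰 : Scheduler M)

lemma miss_factor (σ : S) (T : Set S) (c : ℝ≥0∞) (m : ℕ)
    (hc : ∀ s, M.Reach σ s → ∀ hist, missAux M 𝔰 T m hist s ≤ c) :
    ∀ n hist s, M.Reach σ s →
      missAux M 𝔰 T (n + m) hist s ≤ missAux M 𝔰 T n hist s * c := by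
  intro n
  induction n with
  | zero =>
    intro hist s hs
    by_cases hT : s ∈ T
    · rw [miss_of_mem M 𝔰 _ _ hT, miss_of_mem M 𝔰 _ _ hT, zero_mul]
    · rw [zero_add]
      calc missAux M 𝔰 T m hist s ≤ c := hc s hs hist
        _ = missAux M 𝔰 T 0 hist s * c := by simp [missAux, hT]
  | succ n ih =>
    intro hist s hs
    by_cases hT : s ∈ T
    · rw [miss_of_mem M 𝔰 _ _ hT, miss_of_mem M 𝔰 _ _ hT, zero_mul]
    · have hn : n + 1 + m = (n + m) + 1 := by omega
      rw [hn]
      have hμ : 𝔰.choose hist s ∈ M.act s := 𝔰.choose_mem hist s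
      simp only [missAux, if_neg hT]
      rw [← ENNReal.tsum_mul_right]
      apply ENNReal.tsum_le_tsum
      intro s'
      by_cases hz : 𝔰.choose hist s s' = 0
      · simp [hz]
      · rw [mul_assoc]
        exact mul_le_mul_right (ih (hist ++ [s]) s' (Reach.step _ hs hμ hz)) _

lemma miss_pow (σ : S) (T : Set S) (N : ℕ) (δ : ℝ≥0∞)
    (hB2 : ∀ s, M.Reach σ s → ∀ hist, δ ≤ hitProbAux M 𝔰 T N hist s) :
    ∀ k s, M.Reach σ s → ∀ hist, missAux M 𝔰 T (k * N) hist s ≤ (1 - δ) ^ k := by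
  intro k
  induction k with
  | zero =>
    intro s hs hist
    simpa using miss_le_one M 𝔰 T 0 hist s
  | succ k ih =>
    intro s hs hist
    have hkN : (k + 1) * N = N + k * N := by ring
    rw [hkN]
    have hmissN : ∀ s, M.Reach σ s → ∀ hist, missAux M 𝔰 T N hist s ≤ 1 - δ := by
      intro s hs hist
      have h1 : δ + missAux M 𝔰 T N hist s ≤ 1 := by
        rw [← hit_add_miss M 𝔰 T N hist s]
        exact add_le_add (hB2 s hs hist) le_rfl
      have hδtop : δ ≠ ∞ := by
        intro h
        have := (hB2 s hs hist).trans (hit_le_one M 𝔰 T N hist s)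
        simp [h] at this
      calc missAux M 𝔰 T N hist s = δ + missAux M 𝔰 T N hist s - δ := by
            rw [ENNReal.add_sub_cancel_left hδtop]
        _ ≤ 1 - δ := tsub_le_tsub_right h1 δ
    calc missAux M 𝔰 T (N + k * N) hist s
        ≤ missAux M 𝔰 T N hist s * (1 - δ) ^ k :=
          miss_factor M 𝔰 σ T ((1 - δ) ^ k) (k * N) (fun s hs hist => ih s hs hist) N hist s hs
      _ ≤ (1 - δ) * (1 - δ) ^ k := mul_le_mul_left (hmissN s hs hist) _
      _ = (1 - δ) ^ (k + 1) := (pow_succ' _ _).symm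

end MDPProof

namespace MDPProof
open MDP ENNReal

variable {S : Type} (M : MDP S)

lemma one_le_hitProb_add (𝔰 : Scheduler M) (term σ : S)
    (V : S → ℝ) (U : S → ℕ)
    (hV0 : V term = 0)
    (hVpos : ∀ s, M.Reach σ s → s ≠ term → 0 < V s)
    (hVsm : M.SupermartingaleOn σ V)
    (hU1 : ∀ s, M.Reach σ s → s ≠ term → 1 ≤ U s)
    (hUbd : ∀ r : ℝ, BddAbove {u : ℕ | ∃ s, M.Reach σ s ∧ V s ≤ r ∧ U s = u})
    (hprog : ∀ r : ℝ, ∃ ε : ℝ, 0 < ε ∧ ∀ s, M.Reach σ s → s ≠ term → V s ≤ r →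
      ∀ μ ∈ M.act s, ENNReal.ofReal ε ≤ MDP.mass μ {s' | U s' < U s})
    (r : ℝ) (hr : 0 < r) :
    1 ≤ hitProb M 𝔰 σ {term} + ENNReal.ofReal (V σ / r) := by
  have hVnn : ∀ s, M.Reach σ s → 0 ≤ V s := by
    intro s hs
    by_cases h : s = term
    · rw [h, hV0]
    · exact (hVpos s hs h).le
  obtain ⟨ε₀, hε₀, hprog₀⟩ := hprog r
  set ε := min ε₀ 1 with hεdef
  have hε : 0 < ε := lt_min hε₀ one_pos
  have hε1 : ENNReal.ofReal ε ≤ 1 := by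
    rw [ENNReal.ofReal_le_one]; exact min_le_right _ _
  have hprogε : ∀ s, M.Reach σ s → s ≠ term → V s ≤ r →
      ∀ μ ∈ M.act s, ENNReal.ofReal ε ≤ MDP.mass μ {s' | U s' < U s} := by
    intro s hs hne hv μ hμ
    exact le_trans (ENNReal.ofReal_le_ofReal (min_le_left _ _)) (hprog₀ s hs hne hv μ hμ)
  obtain ⟨N, hN⟩ := hUbd r
  have hNbound : ∀ s, M.Reach σ s → V s ≤ r → U s ≤ N := by
    intro s hs hv
    exact hN ⟨s, hs, hv, rfl⟩
  set δ := ENNReal.ofReal ε ^ N with hδdef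
  set T' := ({term} ∪ {x | r < V x} : Set S) with hT'def
  have hB2 : ∀ s, M.Reach σ s → ∀ hist, δ ≤ hitProbAux M 𝔰 T' N hist s := by
    intro s hs hist
    by_cases hT : s ∈ T'
    · rw [hit_of_mem M 𝔰 _ _ hT]
      exact pow_le_one' hε1 N
    · have hVr : V s ≤ r := by
        simp only [hT'def, Set.mem_union, Set.mem_singleton_iff, Set.mem_setOf_eq] at hT
        push_neg at hT
        exact hT.2
      exact progress M 𝔰 σ term V U r ε hε1 hU1 hprogε N s hs (hNbound s hs hVr) hist
  have hmiss := miss_pow M 𝔰 σ T' N δ hB2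
  have hδpos : 0 < δ := ENNReal.pow_pos (ENNReal.ofReal_pos.mpr hε) N
  have hη : (1 : ℝ≥0∞) - δ < 1 :=
    ENNReal.sub_lt_self ENNReal.one_ne_top one_ne_zero hδpos.ne'
  have hchain : ∀ k : ℕ,
      (1 : ℝ≥0∞) ≤ (hitProb M 𝔰 σ {term} + ENNReal.ofReal (V σ / r)) + (1 - δ) ^ k := by
    intro k
    have h1 : (1 : ℝ≥0∞) = hitProbAux M 𝔰 T' (k * N) [] σ + missAux M 𝔰 T' (k * N) [] σ :=
      (hit_add_miss M 𝔰 T' (k * N) [] σ).symm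
    refine h1.trans_le (add_le_add ?_ (hmiss k σ Reach.refl []))
    calc hitProbAux M 𝔰 T' (k * N) [] σ
        ≤ hitProbAux M 𝔰 {term} (k * N) [] σ + hitProbAux M 𝔰 {x | r < V x} (k * N) [] σ :=
          hit_union_le M 𝔰 {term} {x | r < V x} (k * N) [] σ
      _ ≤ hitProb M 𝔰 σ {term} + ENNReal.ofReal (V σ / r) := by
          apply add_le_add
          · exact le_iSup (fun j => hitProbWithin M 𝔰 σ {term} j) (k * N)
          · exact ville M 𝔰 σ V hVnn hVsm r hr (k * N) [] σ Reach.refl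
  apply ENNReal.le_of_forall_pos_le_add
  intro ε' hε' _
  have htend := ENNReal.tendsto_pow_atTop_nhds_zero_of_lt_one hη
  have hev : ∀ᶠ k in Filter.atTop, (1 - δ) ^ k < (ε' : ℝ≥0∞) :=
    htend.eventually_lt_const (by exact_mod_cast hε')
  obtain ⟨k, hk⟩ := hev.exists
  exact (hchain k).trans (add_le_add le_rfl hk.le)

lemma scheduler_hitProb (𝔰 : Scheduler M) (term σ : S)
    (V : S → ℝ) (U : S → ℕ)
    (hV0 : V term = 0)
    (hVpos : ∀ s, M.Reach σ s → s ≠ term → 0 < V s)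
    (hVsm : M.SupermartingaleOn σ V)
    (hU1 : ∀ s, M.Reach σ s → s ≠ term → 1 ≤ U s)
    (hUbd : ∀ r : ℝ, BddAbove {u : ℕ | ∃ s, M.Reach σ s ∧ V s ≤ r ∧ U s = u})
    (hprog : ∀ r : ℝ, ∃ ε : ℝ, 0 < ε ∧ ∀ s, M.Reach σ s → s ≠ term → V s ≤ r →
      ∀ μ ∈ M.act s, ENNReal.ofReal ε ≤ MDP.mass μ {s' | U s' < U s}) :
    hitProb M 𝔰 σ {term} = 1 := by
  have hVσ : 0 ≤ V σ := by
    by_cases h : σ = term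
    · rw [h, hV0]
    · exact (hVpos σ Reach.refl h).le
  apply le_antisymm
  · exact iSup_le fun k => hit_le_one M 𝔰 {term} k [] σ
  · apply ENNReal.le_of_forall_pos_le_add
    intro ε' hε' _
    have hε'R : (0 : ℝ) < (ε' : ℝ) := hε'
    set r := V σ / (ε' : ℝ) + 1 with hrdef
    have hr : 0 < r := by positivity
    have h1 := one_le_hitProb_add M 𝔰 term σ V U hV0 hVpos hVsm hU1 hUbd hprog r hr
    have h2 : ENNReal.ofReal (V σ / r) ≤ (ε' : ℝ≥0∞) := by
      have hle : V σ / r ≤ (ε' : ℝ) := by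
        rw [div_le_iff₀ hr]
        have : (ε' : ℝ) * r = V σ + (ε' : ℝ) := by
          rw [hrdef, mul_add, mul_one]
          congr 1
          field_simp
        rw [this]
        linarith
      calc ENNReal.ofReal (V σ / r) ≤ ENNReal.ofReal (ε' : ℝ) :=
            ENNReal.ofReal_le_ofReal hle
        _ = (ε' : ℝ≥0∞) := ENNReal.ofReal_coe_nnreal
    exact h1.trans (add_le_add le_rfl h2)

end MDPProof


instance {S : Type} (M : MDP S) : Nonempty (Scheduler M) :=
  ⟨⟨fun _ s => (M.act_nonempty s).choose, fun _ s => (M.act_nonempty s).choose_spec⟩⟩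

/-- **Soundness of the martingale rule for AST.** Suppose `V : S → ℝ` is zero at the
terminal state and positive at all other reachable states, is a supermartingale function on
the reachable states, and `U : S → ℕ` is a variant (zero exactly at the terminal state on
reachable states) such that on every sublevel set of `V` the values of `U` are bounded and
`U` decreases with some probability bounded away from zero.  Then `M` is almost surely
terminating from `σ`. -/
theorem martingale_rule_sound {S : Type} [Countable S] (M : MDP S) (term σ : S)
    (hterm : M.Absorbing term)
    (V : S → ℝ) (U : S → ℕ)
    (hV0 : V term = 0)
    (hVpos : ∀ s, M.Reach σ s → s ≠ term → 0 < V s)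
    (hVsm : M.SupermartingaleOn σ V)
    (hU0 : U term = 0)
    (hU1 : ∀ s, M.Reach σ s → s ≠ term → 1 ≤ U s)
    (hUbd : ∀ r : ℝ, BddAbove {u : ℕ | ∃ s, M.Reach σ s ∧ V s ≤ r ∧ U s = u})
    (hprog : ∀ r : ℝ, ∃ ε : ℝ, 0 < ε ∧ ∀ s, M.Reach σ s → s ≠ term → V s ≤ r →
      ∀ μ ∈ M.act s, ENNReal.ofReal ε ≤ MDP.mass μ {s' | U s' < U s}) :
    M.AST term σ := by
  have hkey : ∀ 𝔰 : Scheduler M, MDP.hitProb M 𝔰 σ {term} = 1 := fun 𝔰 =>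
    MDPProof.scheduler_hitProb M 𝔰 term σ V U hV0 hVpos hVsm hU1 hUbd hprog
  rw [MDP.AST, MDP.PrTerm]
  simp only [hkey, iInf_const]
end

section
/- Let M be a finitely-branching MDP with absorbing terminal state ⊥ that is almost surely terminating from σ, suppose Reach(σ) is infinite, and let e : ℕ → Reach(σ) be a bijection with e(0) = ⊥. For i, n ∈ ℕ define R(i, n) to be the supremum over all schedulers 𝔰 of ℙ_{𝔰,e(i)}(the run visits some state e(m) with m ≥ n). Then for every i ∈ ℕ, R(i, n) → 0 as n → ∞. -/
open scoped ENNReal Classical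

section Aux

open MDP

variable {S : Type}

/-! ### Basic bounds on `hitProbAux` -/

lemma hitAux_le_one (M : MDP S) (𝔰 : Scheduler M) (T : Set S) :
    ∀ k hist s, M.hitProbAux 𝔰 T k hist s ≤ 1 := by
  intro k
  induction k with
  | zero => intro hist s; simp only [MDP.hitProbAux]; split <;> simp
  | succ k ih =>
    intro hist s
    simp only [MDP.hitProbAux]
    split
    · exact le_refl 1
    · calc ∑' s', (𝔰.choose hist s) s' * M.hitProbAux 𝔰 T k (hist ++ [s]) s'
          ≤ ∑' s', (𝔰.choose hist s) s' := by
            refine Summable.tsum_le_tsum (fun s' => ?_) ENNReal.summable ENNReal.summable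
            simpa using mul_le_mul_right (ih (hist ++ [s]) s') ((𝔰.choose hist s) s')
        _ = 1 := (𝔰.choose hist s).tsum_coe

lemma hitAux_term (M : MDP S) (𝔰 : Scheduler M) {term : S} (hterm : M.Absorbing term)
    {T : Set S} (hT : term ∉ T) : ∀ j hist, M.hitProbAux 𝔰 T j hist term = 0 := by
  intro j
  induction j with
  | zero => intro hist; simp only [MDP.hitProbAux]; rw [if_neg hT]
  | succ j ih =>
    intro hist
    simp only [MDP.hitProbAux]
    rw [if_neg hT]
    have hact : M.act term = {PMF.pure term} := hterm
    have hμ : 𝔰.choose hist term = PMF.pure term := by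
      have h := 𝔰.choose_mem hist term
      rw [hact, Finset.mem_singleton] at h
      exact h
    rw [hμ]
    refine ENNReal.tsum_eq_zero.mpr fun s' => ?_
    by_cases h : s' = term
    · rw [h, ih (hist ++ [term]), mul_zero]
    · rw [PMF.pure_apply, if_neg h, zero_mul]

/-! ### The "miss" probability -/

noncomputable def missAux (M : MDP S) (𝔰 : Scheduler M) (U : Set S) :
    ℕ → List S → S → ℝ≥0∞
  | 0, _, s => if s ∈ U then 0 else 1
  | k + 1, hist, s =>
      if s ∈ U then 0
      else ∑' s', (𝔰.choose hist s) s' * missAux M 𝔰 U k (hist ++ [s]) s'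

lemma hit_add_miss (M : MDP S) (𝔰 : Scheduler M) (U : Set S) :
    ∀ k hist s, M.hitProbAux 𝔰 U k hist s + missAux M 𝔰 U k hist s = 1 := by
  intro k
  induction k with
  | zero =>
    intro hist s
    by_cases h : s ∈ U <;> simp [MDP.hitProbAux, missAux, h]
  | succ k ih =>
    intro hist s
    by_cases h : s ∈ U
    · simp [MDP.hitProbAux, missAux, h]
    · simp only [MDP.hitProbAux, missAux, if_neg h]
      rw [← ENNReal.tsum_add]
      calc ∑' s', ((𝔰.choose hist s) s' * M.hitProbAux 𝔰 U k (hist ++ [s]) s'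
              + (𝔰.choose hist s) s' * missAux M 𝔰 U k (hist ++ [s]) s')
          = ∑' s', (𝔰.choose hist s) s' := by
            refine tsum_congr fun s' => ?_
            rw [← mul_add, ih (hist ++ [s]) s', mul_one]
        _ = 1 := (𝔰.choose hist s).tsum_coe

lemma miss_anti (M : MDP S) (𝔰 : Scheduler M) {U U' : Set S} (hU : U ⊆ U') :
    ∀ k hist s, missAux M 𝔰 U' k hist s ≤ missAux M 𝔰 U k hist s := by
  intro k
  induction k with
  | zero =>
    intro hist s
    by_cases h : s ∈ U
    · simp [missAux, h, hU h]
    · simp only [missAux, if_neg h]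
      split <;> simp
  | succ k ih =>
    intro hist s
    by_cases h : s ∈ U
    · simp [missAux, h, hU h]
    · simp only [missAux, if_neg h]
      split
      · exact zero_le
      · refine Summable.tsum_le_tsum (fun s' => ?_) ENNReal.summable ENNReal.summable
        exact mul_le_mul_right (ih (hist ++ [s]) s') _

/-- Union bound: visiting `T` ever is bounded by visiting `T` within `k` steps plus
avoiding `T ∪ {term}` for `k` steps. -/
lemma hit_le_hit_add_miss (M : MDP S) (𝔰 : Scheduler M) {T : Set S} {term : S}
    (hA : M.Absorbing term) (hT : term ∉ T) :
    ∀ k j hist s, M.hitProbAux 𝔰 T j hist s ≤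
      M.hitProbAux 𝔰 T k hist s + missAux M 𝔰 (T ∪ {term}) k hist s := by
  intro k
  induction k with
  | zero =>
    intro j hist s
    by_cases h1 : s ∈ T
    · have h : M.hitProbAux 𝔰 T 0 hist s = 1 := by simp [MDP.hitProbAux, h1]
      rw [h]
      exact le_add_right (hitAux_le_one M 𝔰 T j hist s)
    · by_cases h2 : s = term
      · subst h2
        rw [hitAux_term M 𝔰 hA hT j hist]
        exact zero_le
      · have hm : missAux M 𝔰 (T ∪ {term}) 0 hist s = 1 := by
          simp only [missAux]
          rw [if_neg (by simp [h1, h2])]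
        rw [hm]
        exact le_add_self.trans' (hitAux_le_one M 𝔰 T j hist s)
  | succ k ih =>
    intro j hist s
    by_cases h1 : s ∈ T
    · have h : M.hitProbAux 𝔰 T (k + 1) hist s = 1 := by simp [MDP.hitProbAux, h1]
      rw [h]
      exact le_add_right (hitAux_le_one M 𝔰 T j hist s)
    · by_cases h2 : s = term
      · subst h2
        rw [hitAux_term M 𝔰 hA hT j hist]
        exact zero_le
      · cases j with
        | zero =>
          have h : M.hitProbAux 𝔰 T 0 hist s = 0 := by simp [MDP.hitProbAux, h1]
          rw [h]
          exact zero_le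
        | succ j =>
          have hs : s ∉ T ∪ {term} := by simp [h1, h2]
          simp only [MDP.hitProbAux, missAux, if_neg h1, if_neg hs]
          rw [← ENNReal.tsum_add]
          refine Summable.tsum_le_tsum (fun s' => ?_) ENNReal.summable ENNReal.summable
          rw [← mul_add]
          exact mul_le_mul_right (ih j (hist ++ [s]) s') _

/-! ### States reachable within `k` steps -/

def reachIn (M : MDP S) : ℕ → S → Set S
  | 0, s => {s}
  | k + 1, s => {s} ∪ ⋃ μ ∈ (M.act s : Set (PMF S)), ⋃ s' ∈ (μ : PMF S).support, reachIn M k s'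

lemma reachIn_finite (M : MDP S) : ∀ k s, (reachIn M k s).Finite := by
  intro k
  induction k with
  | zero => intro s; exact Set.finite_singleton s
  | succ k ih =>
    intro s
    refine (Set.finite_singleton s).union ?_
    refine Set.Finite.biUnion (M.act s).finite_toSet fun μ hμ => ?_
    exact Set.Finite.biUnion (M.act_finSupp s μ (by exact_mod_cast hμ)) fun s' _ => ih s'

lemma self_mem_reachIn (M : MDP S) (k : ℕ) (s : S) : s ∈ reachIn M k s := by
  cases k with
  | zero => exact rfl
  | succ k => exact Or.inl rfl

lemma reachIn_step (M : MDP S) {k : ℕ} {s s' : S} {μ : PMF S} (hμ : μ ∈ M.act s)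
    (hs' : s' ∈ μ.support) : reachIn M k s' ⊆ reachIn M (k + 1) s := by
  intro x hx
  refine Or.inr ?_
  refine Set.mem_biUnion (by exact_mod_cast hμ) ?_
  exact Set.mem_biUnion hs' hx

lemma hitAux_eq_zero (M : MDP S) (𝔰 : Scheduler M) {T : Set S} :
    ∀ k hist s, (∀ x ∈ reachIn M k s, x ∉ T) → M.hitProbAux 𝔰 T k hist s = 0 := by
  intro k
  induction k with
  | zero =>
    intro hist s h
    simp only [MDP.hitProbAux]
    rw [if_neg (h s (self_mem_reachIn M 0 s))]
  | succ k ih =>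
    intro hist s h
    simp only [MDP.hitProbAux]
    rw [if_neg (h s (self_mem_reachIn M (k + 1) s))]
    refine ENNReal.tsum_eq_zero.mpr fun s' => ?_
    by_cases h0 : (𝔰.choose hist s) s' = 0
    · rw [h0, zero_mul]
    · have hsupp : s' ∈ (𝔰.choose hist s).support := PMF.mem_support_iff _ _ |>.mpr h0
      rw [ih (hist ++ [s]) s'
        (fun x hx => h x (reachIn_step M (𝔰.choose_mem hist s) hsupp hx)), mul_zero]

/-! ### Value iteration for minimal termination probability -/

noncomputable def Vit (M : MDP S) (term : S) : ℕ → S → ℝ≥0∞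
  | 0, s => if s = term then 1 else 0
  | k + 1, s =>
      if s = term then 1
      else ⨅ μ : (M.act s : Finset (PMF S)), ∑' s', (μ : PMF S) s' * Vit M term k s'

noncomputable def Vlim (M : MDP S) (term : S) (s : S) : ℝ≥0∞ := ⨆ k, Vit M term k s

lemma Vit_le_one (M : MDP S) (term : S) : ∀ k s, Vit M term k s ≤ 1 := by
  intro k
  induction k with
  | zero => intro s; simp only [Vit]; split <;> simp
  | succ k ih =>
    intro s
    simp only [Vit]
    split
    · exact le_refl 1
    · obtain ⟨μ, hμ⟩ := M.act_nonempty s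
      refine (iInf_le _ (⟨μ, hμ⟩ : (M.act s : Finset (PMF S)))).trans ?_
      calc ∑' s', μ s' * Vit M term k s' ≤ ∑' s', μ s' := by
            refine Summable.tsum_le_tsum (fun s' => ?_) ENNReal.summable ENNReal.summable
            simpa using mul_le_mul_right (ih s') (μ s')
        _ = 1 := μ.tsum_coe

lemma Vit_succ_le (M : MDP S) (term : S) : ∀ k s, Vit M term k s ≤ Vit M term (k + 1) s := by
  intro k
  induction k with
  | zero =>
    intro s
    simp only [Vit]
    split
    · exact le_refl 1
    · exact zero_le
  | succ k ih =>
    intro s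
    simp only [Vit]
    split
    · exact le_refl 1
    · refine le_iInf fun μ => (iInf_le _ μ).trans ?_
      refine Summable.tsum_le_tsum (fun s' => ?_) ENNReal.summable ENNReal.summable
      exact mul_le_mul_right (ih s') _

lemma Vit_mono (M : MDP S) (term : S) (s : S) : Monotone fun k => Vit M term k s :=
  monotone_nat_of_le_succ fun k => Vit_succ_le M term k s

lemma Vlim_le_one (M : MDP S) (term : S) (s : S) : Vlim M term s ≤ 1 :=
  iSup_le fun k => Vit_le_one M term k s

lemma Vlim_term (M : MDP S) (term : S) : Vlim M term term = 1 :=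
  le_antisymm (Vlim_le_one M term term)
    (le_iSup_of_le 0 (by simp [Vit]))

lemma Vit_le_hitAux (M : MDP S) (term : S) (𝔰 : Scheduler M) :
    ∀ k hist s, Vit M term k s ≤ M.hitProbAux 𝔰 {term} k hist s := by
  intro k
  induction k with
  | zero =>
    intro hist s
    by_cases h : s = term <;> simp [Vit, MDP.hitProbAux, h]
  | succ k ih =>
    intro hist s
    by_cases h : s = term
    · simp [Vit, MDP.hitProbAux, h]
    · simp only [Vit, MDP.hitProbAux, if_neg h,
        if_neg (show s ∉ ({term} : Set S) from h)]
      refine (iInf_le _ (⟨𝔰.choose hist s, 𝔰.choose_mem hist s⟩ :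
        (M.act s : Finset (PMF S)))).trans ?_
      refine Summable.tsum_le_tsum (fun s' => ?_) ENNReal.summable ENNReal.summable
      exact mul_le_mul_right (ih (hist ++ [s]) s') _

/-! ### A minimax swap for finitely many monotone sequences -/

lemma iInf_iSup_le_of_monotone {ι : Type} [Fintype ι] [Nonempty ι] (g : ι → ℕ → ℝ≥0∞)
    (hg : ∀ i, Monotone (g i)) : (⨅ i, ⨆ k, g i k) ≤ ⨆ k, ⨅ i, g i k := by
  refine le_of_forall_lt fun c hc => ?_
  have h1 : ∀ i, ∃ k, c < g i k := fun i => lt_iSup_iff.mp (hc.trans_le (iInf_le _ i))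
  choose kk hkk using h1
  set K := Finset.univ.sup kk with hK
  have h2 : ∀ i, c < g i K := fun i =>
    (hkk i).trans_le (hg i (Finset.le_sup (Finset.mem_univ i)))
  obtain ⟨i0, hi0⟩ := Finite.exists_min fun i => g i K
  have heq : (⨅ i, g i K) = g i0 K := le_antisymm (iInf_le _ i0) (le_iInf hi0)
  exact lt_of_lt_of_le (heq ▸ h2 i0) (le_iSup _ K)

/-- Monotone convergence for finitely supported PMFs. -/
lemma tsum_mul_iSup (μ : PMF S) (hfin : μ.support.Finite) (f : ℕ → S → ℝ≥0∞)
    (hf : ∀ s, Monotone fun k => f k s) :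
    ∑' s, μ s * ⨆ k, f k s = ⨆ k, ∑' s, μ s * f k s := by
  have hzero : ∀ g : S → ℝ≥0∞, ∀ b ∉ hfin.toFinset, μ b * g b = 0 := by
    intro g b hb
    have hb' : b ∉ μ.support := by simpa using hb
    rw [PMF.mem_support_iff, not_not] at hb'
    rw [hb', zero_mul]
  have hk : ∀ k, ∑' s, μ s * f k s = ∑ s ∈ hfin.toFinset, μ s * f k s :=
    fun k => tsum_eq_sum (hzero _)
  rw [tsum_eq_sum (hzero _)]
  calc ∑ s ∈ hfin.toFinset, μ s * ⨆ k, f k s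
      = ∑ s ∈ hfin.toFinset, ⨆ k, μ s * f k s := by
        refine Finset.sum_congr rfl fun s _ => ?_
        exact ENNReal.mul_iSup (μ s) fun k => f k s
    _ = ⨆ k, ∑ s ∈ hfin.toFinset, μ s * f k s :=
        ENNReal.finsetSum_iSup_of_monotone fun s a b hab => mul_le_mul_right (hf s hab) _
    _ = ⨆ k, ∑' s, μ s * f k s := iSup_congr fun k => (hk k).symm

lemma inf_step_le_Vlim (M : MDP S) (term : S) (s : S) (hs : s ≠ term) :
    (⨅ μ : (M.act s : Finset (PMF S)), ∑' s', (μ : PMF S) s' * Vlim M term s')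
      ≤ Vlim M term s := by
  haveI : Nonempty (M.act s : Finset (PMF S)) := by
    obtain ⟨μ, hμ⟩ := M.act_nonempty s
    exact ⟨⟨μ, hμ⟩⟩
  have heq : ∀ μ : (M.act s : Finset (PMF S)),
      ∑' s', (μ : PMF S) s' * Vlim M term s'
        = ⨆ k, ∑' s', (μ : PMF S) s' * Vit M term k s' := fun μ =>
    tsum_mul_iSup (μ : PMF S) (M.act_finSupp s μ μ.2) _ (fun s' => Vit_mono M term s')
  calc (⨅ μ : (M.act s : Finset (PMF S)), ∑' s', (μ : PMF S) s' * Vlim M term s')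
      = ⨅ μ : (M.act s : Finset (PMF S)), ⨆ k, ∑' s', (μ : PMF S) s' * Vit M term k s' :=
        iInf_congr heq
    _ ≤ ⨆ k, ⨅ μ : (M.act s : Finset (PMF S)), ∑' s', (μ : PMF S) s' * Vit M term k s' := by
        refine iInf_iSup_le_of_monotone _ fun μ a b hab => ?_
        refine Summable.tsum_le_tsum (fun s' => ?_) ENNReal.summable ENNReal.summable
        exact mul_le_mul_right (Vit_mono M term s' hab) _
    _ ≤ Vlim M term s := by
        refine iSup_le fun k => ?_
        have h : (⨅ μ : (M.act s : Finset (PMF S)), ∑' s', (μ : PMF S) s' * Vit M term k s')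
            = Vit M term (k + 1) s := by
          simp only [Vit, if_neg hs]
        rw [h]
        exact le_iSup (fun k => Vit M term k s) (k + 1)

lemma Vlim_le_step (M : MDP S) (term : S) {s : S} {μ : PMF S} (hs : s ≠ term)
    (hμ : μ ∈ M.act s) : Vlim M term s ≤ ∑' s', μ s' * Vlim M term s' := by
  refine iSup_le fun k => ?_
  cases k with
  | zero =>
    simp only [Vit, if_neg hs]
    exact zero_le
  | succ k =>
    simp only [Vit, if_neg hs]
    refine (iInf_le _ (⟨μ, hμ⟩ : (M.act s : Finset (PMF S)))).trans ?_
    refine Summable.tsum_le_tsum (fun s' => ?_) ENNReal.summable ENNReal.summable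
    exact mul_le_mul_right (le_iSup (fun k => Vit M term k s') k) _

/-! ### The greedy scheduler -/

noncomputable def gp (M : MDP S) (term : S) (s : S) : PMF S :=
  (Finset.exists_min_image (M.act s) (fun μ => ∑' s', μ s' * Vlim M term s')
    (M.act_nonempty s)).choose

lemma gp_mem (M : MDP S) (term : S) (s : S) : gp M term s ∈ M.act s :=
  (Finset.exists_min_image (M.act s) (fun μ => ∑' s', μ s' * Vlim M term s')
    (M.act_nonempty s)).choose_spec.1

lemma gp_min (M : MDP S) (term : S) (s : S) :
    ∀ μ ∈ M.act s, ∑' s', gp M term s s' * Vlim M term s' ≤ ∑' s', μ s' * Vlim M term s' :=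
  (Finset.exists_min_image (M.act s) (fun μ => ∑' s', μ s' * Vlim M term s')
    (M.act_nonempty s)).choose_spec.2

noncomputable def greedy (M : MDP S) (term : S) : Scheduler M :=
  ⟨fun _ s => gp M term s, fun _ s => gp_mem M term s⟩

lemma hitAux_greedy_le_Vlim (M : MDP S) (term : S) :
    ∀ k hist s, M.hitProbAux (greedy M term) {term} k hist s ≤ Vlim M term s := by
  intro k
  induction k with
  | zero =>
    intro hist s
    by_cases h : s = term
    · simp only [MDP.hitProbAux]
      rw [if_pos (show s ∈ ({term} : Set S) from h), h, Vlim_term]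
    · simp only [MDP.hitProbAux]
      rw [if_neg (show s ∉ ({term} : Set S) from h)]
      exact zero_le
  | succ k ih =>
    intro hist s
    by_cases h : s = term
    · simp only [MDP.hitProbAux]
      rw [if_pos (show s ∈ ({term} : Set S) from h), h, Vlim_term]
    · simp only [MDP.hitProbAux]
      rw [if_neg (show s ∉ ({term} : Set S) from h)]
      have hch : (greedy M term).choose hist s = gp M term s := rfl
      rw [hch]
      calc ∑' s', gp M term s s' * M.hitProbAux (greedy M term) {term} k (hist ++ [s]) s'
          ≤ ∑' s', gp M term s s' * Vlim M term s' := by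
            refine Summable.tsum_le_tsum (fun s' => ?_) ENNReal.summable ENNReal.summable
            exact mul_le_mul_right (ih (hist ++ [s]) s') _
        _ ≤ ⨅ μ : (M.act s : Finset (PMF S)), ∑' s', (μ : PMF S) s' * Vlim M term s' :=
            le_iInf fun μ => gp_min M term s μ μ.2
        _ ≤ Vlim M term s := inf_step_le_Vlim M term s h

lemma Vlim_eq_one_of_AST (M : MDP S) (term σ : S) (hAST : M.AST term σ) :
    Vlim M term σ = 1 := by
  refine le_antisymm (Vlim_le_one M term σ) ?_
  have h1 : M.PrTerm term σ = 1 := hAST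
  simp only [MDP.PrTerm] at h1
  calc (1 : ℝ≥0∞) = ⨅ 𝔰 : Scheduler M, M.hitProb 𝔰 σ {term} := h1.symm
    _ ≤ M.hitProb (greedy M term) σ {term} := iInf_le _ _
    _ ≤ Vlim M term σ := by
        simp only [MDP.hitProb, MDP.hitProbWithin]
        exact iSup_le fun k => hitAux_greedy_le_Vlim M term k [] σ

lemma Vlim_eq_one_reach (M : MDP S) (term σ : S) (hterm : M.Absorbing term)
    (hAST : M.AST term σ) : ∀ s, M.Reach σ s → Vlim M term s = 1 := by
  intro s h
  induction h with
  | refl => exact Vlim_eq_one_of_AST M term σ hAST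
  | @step s1 s2 μ hr hμ hsupp ih =>
    by_cases hs : s1 = term
    · have hact : M.act s1 = {PMF.pure term} := by rw [hs]; exact hterm
      rw [hact, Finset.mem_singleton] at hμ
      subst hμ
      rw [PMF.support_pure, Set.mem_singleton_iff] at hsupp
      rw [hsupp]
      exact Vlim_term M term
    · refine le_antisymm (Vlim_le_one M term s2) (le_of_not_gt fun hlt => ?_)
      have h0 : μ s2 ≠ 0 := PMF.mem_support_iff μ s2 |>.mp hsupp
      have h1 : (1 : ℝ≥0∞) ≤ ∑' x, μ x * Vlim M term x := by
        rw [← ih]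
        exact Vlim_le_step M term hs hμ
      have hle : ∀ x, μ x * Vlim M term x ≤ μ x * 1 :=
        fun x => mul_le_mul_right (Vlim_le_one M term x) _
      have hne : ∑' x, μ x * Vlim M term x ≠ ⊤ := by
        refine ne_top_of_le_ne_top (by simp : (1 : ℝ≥0∞) ≠ ⊤) ?_
        calc ∑' x, μ x * Vlim M term x ≤ ∑' x, μ x * 1 :=
              Summable.tsum_le_tsum hle ENNReal.summable ENNReal.summable
          _ = 1 := by simpa using μ.tsum_coe
      have h2 : ∑' x, μ x * Vlim M term x < ∑' x, μ x * 1 :=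
        ENNReal.tsum_lt_tsum hne hle
          (ENNReal.mul_lt_mul_right h0 (PMF.apply_ne_top μ s2) hlt)
      have h3 : ∑' x, μ x * (1 : ℝ≥0∞) = 1 := by simpa using μ.tsum_coe
      rw [h3] at h2
      exact absurd (h1.trans_lt h2) (lt_irrefl 1)

lemma miss_term_small (M : MDP S) (term σ : S) (hterm : M.Absorbing term)
    (hAST : M.AST term σ) {s : S} (hs : M.Reach σ s) {ε : ℝ≥0∞} (hε : 0 < ε) :
    ∃ k, ∀ (𝔰 : Scheduler M) hist, missAux M 𝔰 {term} k hist s ≤ ε := by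
  have hV : Vlim M term s = 1 := Vlim_eq_one_reach M term σ hterm hAST s hs
  have hk : ∃ k, (1 : ℝ≥0∞) ≤ Vit M term k s + ε := by
    by_cases hε1 : 1 ≤ ε
    · exact ⟨0, le_add_left hε1⟩
    · push_neg at hε1
      have hlt : (1 : ℝ≥0∞) - ε < 1 := ENNReal.sub_lt_self (by simp) one_ne_zero hε.ne'
      have hV' : (1 : ℝ≥0∞) - ε < ⨆ k, Vit M term k s := by
        rw [show (⨆ k, Vit M term k s) = 1 from hV]
        exact hlt
      obtain ⟨k, hk⟩ := lt_iSup_iff.mp hV'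
      refine ⟨k, ?_⟩
      calc (1 : ℝ≥0∞) = (1 - ε) + ε := (tsub_add_cancel_of_le hε1.le).symm
        _ ≤ Vit M term k s + ε := add_le_add_left hk.le ε
  obtain ⟨k, hk⟩ := hk
  refine ⟨k, fun 𝔰 hist => ?_⟩
  have hhit : Vit M term k s ≤ M.hitProbAux 𝔰 {term} k hist s :=
    Vit_le_hitAux M term 𝔰 k hist s
  have hsum : M.hitProbAux 𝔰 {term} k hist s + missAux M 𝔰 {term} k hist s = 1 :=
    hit_add_miss M 𝔰 {term} k hist s
  have hmeq : missAux M 𝔰 {term} k hist s = 1 - M.hitProbAux 𝔰 {term} k hist s :=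
    ENNReal.eq_sub_of_add_eq
      (ne_top_of_le_ne_top (by simp) (hitAux_le_one M 𝔰 {term} k hist s))
      (by rw [add_comm]; exact hsum)
  rw [hmeq, tsub_le_iff_right]
  calc (1 : ℝ≥0∞) ≤ Vit M term k s + ε := hk
    _ ≤ M.hitProbAux 𝔰 {term} k hist s + ε := add_le_add_left hhit ε
    _ = ε + M.hitProbAux 𝔰 {term} k hist s := add_comm _ _

end Aux

/-- Let `M` be almost surely terminating from `σ` with infinitely many reachable states, and
let `e : ℕ → S` enumerate the reachable states bijectively with `e 0` the terminal state.
Define `R i n` as the supremum over schedulers of the probability that a run started at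
`e i` visits some state `e m` with `m ≥ n`.  Then `R i n → 0` as `n → ∞`, for every `i`. -/
theorem reach_far_tendsto_zero {S : Type} [Countable S] (M : MDP S) (term σ : S)
    (hterm : M.Absorbing term) (hAST : M.AST term σ)
    (hinf : {s | M.Reach σ s}.Infinite)
    (e : ℕ → S) (he_mem : ∀ n, M.Reach σ (e n)) (he_inj : Function.Injective e)
    (he_surj : ∀ s, M.Reach σ s → ∃ n, e n = s) (he0 : e 0 = term) :
    ∀ i : ℕ, Filter.Tendsto
      (fun n => ⨆ 𝔰 : Scheduler M, M.hitProb 𝔰 (e i) {s | ∃ m, n ≤ m ∧ e m = s})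
      Filter.atTop (nhds 0) := by
  intro i
  rw [ENNReal.tendsto_atTop_zero]
  intro ε hε
  obtain ⟨k, hk⟩ := miss_term_small M term σ hterm hAST (he_mem i) hε
  have hIfin : (e ⁻¹' reachIn M k (e i)).Finite :=
    Set.Finite.preimage he_inj.injOn (reachIn_finite M k (e i))
  obtain ⟨N, hN⟩ := hIfin.bddAbove
  refine ⟨max (N + 1) 1, fun n hn => ?_⟩
  have hn1 : 1 ≤ n := le_trans (le_max_right _ _) hn
  have hnN : N + 1 ≤ n := le_trans (le_max_left _ _) hn
  set T : Set S := {s | ∃ m, n ≤ m ∧ e m = s} with hT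
  have hTterm : term ∉ T := by
    rintro ⟨m, hm, hem⟩
    have hm0 : m = 0 := he_inj (hem.trans he0.symm)
    omega
  have hdisj : ∀ x ∈ reachIn M k (e i), x ∉ T := by
    rintro x hx ⟨m, hm, hem⟩
    have hmI : m ∈ e ⁻¹' reachIn M k (e i) := by
      rw [Set.mem_preimage, hem]; exact hx
    have hmN : m ≤ N := hN hmI
    omega
  refine iSup_le fun 𝔰 => ?_
  simp only [MDP.hitProb, MDP.hitProbWithin]
  refine iSup_le fun j => ?_
  calc M.hitProbAux 𝔰 T j [] (e i)
      ≤ M.hitProbAux 𝔰 T k [] (e i) + missAux M 𝔰 (T ∪ {term}) k [] (e i) :=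
        hit_le_hit_add_miss M 𝔰 hterm hTterm k j [] (e i)
    _ = missAux M 𝔰 (T ∪ {term}) k [] (e i) := by
        rw [hitAux_eq_zero M 𝔰 k [] (e i) hdisj, zero_add]
    _ ≤ missAux M 𝔰 {term} k [] (e i) :=
        miss_anti M 𝔰 Set.subset_union_right k [] (e i)
    _ ≤ ε := hk 𝔰 []
end

section
/- Diagonal supermartingale construction: Let M be a finitely-branching MDP with absorbing terminal state ⊥ that is almost surely terminating from σ, suppose Reach(σ) is infinite, and let e : ℕ → Reach(σ) be a bijection with e(0) = ⊥. For i, n ∈ ℕ let R(i, n) be the supremum over all schedulers 𝔰 of ℙ_{𝔰,e(i)}(the run visits some state e(m) with m ≥ n). Then there exists a strictly increasing sequence (n_j)_{j∈ℕ} of positive integers with R(i, n_j) ≤ 2^{−j} for all i ≤ j; and for any such sequence, the function V : Reach(σ) → ℝ given by V(s) = Σ_{j∈ℕ} R(e⁻¹(s), n_j) is well defined (the series converges for every s), satisfies V(⊥) = 0, is a supermartingale function on Reach(σ), and every sublevel set {s ∈ Reach(σ) : V(s) ≤ r} with r ∈ ℝ is finite. -/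
open scoped ENNReal Classical

/-- `R i n`: the supremum over schedulers of the probability that a run started at `e i`
visits some state `e m` with `m ≥ n`. -/
noncomputable def MDP.supReachFar {S : Type} (M : MDP S) (e : ℕ → S) (i n : ℕ) : ℝ≥0∞ :=
  ⨆ 𝔰 : Scheduler M, M.hitProb 𝔰 (e i) {s | ∃ m, n ≤ m ∧ e m = s}

section Helpers

open scoped ENNReal

namespace MDP

variable {S : Type} (M : MDP S)

/-- A default scheduler, choosing arbitrarily. -/
noncomputable def defaultSched : Scheduler M :=
  ⟨fun _ s => (M.act_nonempty s).choose, fun _ s => (M.act_nonempty s).choose_spec⟩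

instance : Nonempty (Scheduler M) := ⟨M.defaultSched⟩

variable {M}

lemma aux_of_mem {𝔰 : Scheduler M} {T : Set S} {k : ℕ} {hist : List S} {s : S}
    (h : s ∈ T) : hitProbAux M 𝔰 T k hist s = 1 := by
  cases k <;> simp [hitProbAux, h]

lemma aux_le_one (𝔰 : Scheduler M) (T : Set S) :
    ∀ (k : ℕ) (hist : List S) (s : S), hitProbAux M 𝔰 T k hist s ≤ 1
  | 0, hist, s => by unfold hitProbAux; split <;> simp
  | (k+1), hist, s => by
      unfold hitProbAux
      split
      · exact le_rfl
      · calc ∑' s', (𝔰.choose hist s) s' * hitProbAux M 𝔰 T k (hist ++ [s]) s'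
            ≤ ∑' s', (𝔰.choose hist s) s' * 1 :=
              ENNReal.tsum_le_tsum fun s' => mul_le_mul_right (aux_le_one 𝔰 T k _ s') _
        _ = 1 := by simp [PMF.tsum_coe]

lemma aux_mono_succ (𝔰 : Scheduler M) (T : Set S) :
    ∀ (k : ℕ) (hist : List S) (s : S),
      hitProbAux M 𝔰 T k hist s ≤ hitProbAux M 𝔰 T (k+1) hist s
  | 0, hist, s => by
      by_cases h : s ∈ T
      · rw [aux_of_mem h, aux_of_mem h]
      · unfold hitProbAux; rw [if_neg h]; exact zero_le
  | (k+1), hist, s => by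
      by_cases h : s ∈ T
      · rw [aux_of_mem h, aux_of_mem h]
      · show hitProbAux M 𝔰 T (k+1) hist s ≤ hitProbAux M 𝔰 T (k+2) hist s
        unfold hitProbAux
        rw [if_neg h, if_neg h]
        exact ENNReal.tsum_le_tsum fun s' =>
          mul_le_mul_right (aux_mono_succ 𝔰 T k _ s') _

lemma aux_mono (𝔰 : Scheduler M) (T : Set S) (hist : List S) (s : S) :
    Monotone (fun k => hitProbAux M 𝔰 T k hist s) :=
  monotone_nat_of_le_succ fun k => aux_mono_succ 𝔰 T k hist s

lemma within_mono (𝔰 : Scheduler M) (s : S) (T : Set S) :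
    Monotone (hitProbWithin M 𝔰 s T) :=
  aux_mono 𝔰 T [] s

lemma within_le_one (𝔰 : Scheduler M) (s : S) (T : Set S) (k : ℕ) :
    hitProbWithin M 𝔰 s T k ≤ 1 :=
  aux_le_one 𝔰 T k [] s

lemma hitProb_le_one (𝔰 : Scheduler M) (s : S) (T : Set S) : hitProb M 𝔰 s T ≤ 1 :=
  iSup_le fun k => within_le_one 𝔰 s T k

lemma hitProb_of_mem (𝔰 : Scheduler M) {s : S} {T : Set S} (h : s ∈ T) :
    hitProb M 𝔰 s T = 1 :=
  le_antisymm (hitProb_le_one 𝔰 s T)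
    (le_trans (le_of_eq (aux_of_mem (k := 0) (hist := []) h).symm)
      (le_iSup (fun k => hitProbWithin M 𝔰 s T k) 0))

/-- Shifting a scheduler by a fixed prefix of the history. -/
def _root_.Scheduler.shift (𝔰 : Scheduler M) (pre : List S) : Scheduler M :=
  ⟨fun h s => 𝔰.choose (pre ++ h) s, fun h s => 𝔰.choose_mem _ s⟩

lemma aux_shift (𝔰 : Scheduler M) (T : Set S) (pre : List S) :
    ∀ (k : ℕ) (hist : List S) (s : S),
      hitProbAux M 𝔰 T k (pre ++ hist) s = hitProbAux M (𝔰.shift pre) T k hist s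
  | 0, _, _ => rfl
  | (k+1), hist, s => by
      unfold hitProbAux
      split
      · rfl
      · refine tsum_congr fun s' => ?_
        have h1 : (𝔰.shift pre).choose hist s = 𝔰.choose (pre ++ hist) s := rfl
        rw [h1]
        congr 1
        rw [List.append_assoc]
        exact aux_shift 𝔰 T pre k (hist ++ [s]) s'

lemma aux_eq_within (𝔰 : Scheduler M) (T : Set S) (k : ℕ) (hist : List S) (s : S) :
    hitProbAux M 𝔰 T k hist s = hitProbWithin M (𝔰.shift hist) s T k := by
  have := aux_shift 𝔰 T hist k [] s
  rwa [List.append_nil] at this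

lemma aux_term {term : S} (hterm : M.Absorbing term) {T : Set S} (hT : term ∉ T)
    (𝔰 : Scheduler M) : ∀ (k : ℕ) (hist : List S), hitProbAux M 𝔰 T k hist term = 0
  | 0, hist => by unfold hitProbAux; rw [if_neg hT]
  | (k+1), hist => by
      have hμ : 𝔰.choose hist term = PMF.pure term := by
        have h := 𝔰.choose_mem hist term
        rw [hterm] at h
        simpa using h
      unfold hitProbAux
      rw [if_neg hT, hμ]
      rw [tsum_eq_single term (fun b hb => by simp [PMF.pure_apply, hb])]
      simp [PMF.pure_apply, aux_term hterm hT 𝔰 k (hist ++ [term])]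

lemma hitProb_term {term : S} (hterm : M.Absorbing term) {T : Set S} (hT : term ∉ T)
    (𝔰 : Scheduler M) : hitProb M 𝔰 term T = 0 := by
  have : ∀ k, hitProbWithin M 𝔰 term T k = 0 := fun k => aux_term hterm hT 𝔰 k []
  simp [hitProb, this]

end MDP

end Helpers
section Helpers2

open scoped ENNReal

namespace MDP

variable {S : Type} {M : MDP S}

lemma finsetSum_iSup {α : Type*} (F : Finset α) (f : α → ℕ → ℝ≥0∞)
    (hf : ∀ a, Monotone (f a)) :
    ∑ a ∈ F, (⨆ k, f a k) = ⨆ k, ∑ a ∈ F, f a k := by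
  classical
  induction F using Finset.induction_on with
  | empty => simp
  | insert a F ha ih =>
    rw [Finset.sum_insert ha, ih]
    rw [ENNReal.iSup_add_iSup]
    · exact iSup_congr fun k => by rw [Finset.sum_insert ha]
    · intro i j
      exact ⟨max i j, add_le_add (hf a (le_max_left i j))
        (Finset.sum_le_sum fun b _ => hf b (le_max_right i j))⟩

lemma tsum_mul_iSup (μ : PMF S) (hfin : μ.support.Finite) (g : S → ℕ → ℝ≥0∞)
    (hg : ∀ a, Monotone (g a)) :
    ∑' s, μ s * (⨆ k, g s k) = ⨆ k, ∑' s, μ s * g s k := by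
  have hzero : ∀ (h : S → ℝ≥0∞) (b : S), b ∉ hfin.toFinset → μ b * h b = 0 := by
    intro h b hb
    have : μ b = 0 := by simpa [PMF.mem_support_iff] using hb
    simp [this]
  rw [tsum_eq_sum (hzero _)]
  have : ∀ k, ∑' s, μ s * g s k = ∑ s ∈ hfin.toFinset, μ s * g s k := fun k =>
    tsum_eq_sum (hzero _)
  simp_rw [this]
  calc ∑ b ∈ hfin.toFinset, μ b * (⨆ k, g b k)
      = ∑ b ∈ hfin.toFinset, ⨆ k, μ b * g b k :=
        Finset.sum_congr rfl fun b _ => ENNReal.mul_iSup (μ b) (g b)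
    _ = ⨆ k, ∑ s ∈ hfin.toFinset, μ s * g s k :=
        finsetSum_iSup _ _ (fun a i j hij => mul_le_mul_right (hg a hij) _)

lemma tsum_mul_hitProb (μ : PMF S) (hfin : μ.support.Finite) (f : S → Scheduler M)
    (T : Set S) :
    ∑' s, μ s * hitProb M (f s) s T = ⨆ k, ∑' s, μ s * hitProbWithin M (f s) s T k :=
  tsum_mul_iSup μ hfin _ (fun a => within_mono (f a) a T)

/-- Combined scheduler: at `s` with empty history choose `μ`, afterwards delegate to
`f s'` where `s'` is the first state after `s`. -/
noncomputable def combineChoose (M : MDP S) (s : S) (μ : PMF S) (f : S → Scheduler M) :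
    List S → S → PMF S
  | [], t => if t = s then μ else (M.defaultSched).choose [] t
  | _ :: h, t => (f (h.headD t)).choose h t

noncomputable def combine (M : MDP S) (s : S) (μ : PMF S) (hμ : μ ∈ M.act s)
    (f : S → Scheduler M) : Scheduler M :=
  ⟨combineChoose M s μ f, by
    intro hist t
    cases hist with
    | nil =>
      show (if t = s then μ else (M.defaultSched).choose [] t) ∈ M.act t
      split
      · next h => subst h; exact hμ
      · exact (M.defaultSched).choose_mem [] t
    | cons a h => exact (f (h.headD t)).choose_mem h t⟩

lemma combine_aux (s : S) (μ : PMF S) (hμ : μ ∈ M.act s) (f : S → Scheduler M)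
    (T : Set S) :
    ∀ (k : ℕ) (h : List S) (t s₀ : S),
      hitProbAux M (combine M s μ hμ f) T k (s₀ :: h) t =
        hitProbAux M (f (h.headD t)) T k h t
  | 0, _, _, _ => rfl
  | (k+1), h, t, s₀ => by
      unfold hitProbAux
      split
      · rfl
      · refine tsum_congr fun s' => ?_
        have h1 : (combine M s μ hμ f).choose (s₀ :: h) t = (f (h.headD t)).choose h t := rfl
        rw [h1]
        congr 1
        have h2 : (s₀ :: h) ++ [t] = s₀ :: (h ++ [t]) := rfl
        rw [h2, combine_aux s μ hμ f T k (h ++ [t]) s' s₀]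
        congr 2
        cases h <;> rfl

lemma combine_within (s : S) (μ : PMF S) (hμ : μ ∈ M.act s) (f : S → Scheduler M)
    {T : Set S} (hs : s ∉ T) (k : ℕ) :
    hitProbWithin M (combine M s μ hμ f) s T (k+1) =
      ∑' s', μ s' * hitProbWithin M (f s') s' T k := by
  show hitProbAux M (combine M s μ hμ f) T (k+1) [] s = _
  unfold hitProbAux
  rw [if_neg hs]
  refine tsum_congr fun s' => ?_
  have h1 : (combine M s μ hμ f).choose [] s = μ := by
    show (if s = s then μ else _) = μ
    rw [if_pos rfl]
  rw [h1]
  congr 1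
  have h2 : ([] : List S) ++ [s] = [s] := rfl
  rw [h2, combine_aux s μ hμ f T k [] s' s]
  rfl

lemma sum_mul_iSup_le {α ι : Type*} [Nonempty ι] (F : Finset α) (w : α → ℝ≥0∞)
    (h : α → ι → ℝ≥0∞) :
    ∑ a ∈ F, w a * (⨆ i, h a i) ≤ ⨆ g : α → ι, ∑ a ∈ F, w a * h a (g a) := by
  classical
  induction F using Finset.induction_on with
  | empty => simp
  | insert a F ha ih =>
    rw [Finset.sum_insert ha, ENNReal.mul_iSup]
    calc (⨆ i, w a * h a i) + ∑ b ∈ F, w b * (⨆ i, h b i)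
        ≤ (⨆ i, w a * h a i) + ⨆ g : α → ι, ∑ b ∈ F, w b * h b (g b) :=
          add_le_add_right ih _
      _ = ⨆ i, ⨆ g : α → ι, (w a * h a i + ∑ b ∈ F, w b * h b (g b)) := by
          rw [ENNReal.iSup_add]
          exact iSup_congr fun i => ENNReal.add_iSup _
      _ ≤ ⨆ g : α → ι, ∑ b ∈ insert a F, w b * h b (g b) := by
          refine iSup_le fun i => iSup_le fun g => ?_
          refine le_iSup_of_le (Function.update g a i) ?_
          rw [Finset.sum_insert ha, Function.update_self]
          refine add_le_add_right (le_of_eq ?_) _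
          exact Finset.sum_congr rfl fun b hb => by
            rw [Function.update_of_ne (by rintro rfl; exact ha hb)]

/-- Bellman inequality for the optimal (supremal) hitting probability. -/
lemma bellman_sup (s : S) (μ : PMF S) (hμ : μ ∈ M.act s) (T : Set S) :
    ∑' s', μ s' * (⨆ 𝔰 : Scheduler M, hitProb M 𝔰 s' T) ≤
      ⨆ 𝔰 : Scheduler M, hitProb M 𝔰 s T := by
  by_cases hs : s ∈ T
  · calc ∑' s', μ s' * (⨆ 𝔰 : Scheduler M, hitProb M 𝔰 s' T)
        ≤ ∑' s', μ s' * 1 :=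
          ENNReal.tsum_le_tsum fun s' => mul_le_mul_right
            (iSup_le fun 𝔰 => hitProb_le_one 𝔰 s' T) _
      _ = 1 := by simp [PMF.tsum_coe]
      _ = hitProb M (M.defaultSched) s T := (hitProb_of_mem _ hs).symm
      _ ≤ _ := le_iSup (fun 𝔰 : Scheduler M => hitProb M 𝔰 s T) _
  · have hfin := M.act_finSupp s μ hμ
    have hzero : ∀ b, b ∉ hfin.toFinset →
        μ b * (⨆ 𝔰 : Scheduler M, hitProb M 𝔰 b T) = 0 := by
      intro b hb
      have : μ b = 0 := by simpa [PMF.mem_support_iff] using hb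
      simp [this]
    rw [tsum_eq_sum hzero]
    calc ∑ s' ∈ hfin.toFinset, μ s' * (⨆ 𝔰 : Scheduler M, hitProb M 𝔰 s' T)
        ≤ ⨆ g : S → Scheduler M, ∑ s' ∈ hfin.toFinset, μ s' * hitProb M (g s') s' T :=
          sum_mul_iSup_le _ _ _
      _ ≤ ⨆ 𝔰 : Scheduler M, hitProb M 𝔰 s T := by
          refine iSup_le fun g => ?_
          calc ∑ s' ∈ hfin.toFinset, μ s' * hitProb M (g s') s' T
              ≤ ∑' s', μ s' * hitProb M (g s') s' T := ENNReal.sum_le_tsum _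
            _ = ⨆ k, ∑' s', μ s' * hitProbWithin M (g s') s' T k :=
                tsum_mul_hitProb μ hfin g T
            _ = ⨆ k, hitProbWithin M (combine M s μ hμ g) s T (k+1) :=
                iSup_congr fun k => (combine_within s μ hμ g hs k).symm
            _ ≤ hitProb M (combine M s μ hμ g) s T :=
                iSup_le fun k => le_iSup (fun k => hitProbWithin M (combine M s μ hμ g) s T k) (k+1)
            _ ≤ _ := le_iSup (fun 𝔰 : Scheduler M => hitProb M 𝔰 s T) _

end MDP

end Helpers2
section Helpers3

open scoped ENNReal

namespace MDP

variable {S : Type} {M : MDP S}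

/-- Worst-case probability of terminating within `k` steps. -/
noncomputable def termProbK (M : MDP S) (term : S) (k : ℕ) (s : S) : ℝ≥0∞ :=
  ⨅ 𝔰 : Scheduler M, hitProbWithin M 𝔰 s {term} k

/-- Worst-case probability of eventually terminating (via the `k`-step limits). -/
noncomputable def termProb (M : MDP S) (term : S) (s : S) : ℝ≥0∞ :=
  ⨆ k, termProbK M term k s

lemma termProbK_mono (term : S) (s : S) : Monotone (fun k => termProbK M term k s) :=
  fun _ _ hk => iInf_mono fun 𝔰 => within_mono 𝔰 s {term} hk

lemma termProbK_le_one (term : S) (k : ℕ) (s : S) : termProbK M term k s ≤ 1 :=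
  le_trans (iInf_le _ M.defaultSched) (within_le_one _ _ _ _)

lemma termProb_le_one (term : S) (s : S) : termProb M term s ≤ 1 :=
  iSup_le fun k => termProbK_le_one term k s

lemma termProbK_term (term : S) (k : ℕ) : termProbK M term k term = 1 := by
  have : ∀ 𝔰 : Scheduler M, hitProbWithin M 𝔰 term {term} k = 1 := fun 𝔰 =>
    aux_of_mem rfl
  simp [termProbK, this]

lemma termProb_term (term : S) : termProb M term term = 1 := by
  have : ∀ k, termProbK M term k term = 1 := termProbK_term term
  simp [termProb, this]

lemma within_ge_termProbK (term : S) (𝔰 : Scheduler M) {s : S} (hs : s ≠ term)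
    (k : ℕ) :
    ∑' s', (𝔰.choose [] s) s' * termProbK M term k s' ≤
      hitProbWithin M 𝔰 s {term} (k+1) := by
  show _ ≤ hitProbAux M 𝔰 {term} (k+1) [] s
  unfold hitProbAux
  rw [if_neg (by simpa using hs)]
  refine ENNReal.tsum_le_tsum fun s' => mul_le_mul_right ?_ _
  rw [aux_eq_within 𝔰 {term} k ([] ++ [s]) s']
  exact iInf_le (fun 𝔰' : Scheduler M => hitProbWithin M 𝔰' s' {term} k) _

lemma tsum_mul_termProb (μ : PMF S) (hfin : μ.support.Finite) (term : S) :
    ∑' s', μ s' * termProb M term s' = ⨆ k, ∑' s', μ s' * termProbK M term k s' :=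
  tsum_mul_iSup μ hfin _ (fun a _ _ hk => termProbK_mono term a hk)

lemma termProb_ge_min {term s : S} (hs : s ≠ term) (μ : PMF S) (hμ : μ ∈ M.act s)
    (hmin : ∀ ν ∈ M.act s, ∑' s', μ s' * termProb M term s' ≤
      ∑' s', ν s' * termProb M term s') :
    ∑' s', μ s' * termProb M term s' ≤ termProb M term s := by
  by_contra hcon
  push_neg at hcon
  obtain ⟨c, hc1, hc2⟩ := exists_between hcon
  have hex : ∀ ν : {ν : PMF S // ν ∈ M.act s}, ∃ k,
      c < ∑' s', (ν : PMF S) s' * termProbK M term k s' := by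
    rintro ⟨ν, hν⟩
    have h1 : c < ∑' s', ν s' * termProb M term s' := hc2.trans_le (hmin ν hν)
    rw [tsum_mul_termProb ν (M.act_finSupp s ν hν) term] at h1
    exact lt_iSup_iff.mp h1
  choose K hK using hex
  set k0 := Finset.univ.sup K with hk0
  have hall : ∀ ν ∈ M.act s, c < ∑' s', ν s' * termProbK M term k0 s' := by
    intro ν hν
    refine (hK ⟨ν, hν⟩).trans_le (ENNReal.tsum_le_tsum fun s' =>
      mul_le_mul_right (termProbK_mono term s' ?_) _)
    exact Finset.le_sup (Finset.mem_univ _)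
  have hle : c ≤ termProbK M term (k0+1) s := by
    refine le_iInf fun 𝔰 => ?_
    exact le_trans (hall _ (𝔰.choose_mem [] s)).le (within_ge_termProbK term 𝔰 hs k0)
  have : c ≤ termProb M term s :=
    hle.trans (le_iSup (fun k => termProbK M term k s) (k0+1))
  exact absurd this (not_le.mpr hc1)

/-- A memoryless scheduler minimizing the one-step expectation of `termProb`. -/
noncomputable def minSched (M : MDP S) (term : S) : Scheduler M :=
  ⟨fun _ s => (Finset.exists_min_image (M.act s)
      (fun μ => ∑' s', μ s' * termProb M term s') (M.act_nonempty s)).choose,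
   fun _ s => (Finset.exists_min_image (M.act s)
      (fun μ => ∑' s', μ s' * termProb M term s') (M.act_nonempty s)).choose_spec.1⟩

lemma minSched_spec (term : S) (hist : List S) (s : S) :
    ∀ ν ∈ M.act s, ∑' s', ((minSched M term).choose hist s) s' * termProb M term s' ≤
      ∑' s', ν s' * termProb M term s' :=
  (Finset.exists_min_image (M.act s)
      (fun μ => ∑' s', μ s' * termProb M term s') (M.act_nonempty s)).choose_spec.2

lemma minSched_aux_le {term : S} :
    ∀ (k : ℕ) (hist : List S) (s : S),
      hitProbAux M (minSched M term) {term} k hist s ≤ termProb M term s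
  | 0, hist, s => by
      unfold hitProbAux
      split
      · next h =>
        have hs : s = term := h
        rw [hs, termProb_term]
      · exact zero_le
  | (k+1), hist, s => by
      by_cases hs : s = term
      · rw [hs, aux_of_mem (show term ∈ ({term} : Set S) from rfl), termProb_term]
      · show hitProbAux M (minSched M term) {term} (k+1) hist s ≤ _
        unfold hitProbAux
        rw [if_neg (by simpa using hs)]
        calc ∑' s', ((minSched M term).choose hist s) s' *
              hitProbAux M (minSched M term) {term} k (hist ++ [s]) s'
            ≤ ∑' s', ((minSched M term).choose hist s) s' * termProb M term s' :=
              ENNReal.tsum_le_tsum fun s' =>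
                mul_le_mul_right (minSched_aux_le k (hist ++ [s]) s') _
          _ ≤ termProb M term s := by
              refine termProb_ge_min hs _ ((minSched M term).choose_mem hist s) ?_
              exact minSched_spec term hist s

lemma hitProb_one_step {term s s' : S} (hterm : M.Absorbing term) {μ : PMF S}
    (hs : ∀ 𝔰 : Scheduler M, hitProb M 𝔰 s {term} = 1) (hμ : μ ∈ M.act s)
    (hs' : s' ∈ μ.support) (𝔰' : Scheduler M) : hitProb M 𝔰' s' {term} = 1 := by
  by_cases hst : s = term
  · subst hst
    have hμp : μ = PMF.pure s := by
      have h := hμ; rw [hterm] at h; simpa using h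
    have : s' = s := by
      rw [hμp] at hs'; simpa using hs'
    subst this
    exact hitProb_of_mem 𝔰' rfl
  · set f : S → Scheduler M := fun t => if t = s' then 𝔰' else M.defaultSched with hf
    have hnT : s ∉ ({term} : Set S) := by simpa using hst
    have h1 : hitProb M (combine M s μ hμ f) s {term} =
        ∑' t, μ t * hitProb M (f t) t {term} := by
      have e1 : hitProb M (combine M s μ hμ f) s {term} =
          ⨆ k, hitProbWithin M (combine M s μ hμ f) s {term} (k+1) := by
        refine le_antisymm (iSup_le fun k => ?_) (iSup_le fun k => ?_)
        · exact le_trans (within_mono _ _ _ (Nat.le_succ k))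
            (le_iSup (fun k => hitProbWithin M (combine M s μ hμ f) s {term} (k+1)) k)
        · exact le_iSup (fun k => hitProbWithin M (combine M s μ hμ f) s {term} k) (k+1)
      rw [e1]
      rw [tsum_mul_hitProb μ (M.act_finSupp s μ hμ) f {term}]
      exact iSup_congr fun k => combine_within s μ hμ f hnT k
    have h2 := hs (combine M s μ hμ f)
    rw [h1] at h2
    by_contra hne
    have hlt : hitProb M 𝔰' s' {term} < 1 :=
      lt_of_le_of_ne (hitProb_le_one 𝔰' s' {term}) hne
    have hstep : ∑' t, μ t * hitProb M (f t) t {term} < ∑' t, μ t := by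
      refine ENNReal.tsum_lt_tsum (i := s') (by rw [h2]; exact ENNReal.one_ne_top) ?_ ?_
      · intro t
        calc μ t * hitProb M (f t) t {term} ≤ μ t * 1 :=
          mul_le_mul_right (hitProb_le_one _ _ _) _
        _ = μ t := mul_one _
      · have hf' : f s' = 𝔰' := by rw [hf]; simp
        rw [hf']
        conv_rhs => rw [← mul_one (μ s')]
        exact ENNReal.mul_lt_mul_right (PMF.mem_support_iff μ s' |>.mp hs') (PMF.apply_ne_top μ s') hlt
    rw [h2, PMF.tsum_coe] at hstep
    exact lt_irrefl _ hstep

lemma hitProb_eq_one_of_reach {term σ s : S} (hterm : M.Absorbing term)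
    (hAST : M.AST term σ) (hr : M.Reach σ s) (𝔰 : Scheduler M) :
    hitProb M 𝔰 s {term} = 1 := by
  induction hr generalizing 𝔰 with
  | refl =>
    refine le_antisymm (hitProb_le_one _ _ _) ?_
    calc (1 : ℝ≥0∞) = M.PrTerm term σ := hAST.symm
      _ ≤ hitProb M 𝔰 σ {term} := iInf_le _ 𝔰
  | step μ hreach hμ hsup ih =>
    exact hitProb_one_step hterm (fun 𝔰'' => ih 𝔰'') hμ hsup 𝔰

lemma termProb_eq_one_of_reach {term σ s : S} (hterm : M.Absorbing term)
    (hAST : M.AST term σ) (hr : M.Reach σ s) : termProb M term s = 1 := by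
  refine le_antisymm (termProb_le_one term s) ?_
  calc (1 : ℝ≥0∞) = hitProb M (minSched M term) s {term} :=
      (hitProb_eq_one_of_reach hterm hAST hr _).symm
    _ ≤ termProb M term s := iSup_le fun k => minSched_aux_le k [] s

end MDP

end Helpers3
section Helpers4

open scoped ENNReal

namespace MDP

variable {S : Type} {M : MDP S}

/-- `Avoid M T k s`: no run from `s` can meet `T` within `k` steps. -/
def Avoid (M : MDP S) (T : Set S) : ℕ → S → Prop
  | 0, s => s ∉ T
  | (k+1), s => s ∉ T ∧ ∀ μ ∈ M.act s, ∀ s', μ s' ≠ 0 → Avoid M T k s'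

lemma Avoid.not_mem {T : Set S} {k : ℕ} {s : S} (h : Avoid M T k s) : s ∉ T := by
  cases k with
  | zero => exact h
  | succ k => exact h.1

/-- Key disjointness bound: the probability of ever hitting `T` plus the probability
of terminating within `k` steps is at most 1, provided `T` is unreachable in `k` steps. -/
lemma aux_add_le_one {term : S} (hterm : M.Absorbing term) (𝔰 : Scheduler M)
    (T : Set S) :
    ∀ (m k : ℕ) (hist : List S) (s : S), Avoid M T k s →
      hitProbAux M 𝔰 T m hist s + hitProbAux M 𝔰 {term} k hist s ≤ 1
  | 0, k, hist, s => by
      intro hA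
      have h0 : hitProbAux M 𝔰 T 0 hist s = 0 := by
        unfold hitProbAux; rw [if_neg hA.not_mem]
      rw [h0, zero_add]
      exact aux_le_one 𝔰 {term} k hist s
  | (m+1), k, hist, s => by
      intro hA
      by_cases hst : s = term
      · have h0 : hitProbAux M 𝔰 T (m+1) hist s = 0 := by
          rw [hst]; exact aux_term hterm (hst ▸ hA.not_mem) 𝔰 (m+1) hist
        rw [h0, zero_add]
        exact aux_le_one 𝔰 {term} k hist s
      · cases k with
        | zero =>
          have h0 : hitProbAux M 𝔰 {term} 0 hist s = 0 := by
            unfold hitProbAux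
            rw [if_neg (by simpa using hst)]
          rw [h0, add_zero]
          exact aux_le_one 𝔰 T (m+1) hist s
        | succ k =>
          obtain ⟨hsT, hnext⟩ := hA
          show hitProbAux M 𝔰 T (m+1) hist s + hitProbAux M 𝔰 {term} (k+1) hist s ≤ 1
          unfold hitProbAux
          rw [if_neg hsT, if_neg (show s ∉ ({term} : Set S) by simpa using hst)]
          rw [← ENNReal.tsum_add]
          calc ∑' s', ((𝔰.choose hist s) s' * hitProbAux M 𝔰 T m (hist ++ [s]) s' +
                (𝔰.choose hist s) s' * hitProbAux M 𝔰 {term} k (hist ++ [s]) s')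
              = ∑' s', (𝔰.choose hist s) s' *
                  (hitProbAux M 𝔰 T m (hist ++ [s]) s' +
                    hitProbAux M 𝔰 {term} k (hist ++ [s]) s') := by
                refine tsum_congr fun s' => ?_
                rw [mul_add]
            _ ≤ ∑' s', (𝔰.choose hist s) s' * 1 := by
                refine ENNReal.tsum_le_tsum fun s' => ?_
                rcases eq_or_ne ((𝔰.choose hist s) s') 0 with h0 | h0
                · simp [h0]
                · exact mul_le_mul_right
                    (aux_add_le_one hterm 𝔰 T m k (hist ++ [s]) s'
                      (hnext _ (𝔰.choose_mem hist s) s' h0)) _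
            _ = 1 := by simp [PMF.tsum_coe]

/-- The one-step successor states. -/
def succs (M : MDP S) (s : S) : Set S := ⋃ μ ∈ M.act s, (μ : PMF S).support

lemma succs_finite (s : S) : (succs M s).Finite :=
  Set.Finite.biUnion (M.act s).finite_toSet (fun μ hμ => M.act_finSupp s μ hμ)

/-- The states reachable within `k` steps. -/
def reachWithin (M : MDP S) : ℕ → S → Set S
  | 0, s => {s}
  | (k+1), s => {s} ∪ ⋃ t ∈ succs M s, reachWithin M k t

lemma reachWithin_finite : ∀ (k : ℕ) (s : S), (reachWithin M k s).Finite
  | 0, s => Set.finite_singleton s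
  | (k+1), s => (Set.finite_singleton s).union
      (Set.Finite.biUnion (succs_finite s) fun t _ => reachWithin_finite k t)

lemma avoid_of_reachWithin {T : Set S} :
    ∀ (k : ℕ) (s : S), (∀ t ∈ reachWithin M k s, t ∉ T) → Avoid M T k s
  | 0, s, h => h s rfl
  | (k+1), s, h => by
      refine ⟨h s (Or.inl rfl), fun μ hμ s' hs' => ?_⟩
      refine avoid_of_reachWithin k s' fun t ht => h t ?_
      refine Or.inr ?_
      refine Set.mem_biUnion ?_ ht
      exact Set.mem_biUnion hμ (PMF.mem_support_iff μ s' |>.mpr hs')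

lemma supReachFar_le_one (e : ℕ → S) (i n : ℕ) : M.supReachFar e i n ≤ 1 :=
  iSup_le fun 𝔰 => hitProb_le_one 𝔰 _ _

/-- Main smallness lemma: `R i n → 0` as `n → ∞`. -/
lemma supReachFar_small {term σ : S} (hterm : M.Absorbing term) (hAST : M.AST term σ)
    (e : ℕ → S) (he_inj : Function.Injective e) (i : ℕ) (hre : M.Reach σ (e i))
    {ε : ℝ≥0∞} (hε0 : ε ≠ 0) (hε1 : ε ≤ 1) :
    ∃ N : ℕ, 0 < N ∧ ∀ n ≥ N, M.supReachFar e i n ≤ ε := by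
  have hu : termProb M term (e i) = 1 := termProb_eq_one_of_reach hterm hAST hre
  have hlt : 1 - ε < termProb M term (e i) := by
    rw [hu]
    exact ENNReal.sub_lt_self ENNReal.one_ne_top one_ne_zero hε0
  obtain ⟨k, hk⟩ := lt_iSup_iff.mp hlt
  have hRW : (reachWithin M k (e i)).Finite := reachWithin_finite k (e i)
  have hIdx : (e ⁻¹' (reachWithin M k (e i))).Finite :=
    Set.Finite.preimage (Set.injOn_of_injective he_inj) hRW
  set N := hIdx.toFinset.sup id + 1 with hN
  refine ⟨N, Nat.succ_pos _, fun n hn => ?_⟩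
  set T : Set S := {s | ∃ m, n ≤ m ∧ e m = s} with hT
  have hAvoid : Avoid M T k (e i) := by
    refine avoid_of_reachWithin k (e i) fun t ht hTt => ?_
    obtain ⟨m, hm, hme⟩ := hTt
    have hmem : m ∈ hIdx.toFinset := by
      rw [Set.Finite.mem_toFinset, Set.mem_preimage, hme]
      exact ht
    have : m ≤ hIdx.toFinset.sup id := Finset.le_sup (f := id) hmem
    omega
  refine iSup_le fun 𝔰 => iSup_le fun m => ?_
  have hb := aux_add_le_one hterm 𝔰 T m k [] (e i) hAvoid
  have h2 : 1 - ε ≤ hitProbAux M 𝔰 {term} k [] (e i) :=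
    le_trans hk.le (iInf_le (fun 𝔰' : Scheduler M => hitProbWithin M 𝔰' (e i) {term} k) 𝔰)
  calc hitProbWithin M 𝔰 (e i) T m
      ≤ 1 - hitProbAux M 𝔰 {term} k [] (e i) := ENNReal.le_sub_of_add_le_right (by
          exact ((aux_le_one 𝔰 {term} k [] (e i)).trans_lt ENNReal.one_lt_top).ne) hb
    _ ≤ 1 - (1 - ε) := tsub_le_tsub_left h2 1
    _ = ε := ENNReal.sub_sub_cancel ENNReal.one_ne_top hε1

end MDP

end Helpers4
/-- **Diagonal supermartingale construction.** There is a strictly increasing sequence of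
positive integers `(n_j)` with `R i (n_j) ≤ 2⁻ʲ` for all `i ≤ j`; and for any such
sequence the function `V s = Σ_j R (e⁻¹ s) (n_j)` is well defined (the series converges at
every reachable state), vanishes at the terminal state, is a supermartingale function on
the reachable states, and has all its sublevel sets finite. -/
theorem diagonal_supermartingale_construction {S : Type} [Countable S] (M : MDP S)
    (term σ : S)
    (hterm : M.Absorbing term) (hAST : M.AST term σ)
    (hinf : {s | M.Reach σ s}.Infinite)
    (e : ℕ → S) (he_mem : ∀ n, M.Reach σ (e n)) (he_inj : Function.Injective e)
    (he_surj : ∀ s, M.Reach σ s → ∃ n, e n = s) (he0 : e 0 = term) :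
    (∃ nseq : ℕ → ℕ, StrictMono nseq ∧ (∀ j, 0 < nseq j) ∧
        ∀ j, ∀ i ≤ j, M.supReachFar e i (nseq j) ≤ 2⁻¹ ^ j) ∧
    ∀ nseq : ℕ → ℕ, StrictMono nseq → (∀ j, 0 < nseq j) →
      (∀ j, ∀ i ≤ j, M.supReachFar e i (nseq j) ≤ 2⁻¹ ^ j) →
      (∀ s, M.Reach σ s →
        (∑' j : ℕ, M.supReachFar e (Function.invFun e s) (nseq j)) ≠ ⊤) ∧
      (∑' j : ℕ, M.supReachFar e (Function.invFun e term) (nseq j)).toReal = 0 ∧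
      M.SupermartingaleOn σ
        (fun s => (∑' j : ℕ, M.supReachFar e (Function.invFun e s) (nseq j)).toReal) ∧
      ∀ r : ℝ, {s | M.Reach σ s ∧
        (∑' j : ℕ, M.supReachFar e (Function.invFun e s) (nseq j)).toReal ≤ r}.Finite := by
  classical
  have hinv : ∀ s, M.Reach σ s → e (Function.invFun e s) = s := fun s hs =>
    Function.invFun_eq (he_surj s hs)
  constructor
  · -- existence of the diagonal sequence
    have hsmall : ∀ i j : ℕ, ∃ N : ℕ, 0 < N ∧
        ∀ n ≥ N, M.supReachFar e i n ≤ (2⁻¹ : ℝ≥0∞) ^ j := by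
      intro i j
      refine MDP.supReachFar_small hterm hAST e he_inj i (he_mem i) ?_ ?_
      · exact pow_ne_zero j (ENNReal.inv_ne_zero.mpr ENNReal.ofNat_ne_top)
      · exact pow_le_one' (ENNReal.inv_le_one.mpr one_le_two) j
    choose Nf hN0 hN using hsmall
    set g : ℕ → ℕ := fun j => (Finset.range (j+1)).sup (fun i => Nf i j) with hg
    set nseq : ℕ → ℕ :=
      fun j => Nat.rec (max (g 0) 1) (fun k prev => max (g (k+1)) (prev+1)) j with hnseq
    have hstep : ∀ j, nseq (j+1) = max (g (j+1)) (nseq j + 1) := fun j => rfl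
    have h0 : nseq 0 = max (g 0) 1 := rfl
    have hmono : StrictMono nseq := strictMono_nat_of_lt_succ fun j => by
      rw [hstep]
      exact lt_of_lt_of_le (Nat.lt_succ_self _) (le_max_right _ _)
    have hge : ∀ j, g j ≤ nseq j := by
      intro j
      cases j with
      | zero => rw [h0]; exact le_max_left _ _
      | succ j => rw [hstep]; exact le_max_left _ _
    refine ⟨nseq, hmono, ?_, ?_⟩
    · intro j
      cases j with
      | zero => rw [h0]; exact lt_of_lt_of_le one_pos (le_max_right _ _)
      | succ j =>
        rw [hstep]
        exact lt_of_lt_of_le (Nat.succ_pos _) (le_max_right _ _)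
    · intro j i hij
      have h1 : Nf i j ≤ g j := by
        show Nf i j ≤ (Finset.range (j+1)).sup fun i => Nf i j
        exact Finset.le_sup (f := fun i => Nf i j) (Finset.mem_range.mpr (Nat.lt_succ_of_le hij))
      exact hN i j (nseq j) (le_trans h1 (hge j))
  · intro nseq hmono hpos hbound
    have hRle1 : ∀ i n, M.supReachFar e i n ≤ 1 := fun i n => MDP.supReachFar_le_one e i n
    -- (a) convergence
    have hWne : ∀ s, M.Reach σ s →
        (∑' j : ℕ, M.supReachFar e (Function.invFun e s) (nseq j)) ≠ ⊤ := by
      intro s hs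
      set i := Function.invFun e s with hi
      have hle : ∀ j : ℕ, M.supReachFar e i (nseq j) ≤
          (if j < i then (1:ℝ≥0∞) else 0) + 2⁻¹ ^ j := by
        intro j
        by_cases hj : j < i
        · rw [if_pos hj]
          exact le_trans (hRle1 i (nseq j)) (le_add_of_nonneg_right (zero_le))
        · rw [if_neg hj, zero_add]
          exact hbound j i (le_of_not_gt hj)
      have hsum : (∑' j : ℕ, M.supReachFar e i (nseq j)) ≤
          (∑' j : ℕ, (if j < i then (1:ℝ≥0∞) else 0)) + ∑' j : ℕ, (2⁻¹ : ℝ≥0∞) ^ j := by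
        rw [← ENNReal.tsum_add]
        exact ENNReal.tsum_le_tsum hle
      have h1 : ∑' j : ℕ, (if j < i then (1:ℝ≥0∞) else 0) = (i : ℝ≥0∞) := by
        rw [tsum_eq_sum (s := Finset.range i) (fun b hb => if_neg (by simpa using hb))]
        rw [Finset.sum_congr rfl (fun b hb => if_pos (Finset.mem_range.mp hb))]
        simp
      have h2 : ∑' j : ℕ, (2⁻¹ : ℝ≥0∞) ^ j = ((1:ℝ≥0∞) - 2⁻¹)⁻¹ :=
        ENNReal.tsum_geometric _
      have h3 : ((1:ℝ≥0∞) - 2⁻¹)⁻¹ ≠ ⊤ := by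
        rw [Ne, ENNReal.inv_eq_top]
        intro hc
        exact absurd (tsub_eq_zero_iff_le.mp hc)
          (not_le.mpr (ENNReal.inv_lt_one.mpr ENNReal.one_lt_two))
      refine ne_top_of_le_ne_top ?_ hsum
      rw [h1, h2]
      exact ENNReal.add_ne_top.mpr ⟨ENNReal.natCast_ne_top i, h3⟩
    refine ⟨hWne, ?_, ?_, ?_⟩
    · -- (b) vanishes at term
      have hinv0 : Function.invFun e term = 0 := by
        rw [← he0]
        exact Function.leftInverse_invFun he_inj 0
      have hzero : ∀ j : ℕ, M.supReachFar e 0 (nseq j) = 0 := by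
        intro j
        have hterm_notin : term ∉ {s | ∃ m, nseq j ≤ m ∧ e m = s} := by
          rintro ⟨m, hm, hme⟩
          rw [← he0] at hme
          have hm0 := he_inj hme
          have := hpos j
          omega
        refine le_antisymm (iSup_le fun 𝔰 => ?_) (zero_le)
        rw [he0, MDP.hitProb_term hterm hterm_notin 𝔰]
      rw [hinv0]
      simp [hzero]
    · -- (c) supermartingale property
      intro s hs μ hμ
      have hfin := M.act_finSupp s μ hμ
      have hreach' : ∀ s' ∈ μ.support, M.Reach σ s' := fun s' h =>
        MDP.Reach.step μ hs hμ h
      have e1 : MDP.expect μ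
          (fun t => (∑' j : ℕ, M.supReachFar e (Function.invFun e t) (nseq j)).toReal) =
          ∑ s' ∈ hfin.toFinset, (μ s').toReal *
            (∑' j : ℕ, M.supReachFar e (Function.invFun e s') (nseq j)).toReal := by
        refine tsum_eq_sum fun b hb => ?_
        have : μ b = 0 := by simpa [PMF.mem_support_iff] using hb
        simp [this]
      have hterm_ne : ∀ a ∈ hfin.toFinset,
          μ a * (∑' j : ℕ, M.supReachFar e (Function.invFun e a) (nseq j)) ≠ ⊤ := by
        intro a ha
        refine ENNReal.mul_ne_top (PMF.apply_ne_top μ a) (hWne a (hreach' a ?_))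
        rwa [Set.Finite.mem_toFinset] at ha
      have e2 : ∑ s' ∈ hfin.toFinset, (μ s').toReal *
            (∑' j : ℕ, M.supReachFar e (Function.invFun e s') (nseq j)).toReal =
          (∑ s' ∈ hfin.toFinset,
            μ s' * ∑' j : ℕ, M.supReachFar e (Function.invFun e s') (nseq j)).toReal := by
        rw [ENNReal.toReal_sum hterm_ne]
        exact Finset.sum_congr rfl fun a _ => ENNReal.toReal_mul.symm
      have key : (∑ s' ∈ hfin.toFinset,
            μ s' * ∑' j : ℕ, M.supReachFar e (Function.invFun e s') (nseq j)) ≤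
          ∑' j : ℕ, M.supReachFar e (Function.invFun e s) (nseq j) := by
        calc ∑ s' ∈ hfin.toFinset,
              μ s' * ∑' j : ℕ, M.supReachFar e (Function.invFun e s') (nseq j)
            ≤ ∑' s', μ s' * ∑' j : ℕ, M.supReachFar e (Function.invFun e s') (nseq j) :=
              ENNReal.sum_le_tsum _
          _ = ∑' s', ∑' j : ℕ, μ s' * M.supReachFar e (Function.invFun e s') (nseq j) :=
              tsum_congr fun s' => ENNReal.tsum_mul_left.symm
          _ = ∑' j : ℕ, ∑' s', μ s' * M.supReachFar e (Function.invFun e s') (nseq j) :=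
              ENNReal.tsum_comm
          _ ≤ ∑' j : ℕ, M.supReachFar e (Function.invFun e s) (nseq j) := by
              refine ENNReal.tsum_le_tsum fun j => ?_
              have heq : ∀ s', μ s' * M.supReachFar e (Function.invFun e s') (nseq j) =
                  μ s' * ⨆ 𝔰 : Scheduler M,
                    M.hitProb 𝔰 s' {t | ∃ m, nseq j ≤ m ∧ e m = t} := by
                intro s'
                rcases eq_or_ne (μ s') 0 with h0 | h0
                · simp [h0]
                · have hr' : M.Reach σ s' :=
                    hreach' s' (PMF.mem_support_iff μ s' |>.mpr h0)
                  rw [MDP.supReachFar, hinv s' hr']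
              rw [tsum_congr heq]
              have heq2 : M.supReachFar e (Function.invFun e s) (nseq j) =
                  ⨆ 𝔰 : Scheduler M,
                    M.hitProb 𝔰 s {t | ∃ m, nseq j ≤ m ∧ e m = t} := by
                rw [MDP.supReachFar, hinv s hs]
              rw [heq2]
              exact MDP.bellman_sup s μ hμ _
      calc MDP.expect μ
            (fun t => (∑' j : ℕ, M.supReachFar e (Function.invFun e t) (nseq j)).toReal)
          = (∑ s' ∈ hfin.toFinset,
              μ s' * ∑' j : ℕ, M.supReachFar e (Function.invFun e s') (nseq j)).toReal := by
            rw [e1, e2]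
        _ ≤ (∑' j : ℕ, M.supReachFar e (Function.invFun e s) (nseq j)).toReal :=
            ENNReal.toReal_mono (hWne s hs) key
    · -- (d) sublevel sets are finite
      intro r
      set K := Nat.floor r + 1 with hK
      refine Set.Finite.subset ((Set.finite_Iio (nseq K)).image e) ?_
      rintro s ⟨hr_s, hVr⟩
      have hei : e (Function.invFun e s) = s := hinv s hr_s
      set i := Function.invFun e s with hi
      refine ⟨i, ?_, hei⟩
      by_contra hni
      have hni' : nseq K ≤ i := le_of_not_gt (by simpa using hni)
      have hone : ∀ j ≤ K, (1:ℝ≥0∞) ≤ M.supReachFar e i (nseq j) := by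
        intro j hj
        have hmem : e i ∈ {t | ∃ m, nseq j ≤ m ∧ e m = t} :=
          ⟨i, le_trans (hmono.monotone hj) hni', rfl⟩
        calc (1:ℝ≥0∞) = M.hitProb M.defaultSched (e i) {t | ∃ m, nseq j ≤ m ∧ e m = t} :=
            (MDP.hitProb_of_mem _ hmem).symm
          _ ≤ M.supReachFar e i (nseq j) :=
            le_iSup (fun 𝔰 : Scheduler M =>
              M.hitProb 𝔰 (e i) {t | ∃ m, nseq j ≤ m ∧ e m = t}) _
      have hsum : ((K:ℝ≥0∞) + 1) ≤ ∑' j : ℕ, M.supReachFar e i (nseq j) := by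
        calc ((K:ℝ≥0∞) + 1) = ∑ j ∈ Finset.range (K+1), (1:ℝ≥0∞) := by simp
          _ ≤ ∑ j ∈ Finset.range (K+1), M.supReachFar e i (nseq j) :=
            Finset.sum_le_sum fun j hj =>
              hone j (Nat.lt_succ_iff.mp (Finset.mem_range.mp hj))
          _ ≤ ∑' j : ℕ, M.supReachFar e i (nseq j) := ENNReal.sum_le_tsum _
      have hto : (K:ℝ) + 1 ≤ (∑' j : ℕ, M.supReachFar e i (nseq j)).toReal := by
        have h := ENNReal.toReal_mono (hWne s hr_s) hsum
        rw [ENNReal.toReal_add (ENNReal.natCast_ne_top K) ENNReal.one_ne_top] at h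
        simpa using h
      have hrK : r < (K:ℝ) + 1 := by
        have h1 : r < (Nat.floor r : ℝ) + 1 := Nat.lt_floor_add_one r
        have h2 : ((Nat.floor r : ℝ)) + 1 ≤ (K:ℝ) + 1 := by
          rw [hK]; push_cast; linarith
        linarith
      have : r < (∑' j : ℕ, M.supReachFar e i (nseq j)).toReal := lt_of_lt_of_le hrK hto
      exact absurd hVr (not_le.mpr this)
end

section
/- Completeness of the martingale rule for AST: Let M be a finitely-branching MDP with absorbing terminal state ⊥ that is almost surely terminating from the initial state σ. Then there exist V : S → ℝ and U : S → ℕ such that (i) V(⊥) = 0 and V(s) > 0 for every s ∈ Reach(σ) with s ≠ ⊥; (ii) V is a supermartingale function on Reach(σ); (iii) U(⊥) = 0 and U(s) ≥ 1 for every s ∈ Reach(σ) with s ≠ ⊥; (iv) for every r ∈ ℝ the set {U(s) : s ∈ Reach(σ), V(s) ≤ r} is bounded; and (v) for every r ∈ ℝ there exists ε_r > 0 such that for every s ∈ Reach(σ) with s ≠ ⊥ and V(s) ≤ r and every action μ ∈ Act(s), μ({s' : U(s') < U(s)}) ≥ ε_r. -/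
open scoped ENNReal Classical

namespace ASTProof
open MDP
variable {S : Type}

lemma pmf_ne_top (μ : PMF S) (s : S) : μ s ≠ ⊤ :=
  ne_top_of_le_ne_top ENNReal.one_ne_top (PMF.coe_le_one μ s)

lemma expect_eq_sum (μ : PMF S) (h : μ.support.Finite) (f : S → ℝ) :
    MDP.expect μ f = ∑ s' ∈ h.toFinset, (μ s').toReal * f s' := by
  refine tsum_eq_sum ?_
  intro b hb
  have hb0 : μ b = 0 := by
    by_contra hb0
    exact hb (h.mem_toFinset.mpr ((PMF.mem_support_iff μ b).mpr hb0))
  simp [hb0]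

lemma sum_weights (μ : PMF S) (h : μ.support.Finite) :
    ∑ s' ∈ h.toFinset, (μ s').toReal = 1 := by
  have h1 : ∑ s' ∈ h.toFinset, μ s' = 1 := by
    rw [← PMF.tsum_coe μ]
    exact (tsum_eq_sum (by
      intro b hb
      by_contra hb0
      exact hb (h.mem_toFinset.mpr ((PMF.mem_support_iff μ b).mpr hb0)))).symm
  rw [← ENNReal.toReal_sum (fun a _ => pmf_ne_top μ a), h1, ENNReal.toReal_one]

lemma expect_nonneg (μ : PMF S) (h : μ.support.Finite) (f : S → ℝ)
    (hf : ∀ s', 0 ≤ f s') : 0 ≤ MDP.expect μ f := by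
  rw [expect_eq_sum μ h]
  exact Finset.sum_nonneg fun s' _ => mul_nonneg ENNReal.toReal_nonneg (hf s')

lemma expect_mono (μ : PMF S) (h : μ.support.Finite) (f g : S → ℝ)
    (hfg : ∀ s' ∈ μ.support, f s' ≤ g s') : MDP.expect μ f ≤ MDP.expect μ g := by
  rw [expect_eq_sum μ h, expect_eq_sum μ h]
  exact Finset.sum_le_sum fun s' hs' =>
    mul_le_mul_of_nonneg_left (hfg s' (h.mem_toFinset.mp hs')) ENNReal.toReal_nonneg

lemma expect_const (μ : PMF S) (h : μ.support.Finite) (c : ℝ) :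
    MDP.expect μ (fun _ => c) = c := by
  rw [expect_eq_sum μ h, ← Finset.sum_mul, sum_weights μ h, one_mul]

lemma expect_add_const (μ : PMF S) (h : μ.support.Finite) (f : S → ℝ) (c : ℝ) :
    MDP.expect μ (fun s => f s + c) = MDP.expect μ f + c := by
  rw [expect_eq_sum μ h, expect_eq_sum μ h f]
  have : ∀ s' ∈ h.toFinset, (μ s').toReal * (f s' + c)
      = (μ s').toReal * f s' + (μ s').toReal * c := fun s' _ => by ring
  rw [Finset.sum_congr rfl this, Finset.sum_add_distrib, ← Finset.sum_mul, sum_weights μ h,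
    one_mul]

lemma expect_le_const (μ : PMF S) (h : μ.support.Finite) (f : S → ℝ) (c : ℝ)
    (hc : ∀ s', f s' ≤ c) : MDP.expect μ f ≤ c := by
  calc MDP.expect μ f ≤ MDP.expect μ (fun _ => c) := expect_mono μ h _ _ fun s' _ => hc s'
    _ = c := expect_const μ h c

lemma expect_pure (a : S) (f : S → ℝ) : MDP.expect (PMF.pure a) f = f a := by
  unfold MDP.expect
  rw [tsum_eq_single a (by
    intro b hb
    rw [PMF.pure_apply]
    simp [hb])]
  simp [PMF.pure_apply]

/-- `w n s` : max over schedulers of probability of avoiding `term` for `n` steps from `s`. -/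
noncomputable def w (M : MDP S) (term : S) : ℕ → S → ℝ
  | 0 => fun s => if s = term then 0 else 1
  | n+1 => fun s => if s = term then 0 else
      ((M.act s).image (fun μ => MDP.expect μ (w M term n))).max'
        ((M.act_nonempty s).image _)

variable (M : MDP S) (term : S)

lemma w_term (n : ℕ) : w M term n term = 0 := by cases n <;> simp [w]

lemma w_succ_of_ne {s : S} (hs : s ≠ term) (n : ℕ) :
    w M term (n+1) s
      = ((M.act s).image (fun μ => MDP.expect μ (w M term n))).max'
        ((M.act_nonempty s).image _) := by
  simp [w, hs]

lemma le_w_succ {s : S} (hs : s ≠ term) (n : ℕ) {μ : PMF S} (hμ : μ ∈ M.act s) :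
    MDP.expect μ (w M term n) ≤ w M term (n+1) s := by
  rw [w_succ_of_ne M term hs n]
  apply Finset.le_max'
  exact Finset.mem_image_of_mem _ hμ

lemma w_nonneg (n : ℕ) (s : S) : 0 ≤ w M term n s := by
  induction n generalizing s with
  | zero => by_cases hs : s = term <;> simp [w, hs]
  | succ n ih =>
    by_cases hs : s = term
    · simp [hs, w_term]
    · obtain ⟨μ, hμ⟩ := M.act_nonempty s
      calc (0:ℝ) ≤ MDP.expect μ (w M term n) :=
            expect_nonneg μ (M.act_finSupp s μ hμ) _ (ih)
        _ ≤ w M term (n+1) s := le_w_succ M term hs n hμ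

lemma w_le_one (n : ℕ) (s : S) : w M term n s ≤ 1 := by
  induction n generalizing s with
  | zero => by_cases hs : s = term <;> simp [w, hs]
  | succ n ih =>
    by_cases hs : s = term
    · simp [hs, w_term]
    · rw [w_succ_of_ne M term hs n]
      apply Finset.max'_le
      intro y hy
      obtain ⟨μ, hμ, rfl⟩ := Finset.mem_image.mp hy
      exact expect_le_const μ (M.act_finSupp s μ hμ) _ 1 ih

lemma w_succ_le (n : ℕ) (s : S) : w M term (n+1) s ≤ w M term n s := by
  induction n generalizing s with
  | zero =>
    by_cases hs : s = term
    · simp [hs, w_term]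
    · calc w M term 1 s ≤ 1 := w_le_one M term 1 s
        _ = w M term 0 s := by simp [w, hs]
  | succ n ih =>
    by_cases hs : s = term
    · simp [hs, w_term]
    · rw [w_succ_of_ne M term hs (n+1)]
      apply Finset.max'_le
      intro y hy
      obtain ⟨μ, hμ, rfl⟩ := Finset.mem_image.mp hy
      calc MDP.expect μ (w M term (n+1)) ≤ MDP.expect μ (w M term n) :=
            expect_mono μ (M.act_finSupp s μ hμ) _ _ (fun s' _ => ih s')
        _ ≤ w M term (n+1) s := le_w_succ M term hs n hμ

lemma w_anti {m n : ℕ} (h : m ≤ n) (s : S) : w M term n s ≤ w M term m s := by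
  induction n with
  | zero => simp_all
  | succ n ih =>
    rcases Nat.lt_or_ge m (n+1) with h' | h'
    · exact (w_succ_le M term n s).trans (ih (by omega))
    · have : m = n + 1 := by omega
      simp [this]

lemma step_le (hterm : M.act term = {PMF.pure term}) (s : S) {μ : PMF S} (hμ : μ ∈ M.act s)
    (n : ℕ) : MDP.expect μ (w M term n) ≤ w M term (n+1) s := by
  by_cases hs : s = term
  · subst hs
    rw [hterm, Finset.mem_singleton] at hμ
    subst hμ
    rw [expect_pure, w_term, w_term]
  · exact le_w_succ M term hs n hμ

/-- limit (infimum) of `w n s`. -/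
noncomputable def L (s : S) : ℝ := ⨅ n, w M term n s

lemma L_bddBelow (s : S) : BddBelow (Set.range fun n => w M term n s) :=
  ⟨0, by rintro x ⟨n, rfl⟩; exact w_nonneg M term n s⟩

lemma L_nonneg (s : S) : 0 ≤ L M term s :=
  le_ciInf fun n => w_nonneg M term n s

lemma L_le (n : ℕ) (s : S) : L M term s ≤ w M term n s :=
  ciInf_le (L_bddBelow M term s) n

lemma L_le_one (s : S) : L M term s ≤ 1 :=
  (L_le M term 0 s).trans (w_le_one M term 0 s)

lemma L_term : L M term term = 0 := by
  have : ∀ n, w M term n term = 0 := w_term M term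
  simp only [L, this, ciInf_const]

lemma exists_w_lt {s : S} {a : ℝ} (ha : L M term s < a) :
    ∃ N, ∀ n, N ≤ n → w M term n s < a := by
  obtain ⟨N, hN⟩ := exists_lt_of_ciInf_lt ha
  exact ⟨N, fun n hn => lt_of_le_of_lt (w_anti M term hn s) hN⟩

lemma exists_greedy (hterm : M.act term = {PMF.pure term}) (s : S) :
    ∃ μ ∈ M.act s, L M term s ≤ MDP.expect μ (L M term) := by
  by_cases hs : s = term
  · refine ⟨PMF.pure term, by rw [hs, hterm]; exact Finset.mem_singleton_self _, ?_⟩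
    rw [expect_pure, hs]
  · -- a recurring maximizer
    have hmax : ∀ n : ℕ, ∃ μ ∈ M.act s, w M term (n+1) s = MDP.expect μ (w M term n) := by
      intro n
      have hmem := Finset.max'_mem ((M.act s).image (fun μ => MDP.expect μ (w M term n)))
        ((M.act_nonempty s).image _)
      rw [← w_succ_of_ne M term hs n] at hmem
      obtain ⟨μ, hμ, hval⟩ := Finset.mem_image.mp hmem
      exact ⟨μ, hμ, hval.symm⟩
    have hinf : ∃ μ ∈ M.act s,
        {n : ℕ | w M term (n+1) s = MDP.expect μ (w M term n)}.Infinite := by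
      by_contra hcon
      push_neg at hcon
      have hfin : ∀ μ ∈ M.act s,
          {n : ℕ | w M term (n+1) s = MDP.expect μ (w M term n)}.Finite := by
        intro μ hμ
        rcases Set.finite_or_infinite {n : ℕ | w M term (n+1) s = MDP.expect μ (w M term n)}
          with h | h
        · exact h
        · exact absurd (hcon μ hμ) h
      have huniv : (Set.univ : Set ℕ) ⊆
          ⋃ μ ∈ (M.act s : Set (PMF S)), {n : ℕ | w M term (n+1) s = MDP.expect μ (w M term n)} := by
        intro n _
        obtain ⟨μ, hμ, h⟩ := hmax n
        exact Set.mem_biUnion hμ h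
      exact Set.infinite_univ (Set.Finite.subset
        (Set.Finite.biUnion (M.act s).finite_toSet (fun μ hμ => hfin μ hμ)) huniv)
    obtain ⟨μ, hμ, hA⟩ := hinf
    refine ⟨μ, hμ, le_of_forall_pos_le_add fun ε hε => ?_⟩
    have hNall : ∀ s', ∃ N, ∀ n, N ≤ n → w M term n s' ≤ L M term s' + ε := by
      intro s'
      obtain ⟨N, hN⟩ := exists_w_lt M term (show L M term s' < L M term s' + ε by linarith)
      exact ⟨N, fun n hn => (hN n hn).le⟩
    choose N hNs using hNall
    set F := (M.act_finSupp s μ hμ).toFinset with hF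
    have hbig : ∃ n ∈ {n : ℕ | w M term (n+1) s = MDP.expect μ (w M term n)}, F.sup N ≤ n := by
      by_contra hcon
      push_neg at hcon
      refine hA (Set.Finite.subset (Set.finite_Iic (F.sup N)) ?_)
      intro n hn
      exact Set.mem_Iic.mpr (le_of_lt (hcon n hn))
    obtain ⟨n, hn, hnbig⟩ := hbig
    calc L M term s ≤ w M term (n+1) s := L_le M term (n+1) s
      _ = MDP.expect μ (w M term n) := hn
      _ ≤ MDP.expect μ (fun s' => L M term s' + ε) := by
          refine expect_mono μ (M.act_finSupp s μ hμ) _ _ ?_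
          intro s' hs'
          exact hNs s' n (le_trans (Finset.le_sup ((M.act_finSupp s μ hμ).mem_toFinset.mpr hs')) hnbig)
      _ = MDP.expect μ (L M term) + ε := expect_add_const μ (M.act_finSupp s μ hμ) _ ε

/-- greedy action selection. -/
noncomputable def musel (hterm : M.act term = {PMF.pure term}) (s : S) : PMF S :=
  Classical.choose (exists_greedy M term hterm s)

lemma musel_mem (hterm : M.act term = {PMF.pure term}) (s : S) :
    musel M term hterm s ∈ M.act s :=
  (Classical.choose_spec (exists_greedy M term hterm s)).1

lemma musel_ge (hterm : M.act term = {PMF.pure term}) (s : S) :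
    L M term s ≤ MDP.expect (musel M term hterm s) (L M term) :=
  (Classical.choose_spec (exists_greedy M term hterm s)).2

lemma hitAux_le_one (𝔰 : Scheduler M) (T : Set S) :
    ∀ (n : ℕ) (hist : List S) (s : S), MDP.hitProbAux M 𝔰 T n hist s ≤ 1 := by
  intro n
  induction n with
  | zero =>
    intro hist s
    rw [MDP.hitProbAux]
    split <;> simp
  | succ n ih =>
    intro hist s
    rw [MDP.hitProbAux]
    split
    · exact le_rfl
    · calc ∑' s', (𝔰.choose hist s) s' * MDP.hitProbAux M 𝔰 T n (hist ++ [s]) s'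
          ≤ ∑' s', (𝔰.choose hist s) s' * 1 :=
            ENNReal.tsum_le_tsum fun s' => mul_le_mul_right (ih _ s') _
        _ = 1 := by simp [PMF.tsum_coe]

lemma ofReal_expect_le (μ : PMF S) (h : μ.support.Finite) (f : S → ℝ) (hf : ∀ s', 0 ≤ f s') :
    ENNReal.ofReal (MDP.expect μ f) ≤ ∑' s', μ s' * ENNReal.ofReal (f s') := by
  rw [expect_eq_sum μ h f,
    ENNReal.ofReal_sum_of_nonneg (fun s' _ => mul_nonneg ENNReal.toReal_nonneg (hf s'))]
  have heq : ∀ s' ∈ h.toFinset, ENNReal.ofReal ((μ s').toReal * f s')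
      = μ s' * ENNReal.ofReal (f s') := by
    intro s' _
    rw [ENNReal.ofReal_mul ENNReal.toReal_nonneg, ENNReal.ofReal_toReal (pmf_ne_top μ s')]
  rw [Finset.sum_congr rfl heq]
  exact ENNReal.sum_le_tsum _

lemma tail_bound (hterm : M.act term = {PMF.pure term}) (𝔰 : Scheduler M) (m : ℕ)
    (h𝔰 : ∀ hist s, m ≤ hist.length → 𝔰.choose hist s = musel M term hterm s) :
    ∀ (n : ℕ) (hist : List S) (s : S), m ≤ hist.length →
      MDP.hitProbAux M 𝔰 {term} n hist s + ENNReal.ofReal (L M term s) ≤ 1 := by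
  intro n
  induction n with
  | zero =>
    intro hist s hlen
    by_cases hs : s = term
    · subst hs
      rw [MDP.hitProbAux, if_pos (Set.mem_singleton _), L_term]
      simp
    · rw [MDP.hitProbAux, if_neg (by simpa using hs), zero_add]
      exact ENNReal.ofReal_le_one.mpr (L_le_one M term s)
  | succ n ih =>
    intro hist s hlen
    by_cases hs : s = term
    · subst hs
      rw [MDP.hitProbAux, if_pos (Set.mem_singleton _), L_term]
      simp
    · rw [MDP.hitProbAux, if_neg (by simpa using hs), h𝔰 hist s hlen]
      set μ := musel M term hterm s with hμdef
      have hfin := M.act_finSupp s μ (musel_mem M term hterm s)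
      have key1 : ENNReal.ofReal (L M term s) ≤ ∑' s', μ s' * ENNReal.ofReal (L M term s') :=
        le_trans (ENNReal.ofReal_le_ofReal (musel_ge M term hterm s))
          (ofReal_expect_le μ hfin _ (L_nonneg M term))
      calc (∑' s', μ s' * MDP.hitProbAux M 𝔰 {term} n (hist ++ [s]) s')
            + ENNReal.ofReal (L M term s)
          ≤ (∑' s', μ s' * MDP.hitProbAux M 𝔰 {term} n (hist ++ [s]) s')
            + ∑' s', μ s' * ENNReal.ofReal (L M term s') := add_le_add le_rfl key1
        _ = ∑' s', (μ s' * MDP.hitProbAux M 𝔰 {term} n (hist ++ [s]) s'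
            + μ s' * ENNReal.ofReal (L M term s')) := (ENNReal.tsum_add).symm
        _ = ∑' s', μ s' * (MDP.hitProbAux M 𝔰 {term} n (hist ++ [s]) s'
            + ENNReal.ofReal (L M term s')) := by
            congr 1; funext s'; rw [mul_add]
        _ ≤ ∑' s', μ s' * 1 := ENNReal.tsum_le_tsum fun s' =>
            mul_le_mul_right (ih (hist ++ [s]) s' (by simp; omega)) _
        _ = 1 := by simp [PMF.tsum_coe]

lemma reach_path {σ s : S} (h : M.Reach σ s) :
    ∃ (m : ℕ) (p : ℕ → S) (ν : ℕ → PMF S), p 0 = σ ∧ p m = s ∧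
      ∀ i, i < m → (ν i ∈ M.act (p i) ∧ p (i+1) ∈ (ν i).support) := by
  induction h with
  | refl => exact ⟨0, fun _ => σ, fun _ => PMF.pure σ, rfl, rfl, fun i hi => by omega⟩
  | @step t t' μ hreach hact hsupp ih =>
    obtain ⟨m, p, ν, hp0, hpm, hstep⟩ := ih
    refine ⟨m+1, fun i => if i = m+1 then t' else p i, fun i => if i = m then μ else ν i,
      by simp [hp0], by simp, ?_⟩
    intro i hi
    rcases Nat.lt_or_ge i m with h' | h'
    · have h1 : i ≠ m := by omega
      have h2 : i ≠ m + 1 := by omega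
      have h3 : i + 1 ≠ m + 1 := by omega
      simp only [if_neg h1, if_neg h2, if_neg h3]
      exact hstep i h'
    · have h1 : i = m := by omega
      subst h1
      have h2 : i ≠ i + 1 := by omega
      simp only [if_pos rfl, if_neg h2, hpm]
      exact ⟨hact, hsupp⟩

lemma L_reach_zero (hterm : M.Absorbing term) {σ : S} (hAST : M.AST term σ)
    (s₀ : S) (hreach : M.Reach σ s₀) : L M term s₀ = 0 := by
  have hterm' : M.act term = {PMF.pure term} := hterm
  by_contra hne
  have hL : 0 < L M term s₀ := lt_of_le_of_ne (L_nonneg M term s₀) (Ne.symm hne)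
  have hs₀ : s₀ ≠ term := fun h => hne (h ▸ L_term M term)
  obtain ⟨m, p, ν, hp0, hpm, hstep⟩ := reach_path M hreach
  -- no state on the path is term
  have htermprop : ∀ i k, p i = term → i + k ≤ m → p (i + k) = term := by
    intro i k
    induction k with
    | zero => intro h _; simpa using h
    | succ k ih =>
      intro h hik
      have hik' : i + k ≤ m := by omega
      have hk := ih h hik'
      have hs := hstep (i + k) (by omega)
      rw [hk] at hs
      obtain ⟨hact, hsupp⟩ := hs
      rw [hterm', Finset.mem_singleton] at hact
      rw [hact, PMF.support_pure] at hsupp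
      have : i + (k + 1) = (i + k) + 1 := by omega
      rw [this]
      exact hsupp
  have hpne : ∀ i, i ≤ m → p i ≠ term := by
    intro i hi hcon
    have := htermprop i (m - i) hcon (by omega)
    rw [show i + (m - i) = m by omega, hpm] at this
    exact hs₀ this
  -- the composed scheduler
  let 𝔰 : Scheduler M := {
    choose := fun hist s =>
      if h : hist.length < m ∧ s = p hist.length then ν hist.length
      else musel M term hterm' s
    choose_mem := by
      intro hist s
      by_cases h : hist.length < m ∧ s = p hist.length
      · rw [dif_pos h, h.2]
        exact (hstep hist.length h.1).1
      · rw [dif_neg h]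
        exact musel_mem M term hterm' s }
  have h𝔰tail : ∀ hist s, m ≤ hist.length → 𝔰.choose hist s = musel M term hterm' s := by
    intro hist s hlen
    exact dif_neg (fun hcon => absurd hcon.1 (not_lt.mpr hlen))
  let C : ℕ → ℝ := fun i => ∏ j ∈ Finset.Ico i m, (ν j (p (j+1))).toReal
  have hC_nonneg : ∀ i, 0 ≤ C i := fun i =>
    Finset.prod_nonneg fun j _ => ENNReal.toReal_nonneg
  have hC_le_one : ∀ i, C i ≤ 1 := fun i =>
    Finset.prod_le_one (fun j _ => ENNReal.toReal_nonneg)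
      (fun j _ => ENNReal.toReal_le_of_le_ofReal zero_le_one (by
        simpa using PMF.coe_le_one (ν j) (p (j+1))))
  have hC0 : 0 < C 0 := by
    refine Finset.prod_pos fun j hj => ?_
    have hj' := (Finset.mem_Ico.mp hj).2
    have hmem := (hstep j hj').2
    exact ENNReal.toReal_pos ((PMF.mem_support_iff _ _).mp hmem) (pmf_ne_top _ _)
  have hCm : C m = 1 := by simp [C]
  -- main downward induction
  have main : ∀ d, d ≤ m → ∀ (n : ℕ) (hist : List S), hist.length = m - d →
      MDP.hitProbAux M 𝔰 {term} n hist (p (m - d))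
        + ENNReal.ofReal (C (m - d) * L M term s₀) ≤ 1 := by
    intro d
    induction d with
    | zero =>
      intro _ n hist hlen
      rw [Nat.sub_zero] at *
      rw [hCm, one_mul, hpm]
      exact tail_bound M term hterm' 𝔰 m h𝔰tail n hist s₀ (le_of_eq hlen.symm)
    | succ d ihd =>
      intro hd1 n hist hlen
      set i := m - (d + 1) with hidef
      have him : i < m := by omega
      have hi1 : i + 1 = m - d := by omega
      induction n with
      | zero =>
        rw [MDP.hitProbAux, if_neg (by simpa using hpne i (by omega)), zero_add]
        exact ENNReal.ofReal_le_one.mpr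
          (mul_le_one₀ (hC_le_one i) (L_nonneg M term s₀) (L_le_one M term s₀))
      | succ n _ =>
        rw [MDP.hitProbAux, if_neg (by simpa using hpne i (by omega))]
        have hchoose : 𝔰.choose hist (p i) = ν i := by
          have : 𝔰.choose hist (p i)
              = if h : hist.length < m ∧ p i = p hist.length then ν hist.length
                else musel M term hterm' (p i) := rfl
          rw [this, dif_pos (by rw [hlen]; exact ⟨him, rfl⟩), hlen]
        rw [hchoose]
        set q := p (i + 1) with hq
        set h' := fun s' => MDP.hitProbAux M 𝔰 {term} n (hist ++ [p i]) s' with hh'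
        have hCi : C i = (ν i q).toReal * C (i + 1) :=
          Finset.prod_eq_prod_Ico_succ_bot him _
        have hofReal : ENNReal.ofReal (C i * L M term s₀)
            = ν i q * ENNReal.ofReal (C (i+1) * L M term s₀) := by
          rw [hCi, mul_assoc, ENNReal.ofReal_mul ENNReal.toReal_nonneg,
            ENNReal.ofReal_toReal (pmf_ne_top _ _)]
        have hIH : h' q + ENNReal.ofReal (C (i+1) * L M term s₀) ≤ 1 := by
          have := ihd (by omega) n (hist ++ [p i]) (by simp [hlen]; omega)
          rwa [← hi1] at this
        calc (∑' s', ν i s' * h' s') + ENNReal.ofReal (C i * L M term s₀)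
            = (ν i q * h' q + ∑' s', if s' = q then 0 else ν i s' * h' s')
              + ν i q * ENNReal.ofReal (C (i+1) * L M term s₀) := by
              rw [ENNReal.tsum_eq_add_tsum_ite q, hofReal]
          _ = ν i q * (h' q + ENNReal.ofReal (C (i+1) * L M term s₀))
              + ∑' s', if s' = q then 0 else ν i s' * h' s' := by ring
          _ ≤ ν i q * 1 + ∑' s', if s' = q then 0 else ν i s' := by
              refine add_le_add (mul_le_mul_right hIH _) (ENNReal.tsum_le_tsum fun s' => ?_)
              split
              · exact le_rfl
              · exact mul_le_of_le_one_right' (hitAux_le_one M 𝔰 {term} n (hist ++ [p i]) s')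
          _ = ∑' s', ν i s' := by
              rw [mul_one, ← ENNReal.tsum_eq_add_tsum_ite q]
          _ = 1 := (ν i).tsum_coe
  -- conclude
  have hfin : ∀ n, MDP.hitProbWithin M 𝔰 σ {term} n
      ≤ 1 - ENNReal.ofReal (C 0 * L M term s₀) := by
    intro n
    refine ENNReal.le_sub_of_add_le_right ENNReal.ofReal_ne_top ?_
    have := main m le_rfl n [] (by simp)
    rwa [Nat.sub_self, hp0] at this
  have h1 : MDP.hitProb M 𝔰 σ {term} ≤ 1 - ENNReal.ofReal (C 0 * L M term s₀) :=
    iSup_le hfin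
  have h2 : (1 : ℝ≥0∞) ≤ MDP.hitProb M 𝔰 σ {term} := by
    have := iInf_le (fun 𝔰' : Scheduler M => MDP.hitProb M 𝔰' σ {term}) 𝔰
    rw [show (⨅ 𝔰' : Scheduler M, MDP.hitProb M 𝔰' σ {term}) = 1 from hAST] at this
    exact this
  have h3 : 1 - ENNReal.ofReal (C 0 * L M term s₀) < 1 :=
    ENNReal.sub_lt_self ENNReal.one_ne_top one_ne_zero
      (by
        refine (ENNReal.ofReal_pos.mpr ?_).ne'
        exact mul_pos hC0 hL)
  exact absurd (h2.trans h1) (not_le.mpr h3)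

end ASTProof


/-- **Completeness of the martingale rule for AST.** If `M` is almost surely terminating
from `σ`, then there exist a supermartingale `V` (zero at the terminal state, positive at
all other reachable states) and a variant `U : S → ℕ` (zero exactly at the terminal state
on reachable states) such that on every sublevel set of `V` the values of `U` are bounded
and `U` decreases with probability bounded away from zero. -/
theorem martingale_rule_complete {S : Type} [Countable S] (M : MDP S) (term σ : S)
    (hterm : M.Absorbing term) (hAST : M.AST term σ) :
    ∃ (V : S → ℝ) (U : S → ℕ),
      V term = 0 ∧
      (∀ s, M.Reach σ s → s ≠ term → 0 < V s) ∧
      M.SupermartingaleOn σ V ∧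
      U term = 0 ∧
      (∀ s, M.Reach σ s → s ≠ term → 1 ≤ U s) ∧
      (∀ r : ℝ, BddAbove {u : ℕ | ∃ s, M.Reach σ s ∧ V s ≤ r ∧ U s = u}) ∧
      (∀ r : ℝ, ∃ ε : ℝ, 0 < ε ∧ ∀ s, M.Reach σ s → s ≠ term → V s ≤ r →
        ∀ μ ∈ M.act s, ENNReal.ofReal ε ≤ MDP.mass μ {s' | U s' < U s}) := by
  classical
  have hterm' : M.act term = {PMF.pure term} := hterm
  have hNe : Nonempty S := ⟨σ⟩
  obtain ⟨x, hx⟩ := exists_surjective_nat S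
  have hLzero : ∀ s, M.Reach σ s → ASTProof.L M term s = 0 :=
    fun s hs => ASTProof.L_reach_zero M term hterm hAST s hs
  -- diagonal choice of horizons
  have hdiag : ∀ j : ℕ, ∃ N : ℕ, ∀ i, i ≤ j → M.Reach σ (x i) →
      (ASTProof.w M term) N (x i) ≤ (1/4 : ℝ)^j := by
    intro j
    have hper : ∀ i : ℕ, ∃ N : ℕ, M.Reach σ (x i) → ∀ n, N ≤ n →
        (ASTProof.w M term) n (x i) ≤ (1/4:ℝ)^j := by
      intro i
      by_cases hreach : M.Reach σ (x i)
      · have hlt : ASTProof.L M term (x i) < (1/4:ℝ)^j := by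
          rw [hLzero _ hreach]; positivity
        obtain ⟨N, hN⟩ := ASTProof.exists_w_lt M term hlt
        exact ⟨N, fun _ n hn => (hN n hn).le⟩
      · exact ⟨0, fun h => absurd h hreach⟩
    choose N hNs using hper
    refine ⟨(Finset.range (j+1)).sup N, fun i hij hreach => ?_⟩
    exact hNs i hreach _ (Finset.le_sup (Finset.mem_range.mpr (by omega)))
  choose nn hnn using hdiag
  obtain ⟨V, hV⟩ : ∃ V : S → ℝ, V = fun s => (ASTProof.w M term) 0 s + ∑' j : ℕ, (2:ℝ)^j * (ASTProof.w M term) (nn j) s := ⟨_, rfl⟩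
  obtain ⟨β, hβ⟩ : ∃ β : ℕ → ℝ, β = fun k : ℕ => 1/4 + 1/(4*((k:ℝ)+1)) := ⟨_, rfl⟩
  have hβgt : ∀ k : ℕ, (1/4:ℝ) < β k := by
    intro k
    rw [hβ]
    have : (0:ℝ) < 1/(4*((k:ℝ)+1)) := by positivity
    linarith
  have hβle : ∀ k : ℕ, β k ≤ 1/2 := by
    intro k
    rw [hβ]
    have hk : (1:ℝ) ≤ (k:ℝ) + 1 := by
      have := Nat.cast_nonneg (α := ℝ) k; linarith
    have h1 : 1/(4*((k:ℝ)+1)) ≤ 1/4 := by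
      rw [div_le_div_iff₀ (by positivity) (by norm_num)]
      linarith
    linarith
  obtain ⟨U, hU⟩ : ∃ U : S → ℕ, U = fun s => if h : ∃ k, (ASTProof.w M term) k s ≤ β k then Nat.find h else 0 := ⟨_, rfl⟩
  -- summability of the series defining V at reachable states
  have hsum : ∀ s, M.Reach σ s → Summable (fun j : ℕ => (2:ℝ)^j * (ASTProof.w M term) (nn j) s) := by
    intro s hs
    obtain ⟨i, rfl⟩ := hx s
    refine (summable_nat_add_iff i).mp ?_
    refine Summable.of_nonneg_of_le
      (fun j => mul_nonneg (by positivity) (ASTProof.w_nonneg M term _ _))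
      (fun j => ?_) (f := fun j : ℕ => (1/2:ℝ)^(j+i)) ?_
    · have h1 : (ASTProof.w M term) (nn (j+i)) (x i) ≤ (1/4:ℝ)^(j+i) := hnn (j+i) i (by omega) hs
      calc (2:ℝ)^(j+i) * (ASTProof.w M term) (nn (j+i)) (x i) ≤ (2:ℝ)^(j+i) * (1/4:ℝ)^(j+i) :=
            mul_le_mul_of_nonneg_left h1 (by positivity)
        _ = (1/2:ℝ)^(j+i) := by rw [← mul_pow]; norm_num
    · have : Summable (fun j : ℕ => (1/2:ℝ)^j * (1/2:ℝ)^i) :=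
        (summable_geometric_of_lt_one (by norm_num) (by norm_num)).mul_right _
      simpa [pow_add] using this
  have htsum_nonneg : ∀ s, 0 ≤ ∑' j : ℕ, (2:ℝ)^j * (ASTProof.w M term) (nn j) s := fun s =>
    tsum_nonneg fun j => mul_nonneg (by positivity) (ASTProof.w_nonneg M term _ _)
  -- (i) V term = 0
  have hVterm : V term = 0 := by
    rw [hV]
    simp [ASTProof.w_term]
  -- (ii) positivity
  have hVpos : ∀ s, M.Reach σ s → s ≠ term → 0 < V s := by
    intro s _ hsne
    have h0 : (ASTProof.w M term) 0 s = 1 := by simp [ASTProof.w, hsne]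
    have := htsum_nonneg s
    rw [hV]
    dsimp only
    rw [h0]
    linarith
  -- (iii) supermartingale
  have hsuper : M.SupermartingaleOn σ V := by
    intro s hs μ hμ
    have hfin := M.act_finSupp s μ hμ
    have hreach' : ∀ s' ∈ hfin.toFinset, M.Reach σ s' := fun s' h =>
      MDP.Reach.step μ hs hμ (hfin.mem_toFinset.mp h)
    rw [ASTProof.expect_eq_sum μ hfin V]
    have hVs' : ∀ s' ∈ hfin.toFinset, (μ s').toReal * V s'
        = (μ s').toReal * (ASTProof.w M term) 0 s' + ∑' j:ℕ, (μ s').toReal * ((2:ℝ)^j * (ASTProof.w M term) (nn j) s') := by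
      intro s' _
      rw [hV]
      dsimp only
      rw [mul_add, tsum_mul_left]
    rw [Finset.sum_congr rfl hVs', Finset.sum_add_distrib]
    have hpart1 : ∑ s' ∈ hfin.toFinset, (μ s').toReal * (ASTProof.w M term) 0 s' ≤ (ASTProof.w M term) 0 s := by
      rw [← ASTProof.expect_eq_sum μ hfin]
      exact (ASTProof.step_le M term hterm' s hμ 0).trans (ASTProof.w_succ_le M term 0 s)
    have hinner : ∀ j : ℕ, ∑ s' ∈ hfin.toFinset, (μ s').toReal * ((2:ℝ)^j * (ASTProof.w M term) (nn j) s')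
        ≤ (2:ℝ)^j * (ASTProof.w M term) (nn j) s := by
      intro j
      have hrw : ∑ s' ∈ hfin.toFinset, (μ s').toReal * ((2:ℝ)^j * (ASTProof.w M term) (nn j) s')
          = (2:ℝ)^j * ∑ s' ∈ hfin.toFinset, (μ s').toReal * (ASTProof.w M term) (nn j) s' := by
        rw [Finset.mul_sum]
        exact Finset.sum_congr rfl fun s' _ => by ring
      rw [hrw, ← ASTProof.expect_eq_sum μ hfin]
      refine mul_le_mul_of_nonneg_left ?_ (by positivity)
      exact (ASTProof.step_le M term hterm' s hμ (nn j)).trans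
        (ASTProof.w_succ_le M term (nn j) s)
    have hpart2 : ∑ s' ∈ hfin.toFinset, ∑' j:ℕ, (μ s').toReal * ((2:ℝ)^j * (ASTProof.w M term) (nn j) s')
        ≤ ∑' j:ℕ, (2:ℝ)^j * (ASTProof.w M term) (nn j) s := by
      rw [← Summable.tsum_finsetSum (fun s' h => ((hsum s' (hreach' s' h)).mul_left _))]
      refine Summable.tsum_le_tsum hinner ?_ (hsum s hs)
      refine Summable.of_nonneg_of_le (fun j => Finset.sum_nonneg fun s' _ =>
        mul_nonneg ENNReal.toReal_nonneg
          (mul_nonneg (by positivity) (ASTProof.w_nonneg M term _ _)))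
        hinner (hsum s hs)
    calc (∑ s' ∈ hfin.toFinset, (μ s').toReal * (ASTProof.w M term) 0 s')
          + ∑ s' ∈ hfin.toFinset, ∑' j:ℕ, (μ s').toReal * ((2:ℝ)^j * (ASTProof.w M term) (nn j) s')
        ≤ (ASTProof.w M term) 0 s + ∑' j:ℕ, (2:ℝ)^j * (ASTProof.w M term) (nn j) s := add_le_add hpart1 hpart2
      _ = V s := by rw [hV]
  -- (iv) U term = 0
  have hexterm : ∃ k, (ASTProof.w M term) k term ≤ β k := by
    refine ⟨0, ?_⟩
    rw [ASTProof.w_term]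
    exact le_of_lt (lt_trans (by norm_num) (hβgt 0))
  have hUterm : U term = 0 := by
    rw [hU]
    dsimp only
    rw [dif_pos hexterm, Nat.find_eq_zero hexterm]
    rw [ASTProof.w_term]
    exact le_of_lt (lt_trans (by norm_num) (hβgt 0))
  -- existence of a witness for reachable states
  have hexre : ∀ s, M.Reach σ s → ∃ k, (ASTProof.w M term) k s ≤ β k := by
    intro s hs
    have hlt : ASTProof.L M term s < 1/4 := by rw [hLzero s hs]; norm_num
    obtain ⟨N, hN⟩ := ASTProof.exists_w_lt M term hlt
    exact ⟨N, (hN N le_rfl).le.trans (hβgt N).le⟩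
  -- (v) 1 ≤ U s
  have hUpos : ∀ s, M.Reach σ s → s ≠ term → 1 ≤ U s := by
    intro s hs hsne
    have hex := hexre s hs
    rw [hU]
    dsimp only
    rw [dif_pos hex]
    rcases Nat.eq_zero_or_pos (Nat.find hex) with h0 | h1
    · exfalso
      have hspec := Nat.find_spec hex
      rw [h0] at hspec
      have h1 : (ASTProof.w M term) 0 s = 1 := by simp [ASTProof.w, hsne]
      rw [h1] at hspec
      have := hβle 0
      linarith
    · exact h1
  -- key sublevel bound : if V s ≤ r and U s = k+1 then k < nn J  (where 4r < 2^J)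
  have hkey : ∀ (r : ℝ) (J : ℕ), 4*r < 2^J → ∀ s, M.Reach σ s → V s ≤ r →
      U s ≤ nn J := by
    intro r J hJ s hs hVr
    rw [hU]
    dsimp only
    by_cases hex : ∃ k, (ASTProof.w M term) k s ≤ β k
    · rw [dif_pos hex]
      by_contra hcon
      push_neg at hcon
      have hnnJ : nn J < Nat.find hex := hcon
      have hWlarge : β (nn J) < (ASTProof.w M term) (nn J) s := by
        have := Nat.find_min hex hnnJ
        push_neg at this
        linarith [this]
      have hq : (1/4:ℝ) < (ASTProof.w M term) (nn J) s := lt_trans (hβgt (nn J)) hWlarge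
      have hterm_le : (2:ℝ)^J * (ASTProof.w M term) (nn J) s ≤ ∑' j:ℕ, (2:ℝ)^j * (ASTProof.w M term) (nn j) s := by
        refine Summable.le_tsum (hsum s hs) J fun j _ => ?_
        exact mul_nonneg (by positivity) (ASTProof.w_nonneg M term _ _)
      have hW0 : 0 ≤ (ASTProof.w M term) 0 s := ASTProof.w_nonneg M term 0 s
      have hVlarge : (2:ℝ)^J * (1/4) < V s := by
        rw [hV]
        dsimp only
        have : (2:ℝ)^J * (1/4) < (2:ℝ)^J * (ASTProof.w M term) (nn J) s :=
          mul_lt_mul_of_pos_left hq (by positivity)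
        linarith
      have : r < V s := by
        have h4 : r < (2:ℝ)^J * (1/4) := by linarith
        linarith
      linarith
    · rw [dif_neg hex]
      exact Nat.zero_le _
  -- (vi) bounded sublevel
  have hbdd : ∀ r : ℝ, BddAbove {u : ℕ | ∃ s, M.Reach σ s ∧ V s ≤ r ∧ U s = u} := by
    intro r
    obtain ⟨J, hJ⟩ := pow_unbounded_of_one_lt (4*r) (by norm_num : (1:ℝ) < 2)
    refine ⟨nn J, ?_⟩
    rintro u ⟨s, hs, hVr, rfl⟩
    exact hkey r J hJ s hs hVr
  -- (vii) uniform decrease on sublevel sets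
  refine ⟨V, U, hVterm, hVpos, hsuper, hUterm, hUpos, hbdd, ?_⟩
  intro r
  obtain ⟨J, hJ⟩ := pow_unbounded_of_one_lt (4*r) (by norm_num : (1:ℝ) < 2)
  obtain ⟨K, hK⟩ : ∃ K : ℕ, K = nn J := ⟨_, rfl⟩
  refine ⟨1/(4*((K:ℝ)+1)*((K:ℝ)+2)), by positivity, ?_⟩
  intro s hs hsne hVr μ hμ
  have hfin := M.act_finSupp s μ hμ
  have hex := hexre s hs
  have hUs : U s = Nat.find hex := by rw [hU]; dsimp only; rw [dif_pos hex]
  have hU1 : 1 ≤ U s := hUpos s hs hsne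
  have hUK : U s ≤ K := by rw [hK]; exact hkey r J hJ s hs hVr
  obtain ⟨k1, hk1⟩ : ∃ k1, U s = k1 + 1 := ⟨U s - 1, by omega⟩
  have hk1K : k1 + 1 ≤ K := by omega
  -- specs from Nat.find
  have hspec : (ASTProof.w M term) (k1+1) s ≤ β (k1+1) := by
    have := Nat.find_spec hex
    rwa [← hUs, hk1] at this
  have hmin : β k1 < (ASTProof.w M term) k1 s := by
    have hlt : k1 < Nat.find hex := by omega
    have := Nat.find_min hex hlt
    push_neg at this
    linarith [this]
  -- expectation bound
  have hexp : MDP.expect μ ((ASTProof.w M term) k1) ≤ (ASTProof.w M term) (k1+1) s := ASTProof.step_le M term hterm' s hμ k1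
  -- split the expectation
  obtain ⟨F, hF⟩ : ∃ F, F = hfin.toFinset := ⟨_, rfl⟩
  obtain ⟨T, hT⟩ : ∃ T, T = F.filter (fun s' => (ASTProof.w M term) k1 s' ≤ β k1) := ⟨_, rfl⟩
  obtain ⟨t, ht⟩ : ∃ t : ℝ, t = ∑ s' ∈ T, (μ s').toReal := ⟨_, rfl⟩
  have htotal : ∑ s' ∈ F, (μ s').toReal = 1 := by
    rw [hF]; exact ASTProof.sum_weights μ hfin
  have hsplitw : t + ∑ s' ∈ F.filter (fun s' => ¬ (ASTProof.w M term) k1 s' ≤ β k1), (μ s').toReal = 1 := by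
    rw [ht, hT, Finset.sum_filter_add_sum_filter_not F _ (fun s' => (μ s').toReal)]
    exact htotal
  have hlow : β k1 * (1 - t) ≤ β (k1+1) := by
    have hsplit : MDP.expect μ ((ASTProof.w M term) k1)
        = (∑ s' ∈ T, (μ s').toReal * (ASTProof.w M term) k1 s')
          + ∑ s' ∈ F.filter (fun s' => ¬ (ASTProof.w M term) k1 s' ≤ β k1), (μ s').toReal * (ASTProof.w M term) k1 s' := by
      rw [ASTProof.expect_eq_sum μ hfin, ← hF, hT]
      exact (Finset.sum_filter_add_sum_filter_not F _ _).symm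
    have hpos1 : 0 ≤ ∑ s' ∈ T, (μ s').toReal * (ASTProof.w M term) k1 s' :=
      Finset.sum_nonneg fun s' _ => mul_nonneg ENNReal.toReal_nonneg
        (ASTProof.w_nonneg M term _ _)
    have hpos2 : β k1 * (1 - t)
        ≤ ∑ s' ∈ F.filter (fun s' => ¬ (ASTProof.w M term) k1 s' ≤ β k1), (μ s').toReal * (ASTProof.w M term) k1 s' := by
      have h1 : ∀ s' ∈ F.filter (fun s' => ¬ (ASTProof.w M term) k1 s' ≤ β k1),
          (μ s').toReal * β k1 ≤ (μ s').toReal * (ASTProof.w M term) k1 s' := by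
        intro s' hs'
        have := (Finset.mem_filter.mp hs').2
        exact mul_le_mul_of_nonneg_left (by linarith) ENNReal.toReal_nonneg
      calc β k1 * (1 - t)
          = (∑ s' ∈ F.filter (fun s' => ¬ (ASTProof.w M term) k1 s' ≤ β k1), (μ s').toReal) * β k1 := by
            have : (1:ℝ) - t = ∑ s' ∈ F.filter (fun s' => ¬ (ASTProof.w M term) k1 s' ≤ β k1), (μ s').toReal := by
              linarith
            rw [this]; ring
        _ = ∑ s' ∈ F.filter (fun s' => ¬ (ASTProof.w M term) k1 s' ≤ β k1), (μ s').toReal * β k1 :=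
            Finset.sum_mul _ _ _
        _ ≤ _ := Finset.sum_le_sum h1
    calc β k1 * (1 - t) ≤ MDP.expect μ ((ASTProof.w M term) k1) := by rw [hsplit]; linarith
      _ ≤ (ASTProof.w M term) (k1+1) s := hexp
      _ ≤ β (k1+1) := hspec
  -- numeric: β (k1+1) ≤ β k1 * (1 - ε)
  obtain ⟨ε, hε⟩ : ∃ ε : ℝ, ε = 1/(4*((K:ℝ)+1)*((K:ℝ)+2)) := ⟨_, rfl⟩
  have hnumeric : β (k1+1) ≤ β k1 * (1 - ε) := by
    have ha : (0:ℝ) ≤ (k1:ℝ) := Nat.cast_nonneg k1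
    have hab : (k1:ℝ) + 1 ≤ (K:ℝ) := by exact_mod_cast hk1K
    have hβdiff : β k1 - β (k1+1) = 1/(4*((k1:ℝ)+1)*((k1:ℝ)+2)) := by
      rw [hβ]
      push_cast
      field_simp
      ring
    have hεle : ε ≤ 1/(4*((k1:ℝ)+1)*((k1:ℝ)+2)) := by
      rw [hε, div_le_div_iff₀ (by positivity) (by positivity)]
      nlinarith
    have hβ1 : β k1 ≤ 1 := (hβle k1).trans (by norm_num)
    have hεpos : 0 < ε := by rw [hε]; positivity
    have hβpos : 0 < β k1 := lt_trans (by norm_num) (hβgt k1)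
    nlinarith [mul_le_mul_of_nonneg_right hβ1 hεpos.le]
  -- conclude ε ≤ t
  have hεt : ε ≤ t := by
    have hβpos : 0 < β k1 := lt_trans (by norm_num) (hβgt k1)
    nlinarith
  -- T ⊆ decrease set, pass to mass
  have hTsub : ∀ s' ∈ T, U s' < U s := by
    intro s' hs'
    rw [hT] at hs'
    have hw : (ASTProof.w M term) k1 s' ≤ β k1 := (Finset.mem_filter.mp hs').2
    have hex' : ∃ k, (ASTProof.w M term) k s' ≤ β k := ⟨k1, hw⟩
    have : U s' ≤ k1 := by
      rw [hU]
      dsimp only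
      rw [dif_pos hex']
      exact Nat.find_le hw
    omega
  have hofReal : ENNReal.ofReal t = ∑ s' ∈ T, μ s' := by
    rw [ht, ENNReal.ofReal_sum_of_nonneg (fun s' _ => ENNReal.toReal_nonneg)]
    exact Finset.sum_congr rfl fun s' _ => ENNReal.ofReal_toReal (ASTProof.pmf_ne_top μ s')
  have hmass : ∑ s' ∈ T, μ s' ≤ MDP.mass μ {s' | U s' < U s} := by
    rw [MDP.mass, tsum_subtype {s' | U s' < U s} (fun a => μ a)]
    calc ∑ s' ∈ T, μ s'
        = ∑ s' ∈ T, Set.indicator {s' | U s' < U s} (fun a => μ a) s' := by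
          refine Finset.sum_congr rfl fun s' hs' => ?_
          rw [Set.indicator_of_mem (show s' ∈ {s'' | U s'' < U s} from hTsub s' hs') (fun a => μ a)]
      _ ≤ ∑' s', Set.indicator {s' | U s' < U s} (fun a => μ a) s' :=
          ENNReal.sum_le_tsum T
  calc ENNReal.ofReal (1/(4*((K:ℝ)+1)*((K:ℝ)+2))) = ENNReal.ofReal ε := by rw [hε]
    _ ≤ ENNReal.ofReal t := ENNReal.ofReal_le_ofReal hεt
    _ = ∑ s' ∈ T, μ s' := hofReal
    _ ≤ MDP.mass μ {s' | U s' < U s} := hmass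
end
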